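/- arXiv:math/9810013 — 4 statements merged into one kernel-verified Lean document; each statement's English description precedes it below -/
import Mathlib

section
/- Eynard–Mehta determinantal formula for two coupled matrices: for all integers k, l with 0 ≤ k ≤ N and 0 ≤ l ≤ N and all real numbers x₁,…,x_k, y₁,…,y_l, ρ_{k,l}(x₁,…,x_k; y₁,…,y_l) equals the determinant of the (k+l) × (k+l) block matrix whose blocks are [K₁₁(x_r,x_s)]_{r,s=1}^{k} (upper left), [K₁₂(x_r,y_s)]_{r=1..k, s=1..l} (upper right), [K₂₁(y_r,x_s)]_{r=1..l, s=1..k} (lower left), and [K₂₂(y_r,y_s)]_{r,s=1}^{l} (lower right), where K₁₁(x,x′) = ∫_ℝ H(x,s) w(s,x′) ds, K₁₂(x,y) = H(x,y), K₂₁(y,x) = ∬_{ℝ²} w(y,r) H(r,s) w(s,x) dr ds − w(y,x), and K₂₂(y,y′) = ∫_ℝ w(y,r) H(r,y′) dr. -/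
open MeasureTheory Polynomial

/-- The joint eigenvalue density
`p_N(x;y) = (1/(N!)²) · det[w(y_i,x_j)] · det[P_{i−1}(x_j)] · det[Q_{i−1}(y_j)]`. -/
noncomputable def jointDensity (N : ℕ) (w : ℝ → ℝ → ℝ) (P Q : Fin N → Polynomial ℝ)
    (x y : Fin N → ℝ) : ℝ :=
  (1 / (N.factorial : ℝ) ^ 2) *
    Matrix.det (Matrix.of fun i j : Fin N => w (y i) (x j)) *
    Matrix.det (Matrix.of fun i j : Fin N => (P i).eval (x j)) *
    Matrix.det (Matrix.of fun i j : Fin N => (Q i).eval (y j))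

/-- The correlation functions
`ρ_{k,l}(x₁,…,x_k; y₁,…,y_l) = ((N!)²/((N−k)!(N−l)!)) ∫∫ p_N dx_{k+1}⋯dx_N dy_{l+1}⋯dy_N`. -/
noncomputable def corrFun (N : ℕ) (w : ℝ → ℝ → ℝ) (P Q : Fin N → Polynomial ℝ)
    (k l : ℕ) (hk : k ≤ N) (hl : l ≤ N) (x : Fin k → ℝ) (y : Fin l → ℝ) : ℝ :=
  ((N.factorial : ℝ) ^ 2 / (((N - k).factorial : ℝ) * ((N - l).factorial : ℝ))) *
    ∫ u : Fin (N - k) → ℝ, ∫ v : Fin (N - l) → ℝ,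
      jointDensity N w P Q
        (fun i => Fin.append x u (Fin.cast (by omega) i))
        (fun i => Fin.append y v (Fin.cast (by omega) i))

/-- `H(x,y) = Σ_{i=0}^{N−1} Pᵢ(x) Qᵢ(y)`. -/
noncomputable def Hker (N : ℕ) (P Q : Fin N → Polynomial ℝ) (x y : ℝ) : ℝ :=
  ∑ i : Fin N, (P i).eval x * (Q i).eval y


namespace EM

variable {N : ℕ} (w : ℝ → ℝ → ℝ) (P Q : Fin N → Polynomial ℝ)

/-- `E_i(t) = ∫ Q_i(s) w(s,t) ds`. -/
noncomputable def Ef (i : Fin N) (t : ℝ) : ℝ := ∫ s : ℝ, (Q i).eval s * w s t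

/-- `F_i(t) = ∫ P_i(s) w(t,s) ds`. -/
noncomputable def Ff (i : Fin N) (t : ℝ) : ℝ := ∫ s : ℝ, (P i).eval s * w t s

/-- The two-species kernel, in summed form. -/
noncomputable def Kk : (ℝ ⊕ ℝ) → (ℝ ⊕ ℝ) → ℝ
  | .inl a, .inl b => ∑ n : Fin N, (P n).eval a * Ef w Q n b
  | .inl a, .inr d => ∑ n : Fin N, (P n).eval a * (Q n).eval d
  | .inr c, .inl b => (∑ n : Fin N, Ff w P n c * Ef w Q n b) - w c b
  | .inr c, .inr d => ∑ n : Fin N, Ff w P n c * (Q n).eval d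

/-- Tagged points. -/
def pts {k l : ℕ} (x : Fin k → ℝ) (y : Fin l → ℝ) : (Fin k ⊕ Fin l) → ℝ ⊕ ℝ :=
  Sum.elim (fun a => Sum.inl (x a)) (fun s => Sum.inr (y s))

/-- The block kernel matrix, in summed form. -/
noncomputable def Tm (k l : ℕ) (x : Fin k → ℝ) (y : Fin l → ℝ) :
    Matrix (Fin k ⊕ Fin l) (Fin k ⊕ Fin l) ℝ :=
  Matrix.of fun iv jv => Kk w P Q (pts x y iv) (pts x y jv)

section basic

variable (hw : Measurable fun p : ℝ × ℝ => w p.1 p.2)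
  (h2 : ∀ p q : Polynomial ℝ,
      Integrable (fun s : ℝ × ℝ => p.eval s.1 * q.eval s.2 * w s.2 s.1))
  (h1 : ∀ t : ℝ, ∀ p : Polynomial ℝ,
      Integrable (fun s : ℝ => p.eval s * w s t) ∧
      Integrable (fun s : ℝ => p.eval s * w t s))
  (ho : ∀ i j : Fin N,
      (∫ s : ℝ × ℝ, (P i).eval s.1 * (Q j).eval s.2 * w s.2 s.1) =
        if i = j then (1 : ℝ) else 0)

include h2 in
lemma intPE (p : Polynomial ℝ) (i : Fin N) :
    Integrable (fun t : ℝ => p.eval t * Ef w Q i t) := by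
  have h := (h2 p (Q i)).integral_prod_left
  have : (fun a : ℝ => ∫ b : ℝ, p.eval a * (Q i).eval b * w b a) =
      fun t : ℝ => p.eval t * Ef w Q i t := by
    funext a
    simp only [Ef]
    rw [← integral_const_mul]
    congr 1 with b
    ring
  rwa [this] at h

include h2 in
lemma intPF (p : Polynomial ℝ) (i : Fin N) :
    Integrable (fun t : ℝ => p.eval t * Ff w P i t) := by
  have h := (h2 (P i) p).integral_prod_right
  have : (fun b : ℝ => ∫ a : ℝ, (P i).eval a * p.eval b * w b a) =
      fun t : ℝ => p.eval t * Ff w P i t := by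
    funext b
    simp only [Ff]
    rw [← integral_const_mul]
    congr 1 with a
    ring
  rwa [this] at h

include h2 ho in
lemma oPE (i j : Fin N) :
    (∫ t : ℝ, (P i).eval t * Ef w Q j t) = if i = j then (1 : ℝ) else 0 := by
  have h := ho i j
  rw [show (volume : Measure (ℝ × ℝ)) = (volume : Measure ℝ).prod volume from
        (Measure.volume_eq_prod ..), integral_prod _ (by
      have := h2 (P i) (Q j); rwa [Measure.volume_eq_prod] at this)] at h
  rw [← h]
  congr 1 with a
  simp only [Ef]
  rw [← integral_const_mul]
  congr 1 with b
  ring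

include h2 ho in
lemma oQF (i j : Fin N) :
    (∫ t : ℝ, (Q j).eval t * Ff w P i t) = if i = j then (1 : ℝ) else 0 := by
  have h := ho i j
  rw [show (volume : Measure (ℝ × ℝ)) = (volume : Measure ℝ).prod volume from
        (Measure.volume_eq_prod ..), integral_prod_symm _ (by
      have := h2 (P i) (Q j); rwa [Measure.volume_eq_prod] at this)] at h
  rw [← h]
  congr 1 with b
  simp only [Ff]
  rw [← integral_const_mul]
  congr 1 with a
  ring

end basic

section kernel

variable (hw : Measurable fun p : ℝ × ℝ => w p.1 p.2)
  (h2 : ∀ p q : Polynomial ℝ,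
      Integrable (fun s : ℝ × ℝ => p.eval s.1 * q.eval s.2 * w s.2 s.1))
  (h1 : ∀ t : ℝ, ∀ p : Polynomial ℝ,
      Integrable (fun s : ℝ => p.eval s * w s t) ∧
      Integrable (fun s : ℝ => p.eval s * w t s))
  (ho : ∀ i j : Fin N,
      (∫ s : ℝ × ℝ, (P i).eval s.1 * (Q j).eval s.2 * w s.2 s.1) =
        if i = j then (1 : ℝ) else 0)

include h2 in
lemma h1i (a b : Fin N → ℝ) :
    Integrable (fun t : ℝ =>
      (∑ n : Fin N, a n * Ef w Q n t) * (∑ m : Fin N, (P m).eval t * b m)) := by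
  have key : ∀ t : ℝ, (∑ n : Fin N, a n * Ef w Q n t) * (∑ m : Fin N, (P m).eval t * b m)
      = ∑ n : Fin N, ∑ m : Fin N, (a n * b m) * ((P m).eval t * Ef w Q n t) := by
    intro t
    rw [Finset.sum_mul_sum]
    exact Finset.sum_congr rfl fun n _ => Finset.sum_congr rfl fun m _ => by ring
  rw [show (fun t : ℝ => (∑ n : Fin N, a n * Ef w Q n t) * (∑ m : Fin N, (P m).eval t * b m))
      = fun t : ℝ => ∑ n : Fin N, ∑ m : Fin N, (a n * b m) * ((P m).eval t * Ef w Q n t)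
      from funext key]
  exact integrable_finset_sum _ fun n _ => integrable_finset_sum _ fun m _ =>
    (intPE w Q h2 (P m) n).const_mul _

include h2 ho in
lemma h1v (a b : Fin N → ℝ) :
    (∫ t : ℝ, (∑ n : Fin N, a n * Ef w Q n t) * (∑ m : Fin N, (P m).eval t * b m))
      = ∑ n : Fin N, a n * b n := by
  have key : ∀ t : ℝ, (∑ n : Fin N, a n * Ef w Q n t) * (∑ m : Fin N, (P m).eval t * b m)
      = ∑ n : Fin N, ∑ m : Fin N, (a n * b m) * ((P m).eval t * Ef w Q n t) := by
    intro t
    rw [Finset.sum_mul_sum]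
    exact Finset.sum_congr rfl fun n _ => Finset.sum_congr rfl fun m _ => by ring
  simp only [key]
  rw [integral_finset_sum _ fun n _ => integrable_finset_sum _ fun m _ =>
    (intPE w Q h2 (P m) n).const_mul _]
  refine Finset.sum_congr rfl fun n _ => ?_
  rw [integral_finset_sum _ fun m _ => (intPE w Q h2 (P m) n).const_mul _]
  have : ∀ m : Fin N, (∫ t : ℝ, (a n * b m) * ((P m).eval t * Ef w Q n t))
      = (a n * b m) * (if m = n then (1:ℝ) else 0) := by
    intro m
    rw [integral_const_mul, oPE w P Q h2 ho m n]
  simp only [this, mul_ite, mul_one, mul_zero, Finset.sum_ite_eq', Finset.mem_univ, if_true]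

include h1 in
lemma h2i (c : ℝ) (b : Fin N → ℝ) :
    Integrable (fun t : ℝ => w c t * (∑ m : Fin N, (P m).eval t * b m)) := by
  have key : ∀ t : ℝ, w c t * (∑ m : Fin N, (P m).eval t * b m)
      = ∑ m : Fin N, b m * ((P m).eval t * w c t) := by
    intro t
    rw [Finset.mul_sum]
    exact Finset.sum_congr rfl fun m _ => by ring
  rw [show (fun t : ℝ => w c t * (∑ m : Fin N, (P m).eval t * b m))
      = fun t : ℝ => ∑ m : Fin N, b m * ((P m).eval t * w c t) from funext key]
  exact integrable_finset_sum _ fun m _ => ((h1 c (P m)).2).const_mul _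

include h1 in
lemma h2v (c : ℝ) (b : Fin N → ℝ) :
    (∫ t : ℝ, w c t * (∑ m : Fin N, (P m).eval t * b m))
      = ∑ m : Fin N, Ff w P m c * b m := by
  have key : ∀ t : ℝ, w c t * (∑ m : Fin N, (P m).eval t * b m)
      = ∑ m : Fin N, b m * ((P m).eval t * w c t) := by
    intro t
    rw [Finset.mul_sum]
    exact Finset.sum_congr rfl fun m _ => by ring
  simp only [key]
  rw [integral_finset_sum _ fun m _ => ((h1 c (P m)).2).const_mul _]
  refine Finset.sum_congr rfl fun m _ => ?_
  rw [integral_const_mul]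
  rw [show (∫ t : ℝ, (P m).eval t * w c t) = Ff w P m c from rfl]
  ring

include h2 in
lemma h1i' (a b : Fin N → ℝ) :
    Integrable (fun t : ℝ =>
      (∑ n : Fin N, a n * (Q n).eval t) * (∑ m : Fin N, Ff w P m t * b m)) := by
  have key : ∀ t : ℝ, (∑ n : Fin N, a n * (Q n).eval t) * (∑ m : Fin N, Ff w P m t * b m)
      = ∑ n : Fin N, ∑ m : Fin N, (a n * b m) * ((Q n).eval t * Ff w P m t) := by
    intro t
    rw [Finset.sum_mul_sum]
    exact Finset.sum_congr rfl fun n _ => Finset.sum_congr rfl fun m _ => by ring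
  rw [show (fun t : ℝ => (∑ n : Fin N, a n * (Q n).eval t) * (∑ m : Fin N, Ff w P m t * b m))
      = fun t : ℝ => ∑ n : Fin N, ∑ m : Fin N, (a n * b m) * ((Q n).eval t * Ff w P m t)
      from funext key]
  exact integrable_finset_sum _ fun n _ => integrable_finset_sum _ fun m _ =>
    (intPF w P h2 (Q n) m).const_mul _

include h2 ho in
lemma h1v' (a b : Fin N → ℝ) :
    (∫ t : ℝ, (∑ n : Fin N, a n * (Q n).eval t) * (∑ m : Fin N, Ff w P m t * b m))
      = ∑ n : Fin N, a n * b n := by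
  have key : ∀ t : ℝ, (∑ n : Fin N, a n * (Q n).eval t) * (∑ m : Fin N, Ff w P m t * b m)
      = ∑ n : Fin N, ∑ m : Fin N, (a n * b m) * ((Q n).eval t * Ff w P m t) := by
    intro t
    rw [Finset.sum_mul_sum]
    exact Finset.sum_congr rfl fun n _ => Finset.sum_congr rfl fun m _ => by ring
  simp only [key]
  rw [integral_finset_sum _ fun n _ => integrable_finset_sum _ fun m _ =>
    (intPF w P h2 (Q n) m).const_mul _]
  refine Finset.sum_congr rfl fun n _ => ?_
  rw [integral_finset_sum _ fun m _ => (intPF w P h2 (Q n) m).const_mul _]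
  have : ∀ m : Fin N, (∫ t : ℝ, (a n * b m) * ((Q n).eval t * Ff w P m t))
      = (a n * b m) * (if m = n then (1:ℝ) else 0) := by
    intro m
    rw [integral_const_mul, oQF w P Q h2 ho m n]
  simp only [this, mul_ite, mul_one, mul_zero, Finset.sum_ite_eq', Finset.mem_univ, if_true]

include h1 in
lemma h2i' (a : Fin N → ℝ) (b : ℝ) :
    Integrable (fun t : ℝ => (∑ n : Fin N, a n * (Q n).eval t) * w t b) := by
  have key : ∀ t : ℝ, (∑ n : Fin N, a n * (Q n).eval t) * w t b
      = ∑ n : Fin N, a n * ((Q n).eval t * w t b) := by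
    intro t
    rw [Finset.sum_mul]
    exact Finset.sum_congr rfl fun n _ => by ring
  rw [show (fun t : ℝ => (∑ n : Fin N, a n * (Q n).eval t) * w t b)
      = fun t : ℝ => ∑ n : Fin N, a n * ((Q n).eval t * w t b) from funext key]
  exact integrable_finset_sum _ fun n _ => ((h1 b (Q n)).1).const_mul _

include h1 in
lemma h2v' (a : Fin N → ℝ) (b : ℝ) :
    (∫ t : ℝ, (∑ n : Fin N, a n * (Q n).eval t) * w t b)
      = ∑ n : Fin N, a n * Ef w Q n b := by
  have key : ∀ t : ℝ, (∑ n : Fin N, a n * (Q n).eval t) * w t b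
      = ∑ n : Fin N, a n * ((Q n).eval t * w t b) := by
    intro t
    rw [Finset.sum_mul]
    exact Finset.sum_congr rfl fun n _ => by ring
  simp only [key]
  rw [integral_finset_sum _ fun n _ => ((h1 b (Q n)).1).const_mul _]
  exact Finset.sum_congr rfl fun n _ => by rw [integral_const_mul]; rfl

end kernel
def epsX : ℝ ⊕ ℝ → ℝ := Sum.elim (fun _ => 1) (fun _ => 0)
def epsY : ℝ ⊕ ℝ → ℝ := Sum.elim (fun _ => 0) (fun _ => 1)

section kprod

variable (hw : Measurable fun p : ℝ × ℝ => w p.1 p.2)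
  (h2 : ∀ p q : Polynomial ℝ,
      Integrable (fun s : ℝ × ℝ => p.eval s.1 * q.eval s.2 * w s.2 s.1))
  (h1 : ∀ t : ℝ, ∀ p : Polynomial ℝ,
      Integrable (fun s : ℝ => p.eval s * w s t) ∧
      Integrable (fun s : ℝ => p.eval s * w t s))
  (ho : ∀ i j : Fin N,
      (∫ s : ℝ × ℝ, (P i).eval s.1 * (Q j).eval s.2 * w s.2 s.1) =
        if i = j then (1 : ℝ) else 0)

include h2 h1 in
lemma KXint (u v : ℝ ⊕ ℝ) :
    Integrable (fun t : ℝ => Kk w P Q u (.inl t) * Kk w P Q (.inl t) v) := by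
  rcases u with a | c <;> rcases v with b | d <;> simp only [Kk]
  · exact h1i w P Q h2 _ _
  · exact h1i w P Q h2 _ _
  · rw [show (fun t : ℝ => ((∑ n : Fin N, Ff w P n c * Ef w Q n t) - w c t) *
        (∑ m : Fin N, (P m).eval t * Ef w Q m b))
      = fun t : ℝ => ((∑ n : Fin N, Ff w P n c * Ef w Q n t) *
          (∑ m : Fin N, (P m).eval t * Ef w Q m b)
        - w c t * (∑ m : Fin N, (P m).eval t * Ef w Q m b)) from funext fun t => sub_mul _ _ _]
    exact (h1i w P Q h2 _ _).sub (h2i w P h1 _ _)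
  · rw [show (fun t : ℝ => ((∑ n : Fin N, Ff w P n c * Ef w Q n t) - w c t) *
        (∑ m : Fin N, (P m).eval t * (Q m).eval d))
      = fun t : ℝ => ((∑ n : Fin N, Ff w P n c * Ef w Q n t) *
          (∑ m : Fin N, (P m).eval t * (Q m).eval d)
        - w c t * (∑ m : Fin N, (P m).eval t * (Q m).eval d)) from funext fun t => sub_mul _ _ _]
    exact (h1i w P Q h2 _ _).sub (h2i w P h1 _ _)

include h2 h1 ho in
lemma KXval (u v : ℝ ⊕ ℝ) :
    (∫ t : ℝ, Kk w P Q u (.inl t) * Kk w P Q (.inl t) v)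
      = epsX u * Kk w P Q u v := by
  rcases u with a | c <;> rcases v with b | d <;> simp only [Kk, epsX, Sum.elim_inl,
    Sum.elim_inr, one_mul, zero_mul]
  · exact h1v w P Q h2 ho _ _
  · exact h1v w P Q h2 ho _ _
  · rw [show (fun t : ℝ => ((∑ n : Fin N, Ff w P n c * Ef w Q n t) - w c t) *
        (∑ m : Fin N, (P m).eval t * Ef w Q m b))
      = fun t : ℝ => ((∑ n : Fin N, Ff w P n c * Ef w Q n t) *
          (∑ m : Fin N, (P m).eval t * Ef w Q m b)
        - w c t * (∑ m : Fin N, (P m).eval t * Ef w Q m b)) from funext fun t => sub_mul _ _ _]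
    rw [integral_sub (h1i w P Q h2 _ _) (h2i w P h1 _ _), h1v w P Q h2 ho _ _,
      h2v w P h1 _ _, sub_self]
  · rw [show (fun t : ℝ => ((∑ n : Fin N, Ff w P n c * Ef w Q n t) - w c t) *
        (∑ m : Fin N, (P m).eval t * (Q m).eval d))
      = fun t : ℝ => ((∑ n : Fin N, Ff w P n c * Ef w Q n t) *
          (∑ m : Fin N, (P m).eval t * (Q m).eval d)
        - w c t * (∑ m : Fin N, (P m).eval t * (Q m).eval d)) from funext fun t => sub_mul _ _ _]
    rw [integral_sub (h1i w P Q h2 _ _) (h2i w P h1 _ _), h1v w P Q h2 ho _ _,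
      h2v w P h1 _ _, sub_self]

include h2 h1 in
lemma KYint (u v : ℝ ⊕ ℝ) :
    Integrable (fun t : ℝ => Kk w P Q u (.inr t) * Kk w P Q (.inr t) v) := by
  rcases u with a | c <;> rcases v with b | d <;> simp only [Kk]
  · rw [show (fun t : ℝ => (∑ n : Fin N, (P n).eval a * (Q n).eval t) *
        ((∑ m : Fin N, Ff w P m t * Ef w Q m b) - w t b))
      = fun t : ℝ => ((∑ n : Fin N, (P n).eval a * (Q n).eval t) *
          (∑ m : Fin N, Ff w P m t * Ef w Q m b)
        - (∑ n : Fin N, (P n).eval a * (Q n).eval t) * w t b)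
      from funext fun t => mul_sub _ _ _]
    exact (h1i' w P Q h2 _ _).sub (h2i' w Q h1 _ _)
  · exact h1i' w P Q h2 _ _
  · rw [show (fun t : ℝ => (∑ n : Fin N, Ff w P n c * (Q n).eval t) *
        ((∑ m : Fin N, Ff w P m t * Ef w Q m b) - w t b))
      = fun t : ℝ => ((∑ n : Fin N, Ff w P n c * (Q n).eval t) *
          (∑ m : Fin N, Ff w P m t * Ef w Q m b)
        - (∑ n : Fin N, Ff w P n c * (Q n).eval t) * w t b)
      from funext fun t => mul_sub _ _ _]
    exact (h1i' w P Q h2 _ _).sub (h2i' w Q h1 _ _)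
  · exact h1i' w P Q h2 _ _

include h2 h1 ho in
lemma KYval (u v : ℝ ⊕ ℝ) :
    (∫ t : ℝ, Kk w P Q u (.inr t) * Kk w P Q (.inr t) v)
      = epsY v * Kk w P Q u v := by
  rcases u with a | c <;> rcases v with b | d <;> simp only [Kk, epsY, Sum.elim_inl,
    Sum.elim_inr, one_mul, zero_mul]
  · rw [show (fun t : ℝ => (∑ n : Fin N, (P n).eval a * (Q n).eval t) *
        ((∑ m : Fin N, Ff w P m t * Ef w Q m b) - w t b))
      = fun t : ℝ => ((∑ n : Fin N, (P n).eval a * (Q n).eval t) *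
          (∑ m : Fin N, Ff w P m t * Ef w Q m b)
        - (∑ n : Fin N, (P n).eval a * (Q n).eval t) * w t b)
      from funext fun t => mul_sub _ _ _]
    rw [integral_sub (h1i' w P Q h2 _ _) (h2i' w Q h1 _ _), h1v' w P Q h2 ho _ _,
      h2v' w Q h1 _ _, sub_self]
  · exact h1v' w P Q h2 ho _ _
  · rw [show (fun t : ℝ => (∑ n : Fin N, Ff w P n c * (Q n).eval t) *
        ((∑ m : Fin N, Ff w P m t * Ef w Q m b) - w t b))
      = fun t : ℝ => ((∑ n : Fin N, Ff w P n c * (Q n).eval t) *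
          (∑ m : Fin N, Ff w P m t * Ef w Q m b)
        - (∑ n : Fin N, Ff w P n c * (Q n).eval t) * w t b)
      from funext fun t => mul_sub _ _ _]
    rw [integral_sub (h1i' w P Q h2 _ _) (h2i' w Q h1 _ _), h1v' w P Q h2 ho _ _,
      h2v' w Q h1 _ _, sub_self]
  · exact h1v' w P Q h2 ho _ _

include h2 in
lemma KXdiagInt : Integrable (fun t : ℝ => Kk w P Q (.inl t) (.inl t)) := by
  simp only [Kk]
  exact integrable_finset_sum _ fun n _ => intPE w Q h2 (P n) n

include h2 ho in
lemma KXdiagVal : (∫ t : ℝ, Kk w P Q (.inl t) (.inl t)) = (N : ℝ) := by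
  simp only [Kk]
  rw [integral_finset_sum _ fun n _ => intPE w Q h2 (P n) n]
  simp [oPE w P Q h2 ho]

include h2 in
lemma KYdiagInt : Integrable (fun t : ℝ => Kk w P Q (.inr t) (.inr t)) := by
  simp only [Kk]
  refine integrable_finset_sum _ fun n _ => ?_
  have := intPF w P h2 (Q n) n
  rw [show (fun t : ℝ => (Q n).eval t * Ff w P n t)
      = fun t : ℝ => Ff w P n t * (Q n).eval t from funext fun t => mul_comm _ _] at this
  exact this

include h2 ho in
lemma KYdiagVal : (∫ t : ℝ, Kk w P Q (.inr t) (.inr t)) = (N : ℝ) := by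
  simp only [Kk]
  have hi : ∀ n : Fin N, Integrable (fun t : ℝ => Ff w P n t * (Q n).eval t) := by
    intro n
    have := intPF w P h2 (Q n) n
    rwa [show (fun t : ℝ => (Q n).eval t * Ff w P n t)
      = fun t : ℝ => Ff w P n t * (Q n).eval t from funext fun t => mul_comm _ _] at this
  rw [integral_finset_sum _ fun n _ => hi n]
  have : ∀ n : Fin N, (∫ t : ℝ, Ff w P n t * (Q n).eval t) = 1 := by
    intro n
    rw [show (fun t : ℝ => Ff w P n t * (Q n).eval t)
      = fun t : ℝ => (Q n).eval t * Ff w P n t from funext fun t => mul_comm _ _]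
    rw [oQF w P Q h2 ho n n, if_pos rfl]
  simp [this]

end kprod
section detint

variable {ι : Type*} [Fintype ι] [DecidableEq ι]

/-- Extended background matrix. -/
noncomputable def kext (κ : Matrix ι ι ℝ) : Matrix (ι ⊕ Unit) (ι ⊕ Unit) ℝ :=
  Matrix.fromBlocks κ 0 0 1

/-- Cofactor-type determinants. -/
noncomputable def Dm (κ : Matrix ι ι ℝ) (j i : ι ⊕ Unit) : ℝ :=
  ((((kext κ).updateRow (Sum.inr ()) (Pi.single j 1))).updateCol (Sum.inr ())
    (Pi.single i 1)).det

/-- Expansion of a determinant along a row. -/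
lemma det_row_expansion (A : Matrix (ι ⊕ Unit) (ι ⊕ Unit) ℝ) (r0 : ι ⊕ Unit) :
    A.det = ∑ j : ι ⊕ Unit, A r0 j * (A.updateRow r0 (Pi.single j 1)).det := by
  have h := congrFun (congrFun (Matrix.mul_adjugate A) r0) r0
  rw [Matrix.mul_apply] at h
  simp only [Matrix.smul_apply, Matrix.one_apply_eq, smul_eq_mul, mul_one] at h
  rw [← h]
  exact Finset.sum_congr rfl fun j _ => by rw [Matrix.adjugate_apply]

/-- Expansion of a determinant along a column. -/
lemma det_col_expansion (A : Matrix (ι ⊕ Unit) (ι ⊕ Unit) ℝ) (c0 : ι ⊕ Unit) :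
    A.det = ∑ i : ι ⊕ Unit, A i c0 * (A.updateCol c0 (Pi.single i 1)).det := by
  have hb : (fun i => A i c0) = ∑ i : ι ⊕ Unit, (A i c0) • (Pi.single i 1 : (ι ⊕ Unit) → ℝ) := by
    funext j
    simp [Pi.single_apply]
  have h0 : A.det = Matrix.cramer A (fun i => A i c0) c0 := by
    rw [Matrix.cramer_apply, Matrix.updateCol_eq_self]
  rw [h0, hb, map_sum]
  rw [Finset.sum_apply]
  exact Finset.sum_congr rfl fun i _ => by
    rw [_root_.map_smul, Pi.smul_apply, Matrix.cramer_apply, smul_eq_mul]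

lemma det_updateRow_finset_sum {α : Type*} (B : Matrix (ι ⊕ Unit) (ι ⊕ Unit) ℝ)
    (i : ι ⊕ Unit) (s : Finset α) (f : α → (ι ⊕ Unit) → ℝ) :
    (B.updateRow i (∑ a ∈ s, f a)).det = ∑ a ∈ s, (B.updateRow i (f a)).det := by
  classical
  induction s using Finset.induction_on with
  | empty =>
      simp only [Finset.sum_empty]
      exact Matrix.det_eq_zero_of_row_eq_zero i fun j => by simp
  | insert _ _ hne ih =>
      rw [Finset.sum_insert hne, Matrix.det_updateRow_add, ih, Finset.sum_insert hne]

/-- The big pointwise decomposition of the bordered determinant. -/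
lemma detMdecomp (κ : Matrix ι ι ℝ) (cc rr : ι → ℝ) (dd : ℝ) :
    (Matrix.fromBlocks κ (Matrix.of fun u (_ : Unit) => cc u)
      (Matrix.of fun (_ : Unit) v => rr v) (Matrix.of fun (_ : Unit) (_ : Unit) => dd)).det
    = (∑ v : ι, ∑ u : ι, (cc u * rr v) * Dm κ (Sum.inl v) (Sum.inl u)) + dd * κ.det := by
  classical
  set A := Matrix.fromBlocks κ (Matrix.of fun u (_ : Unit) => cc u)
      (Matrix.of fun (_ : Unit) v => rr v) (Matrix.of fun (_ : Unit) (_ : Unit) => dd) with hA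
  -- the doubly-updated matrices only depend on κ
  have hDD : ∀ j i : ι ⊕ Unit,
      ((A.updateRow (Sum.inr ()) (Pi.single j 1)).updateCol (Sum.inr ())
        (Pi.single i 1)) = (((kext κ).updateRow (Sum.inr ()) (Pi.single j 1))).updateCol
        (Sum.inr ()) (Pi.single i 1) := by
    intro j i
    funext a b
    rcases b with b | b
    · rw [Matrix.updateCol_ne (by simp), Matrix.updateCol_ne (by simp)]
      rcases a with a | a
      · rw [Matrix.updateRow_ne (by simp), Matrix.updateRow_ne (by simp)]
        simp [hA, kext]
      · rw [show (Sum.inr a : ι ⊕ Unit) = Sum.inr () from rfl, Matrix.updateRow_self,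
          Matrix.updateRow_self]
    · rw [show (Sum.inr b : ι ⊕ Unit) = Sum.inr () from rfl, Matrix.updateCol_self,
        Matrix.updateCol_self]
  -- row expansion then column expansion
  have hrow := det_row_expansion A (Sum.inr ())
  have hcol : ∀ j : ι ⊕ Unit, (A.updateRow (Sum.inr ()) (Pi.single j 1)).det
      = (∑ u : ι, cc u * Dm κ j (Sum.inl u))
        + (if (Sum.inr () : ι ⊕ Unit) = j then (1:ℝ) else 0) * Dm κ j (Sum.inr ()) := by
    intro j
    rw [det_col_expansion _ (Sum.inr ()), Fintype.sum_sum_type]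
    congr 1
    · refine Finset.sum_congr rfl fun u _ => ?_
      rw [Matrix.updateRow_ne (by simp), hDD]
      rfl
    · simp only [Finset.univ_unique, Finset.sum_singleton]
      rw [Matrix.updateRow_self, hDD]
      simp [Pi.single_apply, Dm]
  rw [hrow, Fintype.sum_sum_type]
  simp only [Finset.univ_unique, Finset.sum_singleton]
  have e1 : ∀ v : ι, A (Sum.inr ()) (Sum.inl v) = rr v := fun v => rfl
  have e2 : A (Sum.inr ()) (Sum.inr ()) = dd := rfl
  -- evaluate the two special cofactors
  have hz : ∀ u : ι, Dm κ (Sum.inr ()) (Sum.inl u) = 0 := by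
    intro u
    refine Matrix.det_eq_zero_of_row_eq_zero (Sum.inr ()) fun b => ?_
    rcases b with b | b
    · rw [Matrix.updateCol_ne (by simp), Matrix.updateRow_self]
      simp [Pi.single_apply]
    · rw [show (Sum.inr b : ι ⊕ Unit) = Sum.inr () from rfl, Matrix.updateCol_self]
      simp [Pi.single_apply]
  have hone : Dm κ (Sum.inr ()) (Sum.inr ()) = κ.det := by
    have : (((kext κ).updateRow (Sum.inr ()) (Pi.single (Sum.inr ()) 1))).updateCol
        (Sum.inr ()) (Pi.single (Sum.inr ()) 1)
        = Matrix.fromBlocks κ 0 0 1 := by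
      funext a b
      rcases b with b | b
      · rw [Matrix.updateCol_ne (by simp)]
        rcases a with a | a
        · rw [Matrix.updateRow_ne (by simp)]; simp [kext]
        · rw [show (Sum.inr a : ι ⊕ Unit) = Sum.inr () from rfl, Matrix.updateRow_self]
          simp [Pi.single_apply]
      · rw [show (Sum.inr b : ι ⊕ Unit) = Sum.inr () from rfl, Matrix.updateCol_self]
        rcases a with a | a <;> simp [Pi.single_apply, Matrix.one_apply]
    rw [Dm, this, Matrix.det_fromBlocks_zero₂₁]
    simp
  rw [e2]
  have hsum1 : (∑ v : ι, A (Sum.inr ()) (Sum.inl v)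
        * (A.updateRow (Sum.inr ()) (Pi.single (Sum.inl v) 1)).det)
      = ∑ v : ι, ∑ u : ι, (cc u * rr v) * Dm κ (Sum.inl v) (Sum.inl u) := by
    refine Finset.sum_congr rfl fun v _ => ?_
    rw [e1, hcol]
    simp only [reduceCtorEq, if_false, zero_mul, add_zero]
    rw [Finset.mul_sum]
    exact Finset.sum_congr rfl fun u _ => by ring
  rw [hsum1]
  congr 1
  rw [hcol]
  simp only [if_pos rfl, one_mul, hone]
  simp [hz]

/-- Reassembly: summing cofactors against a row of `κ` gives `-det κ`. -/
lemma rowsum (κ : Matrix ι ι ℝ) (u : ι) :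
    ∑ v : ι, κ u v * Dm κ (Sum.inl v) (Sum.inl u) = -κ.det := by
  classical
  set B := (kext κ).updateCol (Sum.inr ()) (Pi.single (Sum.inl u) 1) with hB
  have step1 : ∀ v : ι, Dm κ (Sum.inl v) (Sum.inl u)
      = (B.updateRow (Sum.inr ()) (Pi.single (Sum.inl v) 1)).det := by
    intro v
    rw [Dm]
    congr 1
    funext a b
    rcases b with b | b
    · rw [Matrix.updateCol_ne (by simp)]
      rcases a with a | a
      · rw [Matrix.updateRow_ne (by simp), Matrix.updateRow_ne (by simp), hB,
          Matrix.updateCol_ne (by simp)]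
      · rw [show (Sum.inr a : ι ⊕ Unit) = Sum.inr () from rfl, Matrix.updateRow_self,
          Matrix.updateRow_self]
    · rw [show (Sum.inr b : ι ⊕ Unit) = Sum.inr () from rfl, Matrix.updateCol_self]
      rcases a with a | a
      · rw [Matrix.updateRow_ne (by simp), hB, Matrix.updateCol_self]
      · rw [show (Sum.inr a : ι ⊕ Unit) = Sum.inr () from rfl, Matrix.updateRow_self]
        simp [Pi.single_apply]
  have step2 : ∑ v : ι, κ u v * Dm κ (Sum.inl v) (Sum.inl u)
      = (B.updateRow (Sum.inr ())
          (∑ v : ι, κ u v • (Pi.single (Sum.inl v) 1 : (ι ⊕ Unit) → ℝ))).det := by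
    rw [det_updateRow_finset_sum]
    exact Finset.sum_congr rfl fun v _ => by
      rw [Matrix.det_updateRow_smul, step1]
  have hvecrow : B (Sum.inl u) = (∑ v : ι, κ u v • (Pi.single (Sum.inl v) 1 : (ι ⊕ Unit) → ℝ))
      + Pi.single (Sum.inr ()) 1 := by
    funext b
    rcases b with b | b
    · rw [hB, Matrix.updateCol_ne (by simp)]
      simp [kext, Pi.single_apply, Finset.sum_ite_eq', Matrix.fromBlocks_apply₁₁]
    · rw [show (Sum.inr b : ι ⊕ Unit) = Sum.inr () from rfl, hB, Matrix.updateCol_self]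
      simp [Pi.single_apply]
  have hdup : (B.updateRow (Sum.inr ()) (B (Sum.inl u))).det = 0 := by
    refine Matrix.det_zero_of_row_eq (i := Sum.inl u) (j := Sum.inr ()) (by simp) ?_
    rw [Matrix.updateRow_ne (by simp), Matrix.updateRow_self]
  have hlast : (B.updateRow (Sum.inr ()) (Pi.single (Sum.inr ()) 1)).det = κ.det := by
    have : B.updateRow (Sum.inr ()) (Pi.single (Sum.inr ()) 1)
        = Matrix.fromBlocks κ (Matrix.of fun a (_ : Unit) => (Pi.single u 1 : ι → ℝ) a) 0 1 := by
      funext a b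
      rcases b with b | b
      · rcases a with a | a
        · rw [Matrix.updateRow_ne (by simp), hB, Matrix.updateCol_ne (by simp)]
          simp [kext]
        · rw [show (Sum.inr a : ι ⊕ Unit) = Sum.inr () from rfl, Matrix.updateRow_self]
          simp [Pi.single_apply]
      · rw [show (Sum.inr b : ι ⊕ Unit) = Sum.inr () from rfl]
        rcases a with a | a
        · rw [Matrix.updateRow_ne (by simp), hB, Matrix.updateCol_self]
          simp [Pi.single_apply, Matrix.one_apply]
        · rw [show (Sum.inr a : ι ⊕ Unit) = Sum.inr () from rfl, Matrix.updateRow_self]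
          simp [Pi.single_apply, Matrix.one_apply]
    rw [this, Matrix.det_fromBlocks_zero₂₁]
    simp
  have := hdup
  rw [hvecrow, Matrix.det_updateRow_add, hlast] at this
  rw [step2]
  linarith

/-- The key integration lemma for bordered determinants. -/
lemma detInt (κ : Matrix ι ι ℝ) (c r : ℝ → ι → ℝ) (d : ℝ → ℝ) (eps : ι → ℝ) (cN : ℝ)
    (hd : Integrable d) (hdI : (∫ t : ℝ, d t) = cN)
    (hrc : ∀ u v : ι, Integrable (fun t : ℝ => c t u * r t v))
    (hrcI : ∀ u v : ι, (∫ t : ℝ, c t u * r t v) = eps u * κ u v) :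
    (∫ t : ℝ, (Matrix.fromBlocks κ (Matrix.of fun u (_ : Unit) => c t u)
      (Matrix.of fun (_ : Unit) v => r t v) (Matrix.of fun (_ : Unit) (_ : Unit) => d t)).det)
    = (cN - ∑ u : ι, eps u) * κ.det := by
  classical
  have hpt : (fun t : ℝ => (Matrix.fromBlocks κ (Matrix.of fun u (_ : Unit) => c t u)
      (Matrix.of fun (_ : Unit) v => r t v) (Matrix.of fun (_ : Unit) (_ : Unit) => d t)).det)
      = fun t : ℝ => (∑ v : ι, ∑ u : ι, (c t u * r t v) * Dm κ (Sum.inl v) (Sum.inl u))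
        + d t * κ.det := funext fun t => detMdecomp κ (c t) (r t) (d t)
  rw [hpt]
  have hi1 : Integrable (fun t : ℝ =>
      ∑ v : ι, ∑ u : ι, (c t u * r t v) * Dm κ (Sum.inl v) (Sum.inl u)) :=
    integrable_finset_sum _ fun v _ => integrable_finset_sum _ fun u _ =>
      (hrc u v).mul_const _
  rw [integral_add hi1 (hd.mul_const _)]
  rw [integral_finset_sum _ fun v _ => integrable_finset_sum _ fun u _ =>
      (hrc u v).mul_const _]
  have : ∀ v : ι, (∫ t : ℝ, ∑ u : ι, (c t u * r t v) * Dm κ (Sum.inl v) (Sum.inl u))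
      = ∑ u : ι, (eps u * κ u v) * Dm κ (Sum.inl v) (Sum.inl u) := by
    intro v
    rw [integral_finset_sum _ fun u _ => (hrc u v).mul_const _]
    exact Finset.sum_congr rfl fun u _ => by rw [integral_mul_const, hrcI]
  simp only [this]
  rw [integral_mul_const, hdI, Finset.sum_comm]
  have : ∀ u : ι, (∑ v : ι, (eps u * κ u v) * Dm κ (Sum.inl v) (Sum.inl u))
      = eps u * (-κ.det) := by
    intro u
    rw [← rowsum κ u, Finset.mul_sum]
    exact Finset.sum_congr rfl fun v _ => by ring
  simp only [this]
  rw [← Finset.sum_mul]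
  ring

end detint
section reindex

variable (k l : ℕ)

/-- Splitting off the last `x`-point. -/
def spk : (Fin (k+1) ⊕ Fin l) ≃ ((Fin k ⊕ Fin l) ⊕ Unit) where
  toFun := Sum.elim
    (fun a => Fin.lastCases (Sum.inr ()) (fun a' => Sum.inl (Sum.inl a')) a)
    (fun s => Sum.inl (Sum.inr s))
  invFun := Sum.elim (Sum.elim (fun a' => Sum.inl a'.castSucc) (fun s => Sum.inr s))
    (fun _ => Sum.inl (Fin.last k))
  left_inv := by
    rintro (a | s)
    · induction a using Fin.lastCases with
      | last => simp
      | cast a' => simp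
    · rfl
  right_inv := by
    rintro ((a | s) | u)
    · simp
    · rfl
    · simp

/-- Splitting off the last `y`-point. -/
def spl : (Fin k ⊕ Fin (l+1)) ≃ ((Fin k ⊕ Fin l) ⊕ Unit) where
  toFun := Sum.elim (fun a => Sum.inl (Sum.inl a))
    (fun s => Fin.lastCases (Sum.inr ()) (fun s' => Sum.inl (Sum.inr s')) s)
  invFun := Sum.elim (Sum.elim (fun a => Sum.inl a) (fun s' => Sum.inr s'.castSucc))
    (fun _ => Sum.inr (Fin.last l))
  left_inv := by
    rintro (a | s)
    · rfl
    · induction s using Fin.lastCases with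
      | last => simp
      | cast s' => simp
  right_inv := by
    rintro ((a | s) | u)
    · rfl
    · simp
    · simp

@[simp] lemma spk_inl_last : spk k l (Sum.inl (Fin.last k)) = Sum.inr () := by
  simp [spk]
@[simp] lemma spk_inl_cast (a : Fin k) :
    spk k l (Sum.inl a.castSucc) = Sum.inl (Sum.inl a) := by simp [spk]
@[simp] lemma spk_inr (s : Fin l) : spk k l (Sum.inr s) = Sum.inl (Sum.inr s) := rfl
@[simp] lemma spl_inl (a : Fin k) : spl k l (Sum.inl a) = Sum.inl (Sum.inl a) := rfl
@[simp] lemma spl_inr_last : spl k l (Sum.inr (Fin.last l)) = Sum.inr () := by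
  simp [spl]
@[simp] lemma spl_inr_cast (s : Fin l) :
    spl k l (Sum.inr s.castSucc) = Sum.inl (Sum.inr s) := by simp [spl]

end reindex

/-- Column version of the key integration lemma. -/
lemma detInt' {ι : Type*} [Fintype ι] [DecidableEq ι]
    (κ : Matrix ι ι ℝ) (c r : ℝ → ι → ℝ) (d : ℝ → ℝ) (eps : ι → ℝ) (cN : ℝ)
    (hd : Integrable d) (hdI : (∫ t : ℝ, d t) = cN)
    (hrc : ∀ u v : ι, Integrable (fun t : ℝ => c t u * r t v))
    (hrcI : ∀ u v : ι, (∫ t : ℝ, c t u * r t v) = eps v * κ u v) :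
    (∫ t : ℝ, (Matrix.fromBlocks κ (Matrix.of fun u (_ : Unit) => c t u)
      (Matrix.of fun (_ : Unit) v => r t v) (Matrix.of fun (_ : Unit) (_ : Unit) => d t)).det)
    = (cN - ∑ u : ι, eps u) * κ.det := by
  have hrc' : ∀ u v : ι, Integrable (fun t : ℝ => r t u * c t v) := by
    intro u v
    have := hrc v u
    rwa [show (fun t : ℝ => c t v * r t u) = fun t : ℝ => r t u * c t v from
      funext fun t => mul_comm _ _] at this
  have hrcI' : ∀ u v : ι, (∫ t : ℝ, r t u * c t v) = eps u * κ.transpose u v := by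
    intro u v
    rw [Matrix.transpose_apply,
      show (fun t : ℝ => r t u * c t v) = fun t : ℝ => c t v * r t u from
      funext fun t => mul_comm _ _]
    exact hrcI v u
  have key := detInt κ.transpose r c d eps cN hd hdI hrc' hrcI'
  rw [Matrix.det_transpose] at key
  rw [← key]
  congr 1
  funext t
  rw [← Matrix.det_transpose, Matrix.fromBlocks_transpose]
  congr 1 <;> funext a b <;> rfl

section wrappers

variable (hw : Measurable fun p : ℝ × ℝ => w p.1 p.2)
  (h2 : ∀ p q : Polynomial ℝ,
      Integrable (fun s : ℝ × ℝ => p.eval s.1 * q.eval s.2 * w s.2 s.1))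
  (h1 : ∀ t : ℝ, ∀ p : Polynomial ℝ,
      Integrable (fun s : ℝ => p.eval s * w s t) ∧
      Integrable (fun s : ℝ => p.eval s * w t s))
  (ho : ∀ i j : Fin N,
      (∫ s : ℝ × ℝ, (P i).eval s.1 * (Q j).eval s.2 * w s.2 s.1) =
        if i = j then (1 : ℝ) else 0)

include h2 h1 ho in
lemma SX (k l : ℕ) (x : Fin k → ℝ) (y : Fin l → ℝ) :
    (∫ t : ℝ, (Tm w P Q (k+1) l (Fin.snoc x t) y).det)
      = ((N : ℝ) - k) * (Tm w P Q k l x y).det := by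
  have hmat : ∀ t : ℝ, Tm w P Q (k+1) l (Fin.snoc x t) y
      = (Matrix.fromBlocks (Tm w P Q k l x y)
          (Matrix.of fun u (_ : Unit) => Kk w P Q (pts x y u) (.inl t))
          (Matrix.of fun (_ : Unit) v => Kk w P Q (.inl t) (pts x y v))
          (Matrix.of fun (_ : Unit) (_ : Unit) =>
            Kk w P Q (.inl t) (.inl t))).submatrix (spk k l) (spk k l) := by
    intro t
    funext iv jv
    rw [Matrix.submatrix_apply]
    rcases iv with a | s
    · induction a using Fin.lastCases with
      | last =>
          rcases jv with b | s'
          · induction b using Fin.lastCases with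
            | last => simp [Tm, pts, Fin.snoc_last]
            | cast b' => simp [Tm, pts, Fin.snoc_last, Fin.snoc_castSucc]
          · simp [Tm, pts, Fin.snoc_last]
      | cast a' =>
          rcases jv with b | s'
          · induction b using Fin.lastCases with
            | last => simp [Tm, pts, Fin.snoc_last, Fin.snoc_castSucc]
            | cast b' => simp [Tm, pts, Fin.snoc_castSucc]
          · simp [Tm, pts, Fin.snoc_castSucc]
    · rcases jv with b | s'
      · induction b using Fin.lastCases with
        | last => simp [Tm, pts, Fin.snoc_last]
        | cast b' => simp [Tm, pts, Fin.snoc_castSucc]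
      · simp [Tm, pts]
  have hre : (fun t : ℝ => (Tm w P Q (k+1) l (Fin.snoc x t) y).det)
      = fun t : ℝ => (Matrix.fromBlocks (Tm w P Q k l x y)
          (Matrix.of fun u (_ : Unit) => Kk w P Q (pts x y u) (.inl t))
          (Matrix.of fun (_ : Unit) v => Kk w P Q (.inl t) (pts x y v))
          (Matrix.of fun (_ : Unit) (_ : Unit) => Kk w P Q (.inl t) (.inl t))).det := by
    funext t
    rw [hmat t, Matrix.det_submatrix_equiv_self]
  rw [hre]
  have key := detInt (Tm w P Q k l x y)
    (fun t u => Kk w P Q (pts x y u) (.inl t))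
    (fun t v => Kk w P Q (.inl t) (pts x y v))
    (fun t => Kk w P Q (.inl t) (.inl t))
    (fun u => epsX (pts x y u)) (N : ℝ)
    (KXdiagInt w P Q h2) (KXdiagVal w P Q h2 ho)
    (fun u v => KXint w P Q h2 h1 _ _)
    (fun u v => by rw [KXval w P Q h2 h1 ho _ _]; rfl)
  rw [key]
  congr 2
  rw [Fintype.sum_sum_type]
  simp [epsX, pts]

include h2 h1 ho in
lemma SY (k l : ℕ) (x : Fin k → ℝ) (y : Fin l → ℝ) :
    (∫ t : ℝ, (Tm w P Q k (l+1) x (Fin.snoc y t)).det)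
      = ((N : ℝ) - l) * (Tm w P Q k l x y).det := by
  have hmat : ∀ t : ℝ, Tm w P Q k (l+1) x (Fin.snoc y t)
      = (Matrix.fromBlocks (Tm w P Q k l x y)
          (Matrix.of fun u (_ : Unit) => Kk w P Q (pts x y u) (.inr t))
          (Matrix.of fun (_ : Unit) v => Kk w P Q (.inr t) (pts x y v))
          (Matrix.of fun (_ : Unit) (_ : Unit) =>
            Kk w P Q (.inr t) (.inr t))).submatrix (spl k l) (spl k l) := by
    intro t
    funext iv jv
    rw [Matrix.submatrix_apply]
    rcases iv with a | s
    · rcases jv with b | s'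
      · simp [Tm, pts]
      · induction s' using Fin.lastCases with
        | last => simp [Tm, pts, Fin.snoc_last]
        | cast c' => simp [Tm, pts, Fin.snoc_castSucc]
    · induction s using Fin.lastCases with
      | last =>
          rcases jv with b | s'
          · simp [Tm, pts, Fin.snoc_last]
          · induction s' using Fin.lastCases with
            | last => simp [Tm, pts, Fin.snoc_last]
            | cast c' => simp [Tm, pts, Fin.snoc_last, Fin.snoc_castSucc]
      | cast s0 =>
          rcases jv with b | s'
          · simp [Tm, pts, Fin.snoc_castSucc]
          · induction s' using Fin.lastCases with
            | last => simp [Tm, pts, Fin.snoc_last, Fin.snoc_castSucc]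
            | cast c' => simp [Tm, pts, Fin.snoc_castSucc]
  have hre : (fun t : ℝ => (Tm w P Q k (l+1) x (Fin.snoc y t)).det)
      = fun t : ℝ => (Matrix.fromBlocks (Tm w P Q k l x y)
          (Matrix.of fun u (_ : Unit) => Kk w P Q (pts x y u) (.inr t))
          (Matrix.of fun (_ : Unit) v => Kk w P Q (.inr t) (pts x y v))
          (Matrix.of fun (_ : Unit) (_ : Unit) => Kk w P Q (.inr t) (.inr t))).det := by
    funext t
    rw [hmat t, Matrix.det_submatrix_equiv_self]
  rw [hre]
  have key := detInt' (Tm w P Q k l x y)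
    (fun t u => Kk w P Q (pts x y u) (.inr t))
    (fun t v => Kk w P Q (.inr t) (pts x y v))
    (fun t => Kk w P Q (.inr t) (.inr t))
    (fun v => epsY (pts x y v)) (N : ℝ)
    (KYdiagInt w P Q h2) (KYdiagVal w P Q h2 ho)
    (fun u v => KYint w P Q h2 h1 _ _)
    (fun u v => by rw [KYval w P Q h2 h1 ho _ _]; rfl)
  rw [key]
  congr 2
  rw [Fintype.sum_sum_type]
  simp [epsY, pts]

end wrappers
/-- The unnormalized density. -/
noncomputable def Dfun (X Y : Fin N → ℝ) : ℝ :=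
  (Matrix.of fun i j : Fin N => w (Y i) (X j)).det *
    (Matrix.of fun i j : Fin N => (P i).eval (X j)).det *
    (Matrix.of fun i j : Fin N => (Q i).eval (Y j)).det

lemma detJ (N : ℕ) : (Matrix.fromBlocks (0 : Matrix (Fin N) (Fin N) ℝ)
    (1 : Matrix (Fin N) (Fin N) ℝ) (1 : Matrix (Fin N) (Fin N) ℝ)
    (0 : Matrix (Fin N) (Fin N) ℝ)).det = (-1 : ℝ)^N := by
  have h1 : Matrix.fromBlocks (1 : Matrix (Fin N) (Fin N) ℝ)
      (1 : Matrix (Fin N) (Fin N) ℝ) (0 : Matrix (Fin N) (Fin N) ℝ)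
      (1 : Matrix (Fin N) (Fin N) ℝ) *
      Matrix.fromBlocks (0 : Matrix (Fin N) (Fin N) ℝ) (1 : Matrix (Fin N) (Fin N) ℝ)
      (1 : Matrix (Fin N) (Fin N) ℝ) (0 : Matrix (Fin N) (Fin N) ℝ)
      = Matrix.fromBlocks 1 1 1 0 := by
    rw [Matrix.fromBlocks_multiply]
    congr 1 <;> simp
  have h2 : Matrix.fromBlocks (1 : Matrix (Fin N) (Fin N) ℝ)
      (1 : Matrix (Fin N) (Fin N) ℝ) (1 : Matrix (Fin N) (Fin N) ℝ)
      (0 : Matrix (Fin N) (Fin N) ℝ) *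
      Matrix.fromBlocks (1 : Matrix (Fin N) (Fin N) ℝ) (-1 : Matrix (Fin N) (Fin N) ℝ)
      (0 : Matrix (Fin N) (Fin N) ℝ) (1 : Matrix (Fin N) (Fin N) ℝ)
      = Matrix.fromBlocks 1 0 1 (-1) := by
    rw [Matrix.fromBlocks_multiply]
    congr 1 <;> simp
  have d1 : (Matrix.fromBlocks (1 : Matrix (Fin N) (Fin N) ℝ)
      (1 : Matrix (Fin N) (Fin N) ℝ) (0 : Matrix (Fin N) (Fin N) ℝ)
      (1 : Matrix (Fin N) (Fin N) ℝ)).det = 1 := by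
    rw [Matrix.det_fromBlocks_zero₂₁]; simp
  have d2 : (Matrix.fromBlocks (1 : Matrix (Fin N) (Fin N) ℝ)
      (-1 : Matrix (Fin N) (Fin N) ℝ) (0 : Matrix (Fin N) (Fin N) ℝ)
      (1 : Matrix (Fin N) (Fin N) ℝ)).det = 1 := by
    rw [Matrix.det_fromBlocks_zero₂₁]; simp
  have d3 : (Matrix.fromBlocks (1 : Matrix (Fin N) (Fin N) ℝ)
      (0 : Matrix (Fin N) (Fin N) ℝ) (1 : Matrix (Fin N) (Fin N) ℝ)
      (-1 : Matrix (Fin N) (Fin N) ℝ)).det = (-1 : ℝ)^N := by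
    rw [Matrix.det_fromBlocks_zero₁₂]
    simp [Matrix.det_neg]
  have e1 : (Matrix.fromBlocks (1 : Matrix (Fin N) (Fin N) ℝ)
      (1 : Matrix (Fin N) (Fin N) ℝ) (1 : Matrix (Fin N) (Fin N) ℝ)
      (0 : Matrix (Fin N) (Fin N) ℝ)).det
      = (Matrix.fromBlocks (0 : Matrix (Fin N) (Fin N) ℝ) (1 : Matrix (Fin N) (Fin N) ℝ)
        (1 : Matrix (Fin N) (Fin N) ℝ) (0 : Matrix (Fin N) (Fin N) ℝ)).det := by
    rw [← h1, Matrix.det_mul, d1, one_mul]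
  have e2 := congrArg Matrix.det h2
  rw [Matrix.det_mul, d2, mul_one, d3] at e2
  rw [← e1, e2]

/-- Base case: the full bordered determinant equals the unnormalized density. -/
lemma base (X Y : Fin N → ℝ) : (Tm w P Q N N X Y).det = Dfun w P Q X Y := by
  classical
  set PM : Matrix (Fin N) (Fin N) ℝ := Matrix.of fun i j => (P i).eval (X j) with hPM
  set QM : Matrix (Fin N) (Fin N) ℝ := Matrix.of fun i j => (Q i).eval (Y j) with hQM
  set WM : Matrix (Fin N) (Fin N) ℝ := Matrix.of fun i j => w (Y i) (X j) with hWM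
  set EMa : Matrix (Fin N) (Fin N) ℝ := Matrix.of fun i j => Ef w Q i (X j) with hEM
  set FMa : Matrix (Fin N) (Fin N) ℝ := Matrix.of fun i j => Ff w P i (Y j) with hFM
  have claim1 : Tm w P Q N N X Y
      = Matrix.fromBlocks PM.transpose 0 FMa.transpose (-WM) *
        Matrix.fromBlocks EMa QM 1 0 := by
    rw [Matrix.fromBlocks_multiply]
    funext iv jv
    rcases iv with r | r <;> rcases jv with s | s
    · simp only [Tm, pts, Kk, Matrix.of_apply, Sum.elim_inl, Matrix.fromBlocks_apply₁₁,
        Matrix.add_apply, Matrix.mul_apply, Matrix.transpose_apply, Matrix.zero_mul,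
        Matrix.zero_apply, add_zero, hPM, hEM]
    · simp only [Tm, pts, Kk, Matrix.of_apply, Sum.elim_inl, Sum.elim_inr,
        Matrix.fromBlocks_apply₁₂, Matrix.add_apply, Matrix.mul_apply,
        Matrix.transpose_apply, Matrix.zero_mul, Matrix.zero_apply, add_zero, hPM, hQM]
    · simp only [Tm, pts, Kk, Matrix.of_apply, Sum.elim_inl, Sum.elim_inr,
        Matrix.fromBlocks_apply₂₁, Matrix.add_apply, Matrix.mul_apply,
        Matrix.transpose_apply, hFM, hEM, hWM]
      simp [Matrix.mul_apply, Matrix.one_apply, Finset.sum_ite_eq', sub_eq_add_neg]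
    · simp only [Tm, pts, Kk, Matrix.of_apply, Sum.elim_inr, Matrix.fromBlocks_apply₂₂,
        Matrix.add_apply, Matrix.mul_apply, Matrix.transpose_apply, hFM, hQM]
      simp [Matrix.mul_apply]
  have claim2 : Matrix.fromBlocks EMa QM (1 : Matrix (Fin N) (Fin N) ℝ)
      (0 : Matrix (Fin N) (Fin N) ℝ)
      = Matrix.fromBlocks QM EMa (0 : Matrix (Fin N) (Fin N) ℝ)
        (1 : Matrix (Fin N) (Fin N) ℝ) *
        Matrix.fromBlocks (0 : Matrix (Fin N) (Fin N) ℝ) (1 : Matrix (Fin N) (Fin N) ℝ)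
        (1 : Matrix (Fin N) (Fin N) ℝ) (0 : Matrix (Fin N) (Fin N) ℝ) := by
    rw [Matrix.fromBlocks_multiply]
    congr 1 <;> simp
  rw [claim1, Matrix.det_mul, claim2, Matrix.det_mul, detJ N,
    Matrix.det_fromBlocks_zero₁₂, Matrix.det_fromBlocks_zero₂₁]
  rw [Matrix.det_transpose, Matrix.det_neg]
  simp only [Fintype.card_fin, Matrix.det_one, mul_one]
  rw [Dfun]
  ring_nf
  rw [show ((-1:ℝ)) ^ (N * 2) = 1 from by
    rw [mul_comm N 2, pow_mul]; norm_num]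
  ring
/-- Appending with an index cast. -/
def app {k m : ℕ} (h : k + m = N) (x : Fin k → ℝ) (u : Fin m → ℝ) : Fin N → ℝ :=
  fun i => Fin.append x u (Fin.cast h.symm i)

lemma app_zero (h : N + 0 = N) (x : Fin N → ℝ) (u : Fin 0 → ℝ) : app h x u = x := by
  funext i
  show Fin.append x u (Fin.cast h.symm i) = x i
  have : Fin.cast h.symm i = Fin.castAdd 0 i := rfl
  rw [this, Fin.append_left]

lemma append_cons_eq {k m : ℕ} (x : Fin k → ℝ) (t : ℝ) (u : Fin m → ℝ)
    (hp : k + (m+1) = (k+1) + m) (j : Fin (k + (m+1))) :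
    Fin.append x (Fin.cons t u) j = Fin.append (Fin.snoc x t) u (Fin.cast hp j) := by
  refine Fin.addCases (motive := fun j => Fin.append x (Fin.cons t u) j
    = Fin.append (Fin.snoc x t) u (Fin.cast hp j)) ?_ ?_ j
  · intro a
    have hidx : Fin.cast hp (Fin.castAdd (m+1) a) = Fin.castAdd m (Fin.castSucc a) := rfl
    rw [Fin.append_left, hidx, Fin.append_left, Fin.snoc_castSucc]
  · intro b
    rw [Fin.append_right]
    cases b using Fin.cases with
    | zero =>
      have hidx : Fin.cast hp (Fin.natAdd k (0 : Fin (m+1))) = Fin.castAdd m (Fin.last k) := by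
        apply Fin.ext
        simp
      rw [Fin.cons_zero, hidx, Fin.append_left, Fin.snoc_last]
    | succ b' =>
      have hidx : Fin.cast hp (Fin.natAdd k b'.succ) = Fin.natAdd (k+1) b' := by
        apply Fin.ext
        simp [Fin.val_succ]
        omega
      rw [Fin.cons_succ, hidx, Fin.append_right]

lemma app_cons {k m : ℕ} (h : k + (m+1) = N) (h' : (k+1) + m = N)
    (x : Fin k → ℝ) (t : ℝ) (u : Fin m → ℝ) :
    app h x (Fin.cons t u) = app h' (Fin.snoc x t) u := by
  funext i
  show Fin.append x (Fin.cons t u) (Fin.cast h.symm i)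
    = Fin.append (Fin.snoc x t) u (Fin.cast h'.symm i)
  rw [append_cons_eq x t u (by omega) (Fin.cast h.symm i)]
  rfl

lemma prod_app_split {k m : ℕ} (h : k + m = N) (g : Fin N → ℝ → ℝ)
    (x : Fin k → ℝ) (u : Fin m → ℝ) :
    (∏ i : Fin N, g i (app h x u i))
      = (∏ a : Fin k, g (Fin.cast h (Fin.castAdd m a)) (x a))
        * ∏ b : Fin m, g (Fin.cast h (Fin.natAdd k b)) (u b) := by
  rw [← Equiv.prod_comp (finCongr h) (fun i => g i (app h x u i))]
  have hval : ∀ j : Fin (k + m), app h x u (finCongr h j) = Fin.append x u j := fun j => rfl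
  simp only [hval]
  rw [Fin.prod_univ_add]
  congr 1
  · exact Finset.prod_congr rfl fun a _ => by rw [Fin.append_left]; rfl
  · exact Finset.prod_congr rfl fun b _ => by rw [Fin.append_right]; rfl

/-- Real-valued sign. -/
noncomputable def sgn {ι : Type*} [Fintype ι] [DecidableEq ι] (σ : Equiv.Perm ι) : ℝ :=
  ((Equiv.Perm.sign σ : ℤ) : ℝ)

lemma det_apply_sgn {ι : Type*} [Fintype ι] [DecidableEq ι] (M : Matrix ι ι ℝ) :
    M.det = ∑ σ : Equiv.Perm ι, sgn σ * ∏ i, M (σ i) i :=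
  Matrix.det_apply' M

/-- Expansion of the unnormalized density over pairs of permutations. -/
lemma DfunExpand (X Y : Fin N → ℝ) :
    Dfun w P Q X Y
      = ∑ p : Equiv.Perm (Fin N) × Equiv.Perm (Fin N),
          (sgn p.1 * sgn p.2 * (Matrix.of fun i j : Fin N => (P i).eval (X j)).det)
            * ∏ i : Fin N, ((Q (p.2 i)).eval (Y i) * w (Y i) (X (p.1⁻¹ i))) := by
  rw [show Dfun w P Q X Y
      = ((Matrix.of fun i j : Fin N => w (Y i) (X j)).det
          * (Matrix.of fun i j : Fin N => (Q i).eval (Y j)).det)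
        * (Matrix.of fun i j : Fin N => (P i).eval (X j)).det from by rw [Dfun]; ring]
  rw [det_apply_sgn (Matrix.of fun i j : Fin N => w (Y i) (X j)),
    det_apply_sgn (Matrix.of fun i j : Fin N => (Q i).eval (Y j))]
  rw [Finset.sum_mul_sum, Fintype.sum_prod_type, Finset.sum_mul]
  refine Finset.sum_congr rfl fun σ _ => ?_
  rw [Finset.sum_mul]
  refine Finset.sum_congr rfl fun τ _ => ?_
  have hW : (∏ i : Fin N, (Matrix.of fun i j : Fin N => w (Y i) (X j)) (σ i) i)
      = ∏ i : Fin N, w (Y i) (X (σ⁻¹ i)) := by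
    rw [← Equiv.prod_comp σ (fun i => w (Y i) (X (σ⁻¹ i)))]
    exact Finset.prod_congr rfl fun i _ => by simp
  have hQ : (∏ i : Fin N, (Matrix.of fun i j : Fin N => (Q i).eval (Y j)) (τ i) i)
      = ∏ i : Fin N, (Q (τ i)).eval (Y i) := rfl
  rw [hW, hQ]
  dsimp only
  rw [show (∏ i : Fin N, (Q (τ i)).eval (Y i) * w (Y i) (X (σ⁻¹ i)))
      = (∏ i : Fin N, (Q (τ i)).eval (Y i)) * ∏ i : Fin N, w (Y i) (X (σ⁻¹ i))
    from Finset.prod_mul_distrib]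
  ring

section isone

variable (hw : Measurable fun p : ℝ × ℝ => w p.1 p.2)
  (h2 : ∀ p q : Polynomial ℝ,
      Integrable (fun s : ℝ × ℝ => p.eval s.1 * q.eval s.2 * w s.2 s.1))
  (h1 : ∀ t : ℝ, ∀ p : Polynomial ℝ,
      Integrable (fun s : ℝ => p.eval s * w s t) ∧
      Integrable (fun s : ℝ => p.eval s * w t s))

include h1 in
lemma IS1 {m l : ℕ} (h : l + m = N) (X : Fin N → ℝ) (y : Fin l → ℝ) :
    Integrable (fun v : Fin m → ℝ => Dfun w P Q X (app h y v)) := by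
  have hexp : (fun v : Fin m → ℝ => Dfun w P Q X (app h y v))
      = fun v : Fin m → ℝ => ∑ p : Equiv.Perm (Fin N) × Equiv.Perm (Fin N),
          ((sgn p.1 * sgn p.2 * (Matrix.of fun i j : Fin N => (P i).eval (X j)).det)
            * ∏ a : Fin l, ((Q (p.2 (Fin.cast h (Fin.castAdd m a)))).eval (y a)
                * w (y a) (X (p.1⁻¹ (Fin.cast h (Fin.castAdd m a))))))
          * ∏ b : Fin m, ((Q (p.2 (Fin.cast h (Fin.natAdd l b)))).eval (v b)
                * w (v b) (X (p.1⁻¹ (Fin.cast h (Fin.natAdd l b))))) := by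
    funext v
    rw [DfunExpand]
    refine Finset.sum_congr rfl fun p _ => ?_
    rw [prod_app_split h
      (fun i t => (Q (p.2 i)).eval t * w t (X (p.1⁻¹ i))) y v]
    ring
  rw [hexp]
  refine integrable_finset_sum _ fun p _ => ?_
  refine Integrable.const_mul ?_ _
  exact MeasureTheory.Integrable.fintype_prod
    (f := fun b (t : ℝ) => (Q (p.2 (Fin.cast h (Fin.natAdd l b)))).eval t
        * w t (X (p.1⁻¹ (Fin.cast h (Fin.natAdd l b)))))
    (fun b => (h1 _ _).1)

end isone

/-- Peeling the first coordinate off a product integral. -/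
lemma pi_succ_step {m : ℕ} (f : (Fin (m+1) → ℝ) → ℝ) (hf : Integrable f) :
    (∫ v : Fin (m+1) → ℝ, f v) = ∫ t : ℝ, ∫ v : Fin m → ℝ, f (Fin.cons t v) := by
  have mp := (measurePreserving_piFinSuccAbove (fun _ : Fin (m+1) => (volume : Measure ℝ)) 0).symm
  rw [volume_pi, ← mp.integral_comp']
  have hint : Integrable (fun p : ℝ × (Fin m → ℝ) =>
      f ((MeasurableEquiv.piFinSuccAbove (fun _ : Fin (m+1) => ℝ) 0).symm p))
      (((volume : Measure ℝ)).prod (Measure.pi fun _ : Fin m => (volume : Measure ℝ))) := by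
    have h2' : Integrable
        (f ∘ (MeasurableEquiv.piFinSuccAbove (fun _ : Fin (m+1) => ℝ) 0).symm)
        (((volume : Measure ℝ)).prod (Measure.pi fun _ : Fin m => (volume : Measure ℝ))) :=
      (mp.integrable_comp_emb (MeasurableEquiv.measurableEmbedding _)).mpr
        (by rwa [← volume_pi])
    exact h2'
  have heq : ∀ p : ℝ × (Fin m → ℝ),
      f ((MeasurableEquiv.piFinSuccAbove (fun _ : Fin (m+1) => ℝ) 0).symm p)
        = f (Fin.cons p.1 p.2) := by
    intro p
    congr 1
    simp [MeasurableEquiv.piFinSuccAbove_symm_apply, Fin.insertNthEquiv, Fin.insertNth_zero]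
  rw [show (fun p : ℝ × (Fin m → ℝ) =>
      f ((MeasurableEquiv.piFinSuccAbove (fun _ : Fin (m+1) => ℝ) 0).symm p))
      = fun p : ℝ × (Fin m → ℝ) => f (Fin.cons p.1 p.2) from funext heq] at hint ⊢
  rw [MeasureTheory.integral_prod _ hint]
  simp [volume_pi]
/-- Coefficients for the row expansion. -/
noncomputable def cmat {l : ℕ} (X : Fin N → ℝ) (i0 : Fin N) :
    (Fin N ⊕ Fin l) → Fin N → ℝ :=
  Sum.elim (fun j n => (P n).eval (X j)) (fun _ n => if n = i0 then (1:ℝ) else 0)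

/-- Basis rows for the row expansion. -/
noncomputable def gmat {l : ℕ} (X : Fin N → ℝ) (y : Fin l → ℝ) :
    (Fin N ⊕ Fin l) → Fin N → ((Fin N ⊕ Fin l) → ℝ) :=
  Sum.elim
    (fun _ n => Sum.elim (fun j' => Ef w Q n (X j')) (fun r' => (Q n).eval (y r')))
    (fun s _ => fun jv => Kk w P Q (.inr (y s)) (pts X y jv))

lemma TmExpand (i0 : Fin N) {l : ℕ} (X : Fin N → ℝ) (y : Fin l → ℝ) :
    (Tm w P Q N l X y).det
      = ∑ r : (Fin N ⊕ Fin l) → Fin N, ∑ σ : Equiv.Perm (Fin N ⊕ Fin l),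
          ((sgn σ * ∏ s : Fin l, (if r (Sum.inr s) = i0 then (1:ℝ) else 0))
            * ∏ s' : Fin l, Sum.elim (fun j0 => (Q (r (Sum.inl j0))).eval (y s'))
                (fun s => Kk w P Q (.inr (y s)) (.inr (y s'))) (σ (Sum.inr s')))
          * ∏ j : Fin N, ((P (r (Sum.inl j))).eval (X j)
              * Sum.elim (fun j0 => Ef w Q (r (Sum.inl j0)) (X j))
                  (fun s => (∑ n : Fin N, Ff w P n (y s) * Ef w Q n (X j)) - w (y s) (X j))
                  (σ (Sum.inl j))) := by
  classical
  set f := (Matrix.detRowAlternating :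
    ((Fin N ⊕ Fin l) → ℝ) [⋀^(Fin N ⊕ Fin l)]→ₗ[ℝ] ℝ).toMultilinearMap with hf
  have hrows : (Tm w P Q N l X y)
      = fun iv => ∑ n : Fin N, cmat P X i0 iv n • gmat w P Q X y iv n := by
    funext iv jv
    rcases iv with j | s
    · rw [Finset.sum_apply]
      rcases jv with j' | r' <;>
        simp [Tm, pts, Kk, cmat, gmat, smul_eq_mul]
    · rw [Finset.sum_apply]
      have : ∀ (c : ℝ), (∑ n : Fin N, (if n = i0 then (1:ℝ) else 0) * c) = c := by
        intro c
        simp [ite_mul, Finset.sum_ite_eq', Finset.mem_univ]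
      simp only [cmat, gmat, Sum.elim_inr, Pi.smul_apply, smul_eq_mul]
      rw [this]
      rfl
  have h1 : (Tm w P Q N l X y).det
      = ∑ r : (Fin N ⊕ Fin l) → Fin N,
          (∏ iv : Fin N ⊕ Fin l, cmat P X i0 iv (r iv))
            • f (fun iv => gmat w P Q X y iv (r iv)) := by
    show f (Tm w P Q N l X y) = _
    rw [hrows, f.map_sum]
    exact Finset.sum_congr rfl fun r _ => f.map_smul_univ _ _
  have h2 : ∀ r : (Fin N ⊕ Fin l) → Fin N,
      f (fun iv => gmat w P Q X y iv (r iv))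
        = ∑ σ : Equiv.Perm (Fin N ⊕ Fin l),
            sgn σ * ∏ iv : Fin N ⊕ Fin l, gmat w P Q X y (σ iv) (r (σ iv)) iv := by
    intro r
    have : f (fun iv => gmat w P Q X y iv (r iv))
        = (Matrix.of fun iv jv => gmat w P Q X y iv (r iv) jv).det := rfl
    rw [this, det_apply_sgn]
    rfl
  rw [h1]
  refine Finset.sum_congr rfl fun r _ => ?_
  rw [smul_eq_mul, h2 r, Finset.mul_sum]
  refine Finset.sum_congr rfl fun σ _ => ?_
  rw [Fintype.prod_sum_type (f := fun iv => cmat (l := l) P X i0 iv (r iv)),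
    Fintype.prod_sum_type (f := fun iv => gmat w P Q X y (σ iv) (r (σ iv)) iv)]
  have hg1 : ∀ j : Fin N, gmat w P Q X y (σ (Sum.inl j)) (r (σ (Sum.inl j))) (Sum.inl j)
      = Sum.elim (fun j0 => Ef w Q (r (Sum.inl j0)) (X j))
          (fun s => (∑ n : Fin N, Ff w P n (y s) * Ef w Q n (X j)) - w (y s) (X j))
          (σ (Sum.inl j)) := by
    intro j
    rcases hs : σ (Sum.inl j) with j0 | s <;> rfl
  have hg2 : ∀ s' : Fin l, gmat w P Q X y (σ (Sum.inr s')) (r (σ (Sum.inr s'))) (Sum.inr s')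
      = Sum.elim (fun j0 => (Q (r (Sum.inl j0))).eval (y s'))
          (fun s => Kk w P Q (.inr (y s)) (.inr (y s'))) (σ (Sum.inr s')) := by
    intro s'
    rcases hs : σ (Sum.inr s') with j0 | s <;> rfl
  simp only [hg1, hg2, cmat, Sum.elim_inl, Sum.elim_inr]
  rw [Finset.prod_mul_distrib]
  ring

section istwo

variable (h2 : ∀ p q : Polynomial ℝ,
      Integrable (fun s : ℝ × ℝ => p.eval s.1 * q.eval s.2 * w s.2 s.1))
  (h1 : ∀ t : ℝ, ∀ p : Polynomial ℝ,
      Integrable (fun s : ℝ => p.eval s * w s t) ∧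
      Integrable (fun s : ℝ => p.eval s * w t s))

include h2 h1 in
lemma intPhi {l : ℕ} (y : Fin l → ℝ) (p : Polynomial ℝ) (n : Fin N → Fin N)
    (ρ : Fin N ⊕ Fin l) :
    Integrable (fun t : ℝ => p.eval t *
      Sum.elim (fun j0 => Ef w Q (n j0) t)
        (fun s => (∑ n' : Fin N, Ff w P n' (y s) * Ef w Q n' t) - w (y s) t) ρ) := by
  rcases ρ with j0 | s
  · simp only [Sum.elim_inl]
    exact intPE w Q h2 p (n j0)
  · simp only [Sum.elim_inr]
    have hre : (fun t : ℝ => p.eval t *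
        ((∑ n' : Fin N, Ff w P n' (y s) * Ef w Q n' t) - w (y s) t))
        = fun t : ℝ => (∑ n' : Fin N, Ff w P n' (y s) * (p.eval t * Ef w Q n' t))
            - p.eval t * w (y s) t := by
      funext t
      rw [mul_sub, Finset.mul_sum]
      congr 1
      exact Finset.sum_congr rfl fun n' _ => by ring
    rw [hre]
    exact ((integrable_finset_sum _ fun n' _ =>
      (intPE w Q h2 p n').const_mul _)).sub ((h1 (y s) p).2)

include h2 h1 in
lemma IS2 (i0 : Fin N) {m k l : ℕ} (h : k + m = N) (x : Fin k → ℝ) (y : Fin l → ℝ) :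
    Integrable (fun u : Fin m → ℝ => (Tm w P Q N l (app h x u) y).det) := by
  have hexp : (fun u : Fin m → ℝ => (Tm w P Q N l (app h x u) y).det)
      = fun u : Fin m → ℝ =>
        ∑ r : (Fin N ⊕ Fin l) → Fin N, ∑ σ : Equiv.Perm (Fin N ⊕ Fin l),
          (((sgn σ * ∏ s : Fin l, (if r (Sum.inr s) = i0 then (1:ℝ) else 0))
            * ∏ s' : Fin l, Sum.elim (fun j0 => (Q (r (Sum.inl j0))).eval (y s'))
                (fun s => Kk w P Q (.inr (y s)) (.inr (y s'))) (σ (Sum.inr s')))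
          * ((∏ a : Fin k, ((P (r (Sum.inl (Fin.cast h (Fin.castAdd m a))))).eval (x a)
              * Sum.elim (fun j0 => Ef w Q (r (Sum.inl j0)) (x a))
                  (fun s => (∑ n : Fin N, Ff w P n (y s) * Ef w Q n (x a)) - w (y s) (x a))
                  (σ (Sum.inl (Fin.cast h (Fin.castAdd m a))))))
            * ∏ b : Fin m, ((P (r (Sum.inl (Fin.cast h (Fin.natAdd k b))))).eval (u b)
              * Sum.elim (fun j0 => Ef w Q (r (Sum.inl j0)) (u b))
                  (fun s => (∑ n : Fin N, Ff w P n (y s) * Ef w Q n (u b)) - w (y s) (u b))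
                  (σ (Sum.inl (Fin.cast h (Fin.natAdd k b))))))) := by
    funext u
    rw [TmExpand w P Q i0 (app h x u) y]
    refine Finset.sum_congr rfl fun r _ => Finset.sum_congr rfl fun σ _ => ?_
    rw [prod_app_split h (fun j t => (P (r (Sum.inl j))).eval t
      * Sum.elim (fun j0 => Ef w Q (r (Sum.inl j0)) t)
          (fun s => (∑ n : Fin N, Ff w P n (y s) * Ef w Q n t) - w (y s) t)
          (σ (Sum.inl j))) x u]
  rw [hexp]
  refine integrable_finset_sum _ fun r _ => integrable_finset_sum _ fun σ _ => ?_
  refine Integrable.const_mul ?_ _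
  refine Integrable.const_mul ?_ _
  exact MeasureTheory.Integrable.fintype_prod
    (f := fun b (t : ℝ) => (P (r (Sum.inl (Fin.cast h (Fin.natAdd k b))))).eval t
      * Sum.elim (fun j0 => Ef w Q (r (Sum.inl j0)) t)
          (fun s => (∑ n : Fin N, Ff w P n (y s) * Ef w Q n t) - w (y s) t)
          (σ (Sum.inl (Fin.cast h (Fin.natAdd k b)))))
    (fun b => intPhi w P Q h2 h1 y _ _ _)

end istwo
section inductions

variable (h2 : ∀ p q : Polynomial ℝ,
      Integrable (fun s : ℝ × ℝ => p.eval s.1 * q.eval s.2 * w s.2 s.1))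
  (h1 : ∀ t : ℝ, ∀ p : Polynomial ℝ,
      Integrable (fun s : ℝ => p.eval s * w s t) ∧
      Integrable (fun s : ℝ => p.eval s * w t s))
  (ho : ∀ i j : Fin N,
      (∫ s : ℝ × ℝ, (P i).eval s.1 * (Q j).eval s.2 * w s.2 s.1) =
        if i = j then (1 : ℝ) else 0)

include h2 h1 ho in
lemma S1 : ∀ (m : ℕ) {l : ℕ} (h : l + m = N) (X : Fin N → ℝ) (y : Fin l → ℝ),
    (∫ v : Fin m → ℝ, Dfun w P Q X (app h y v))
      = (m.factorial : ℝ) * (Tm w P Q N l X y).det := by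
  intro m
  induction m with
  | zero =>
    intro l h X y
    have hl : l = N := by omega
    subst hl
    have hc : (fun v : Fin 0 → ℝ => Dfun w P Q X (app h y v))
        = fun _ : Fin 0 → ℝ => Dfun w P Q X y := by
      funext v
      rw [app_zero]
    rw [hc, integral_const, ← base w P Q X y]
    simp [volume_pi, measureReal_def, Measure.pi_univ]
  | succ m ih =>
    intro l h X y
    have h' : (l+1) + m = N := by omega
    rw [pi_succ_step _ (IS1 w P Q h1 h X y)]
    have hin : (fun t : ℝ => ∫ v : Fin m → ℝ, Dfun w P Q X (app h y (Fin.cons t v)))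
        = fun t : ℝ => (m.factorial : ℝ) * (Tm w P Q N (l+1) X (Fin.snoc y t)).det := by
      funext t
      have hc : (fun v : Fin m → ℝ => Dfun w P Q X (app h y (Fin.cons t v)))
          = fun v => Dfun w P Q X (app h' (Fin.snoc y t) v) := by
        funext v
        rw [app_cons h h']
      rw [hc, ih h' X (Fin.snoc y t)]
    rw [hin, integral_const_mul, SY w P Q h2 h1 ho N l X y]
    have hNl : (N : ℝ) - l = ((m+1 : ℕ) : ℝ) := by
      have : (l : ℝ) + ((m+1 : ℕ) : ℝ) = N := by exact_mod_cast congrArg (Nat.cast : ℕ → ℝ) h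
      linarith
    rw [hNl]
    rw [Nat.factorial_succ]
    push_cast
    ring

include h2 h1 ho in
lemma S2 : ∀ (m : ℕ) {k : ℕ} (h : k + m = N) (x : Fin k → ℝ) {l : ℕ} (y : Fin l → ℝ),
    (∫ u : Fin m → ℝ, (Tm w P Q N l (app h x u) y).det)
      = (m.factorial : ℝ) * (Tm w P Q k l x y).det := by
  intro m
  induction m with
  | zero =>
    intro k h x l y
    have hk : k = N := by omega
    subst hk
    have hc : (fun u : Fin 0 → ℝ => (Tm w P Q _ l (app h x u) y).det)
        = fun _ : Fin 0 → ℝ => (Tm w P Q _ l x y).det := by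
      funext u
      rw [app_zero]
    rw [hc, integral_const]
    simp [volume_pi, measureReal_def, Measure.pi_univ]
  | succ m ih =>
    intro k h x l y
    have h' : (k+1) + m = N := by omega
    have i0 : Fin N := ⟨0, by omega⟩
    rw [pi_succ_step _ (IS2 w P Q h2 h1 i0 h x y)]
    have hin : (fun t : ℝ => ∫ u : Fin m → ℝ, (Tm w P Q N l (app h x (Fin.cons t u)) y).det)
        = fun t : ℝ => (m.factorial : ℝ) * (Tm w P Q (k+1) l (Fin.snoc x t) y).det := by
      funext t
      have hc : (fun u : Fin m → ℝ => (Tm w P Q N l (app h x (Fin.cons t u)) y).det)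
          = fun u => (Tm w P Q N l (app h' (Fin.snoc x t) u) y).det := by
        funext u
        rw [app_cons h h']
      rw [hc, ih h' (Fin.snoc x t) y]
    rw [hin, integral_const_mul, SX w P Q h2 h1 ho k l x y]
    have hNk : (N : ℝ) - k = ((m+1 : ℕ) : ℝ) := by
      have : (k : ℝ) + ((m+1 : ℕ) : ℝ) = N := by exact_mod_cast congrArg (Nat.cast : ℕ → ℝ) h
      linarith
    rw [hNk, Nat.factorial_succ]
    push_cast
    ring

end inductions
section spec

variable (h1 : ∀ t : ℝ, ∀ p : Polynomial ℝ,
      Integrable (fun s : ℝ => p.eval s * w s t) ∧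
      Integrable (fun s : ℝ => p.eval s * w t s))

include h1 in
lemma T11 (a b : ℝ) : (∫ t : ℝ, Hker N P Q a t * w t b)
    = ∑ n : Fin N, (P n).eval a * Ef w Q n b := by
  have hre : (fun t : ℝ => Hker N P Q a t * w t b)
      = fun t => ∑ n : Fin N, (P n).eval a * ((Q n).eval t * w t b) := by
    funext t
    rw [Hker, Finset.sum_mul]
    exact Finset.sum_congr rfl fun n _ => by ring
  rw [hre, integral_finset_sum _ fun n _ => ((h1 b (Q n)).1).const_mul _]
  exact Finset.sum_congr rfl fun n _ => by rw [integral_const_mul]; rfl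

include h1 in
lemma T22 (c d : ℝ) : (∫ t : ℝ, w c t * Hker N P Q t d)
    = ∑ n : Fin N, Ff w P n c * (Q n).eval d := by
  have hre : (fun t : ℝ => w c t * Hker N P Q t d)
      = fun t => ∑ n : Fin N, (Q n).eval d * ((P n).eval t * w c t) := by
    funext t
    rw [Hker, Finset.mul_sum]
    exact Finset.sum_congr rfl fun n _ => by ring
  rw [hre, integral_finset_sum _ fun n _ => ((h1 c (P n)).2).const_mul _]
  refine Finset.sum_congr rfl fun n _ => ?_
  rw [integral_const_mul,
    show (∫ t : ℝ, (P n).eval t * w c t) = Ff w P n c from rfl]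
  ring

include h1 in
lemma T21 (c b : ℝ) : (∫ t : ℝ, ∫ t' : ℝ, w c t * Hker N P Q t t' * w t' b)
    = ∑ n : Fin N, Ff w P n c * Ef w Q n b := by
  have hin : ∀ t : ℝ, (∫ t' : ℝ, w c t * Hker N P Q t t' * w t' b)
      = ∑ n : Fin N, (w c t * (P n).eval t) * Ef w Q n b := by
    intro t
    have hre : (fun t' : ℝ => w c t * Hker N P Q t t' * w t' b)
        = fun t' => ∑ n : Fin N, (w c t * (P n).eval t) * ((Q n).eval t' * w t' b) := by
      funext t'
      rw [Hker, Finset.mul_sum, Finset.sum_mul]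
      exact Finset.sum_congr rfl fun n _ => by ring
    rw [hre, integral_finset_sum _ fun n _ => ((h1 b (Q n)).1).const_mul _]
    exact Finset.sum_congr rfl fun n _ => by rw [integral_const_mul]; rfl
  rw [show (fun t : ℝ => ∫ t' : ℝ, w c t * Hker N P Q t t' * w t' b)
      = fun t : ℝ => ∑ n : Fin N, Ef w Q n b * ((P n).eval t * w c t) from
    funext fun t => by
      rw [hin t]; exact Finset.sum_congr rfl fun n _ => by ring]
  rw [integral_finset_sum _ fun n _ => ((h1 c (P n)).2).const_mul _]
  refine Finset.sum_congr rfl fun n _ => ?_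
  rw [integral_const_mul,
    show (∫ t : ℝ, (P n).eval t * w c t) = Ff w P n c from rfl]
  ring

include h1 in
lemma Tm_spec (k l : ℕ) (x : Fin k → ℝ) (y : Fin l → ℝ) :
    (Matrix.fromBlocks
      (Matrix.of fun r s : Fin k => ∫ t : ℝ, Hker N P Q (x r) t * w t (x s))
      (Matrix.of fun (r : Fin k) (s : Fin l) => Hker N P Q (x r) (y s))
      (Matrix.of fun (r : Fin l) (s : Fin k) =>
        (∫ t : ℝ, ∫ t' : ℝ, w (y r) t * Hker N P Q t t' * w t' (x s)) - w (y r) (x s))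
      (Matrix.of fun r s : Fin l => ∫ t : ℝ, w (y r) t * Hker N P Q t (y s)))
    = Tm w P Q k l x y := by
  funext iv jv
  rcases iv with r | r <;> rcases jv with s | s
  · show (∫ t : ℝ, Hker N P Q (x r) t * w t (x s)) = Kk w P Q (.inl (x r)) (.inl (x s))
    rw [T11 w P Q h1]
    rfl
  · rfl
  · show (∫ t : ℝ, ∫ t' : ℝ, w (y r) t * Hker N P Q t t' * w t' (x s)) - w (y r) (x s)
      = Kk w P Q (.inr (y r)) (.inl (x s))
    rw [T21 w P Q h1]
    rfl
  · show (∫ t : ℝ, w (y r) t * Hker N P Q t (y s))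
      = Kk w P Q (.inr (y r)) (.inr (y s))
    rw [T22 w P Q h1]
    rfl

end spec

end EM

/-- **Proposition 3.1 (Eynard–Mehta).** The correlation functions of two coupled
random matrices are given by a determinantal formula with a 2×2 matrix kernel. -/
theorem eynard_mehta
    (N : ℕ) (hN : 1 ≤ N) (w : ℝ → ℝ → ℝ)
    (hwmeas : Measurable fun p : ℝ × ℝ => w p.1 p.2)
    (hint2 : ∀ p q : Polynomial ℝ,
      Integrable (fun s : ℝ × ℝ => p.eval s.1 * q.eval s.2 * w s.2 s.1))
    (hint1 : ∀ t : ℝ, ∀ p : Polynomial ℝ,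
      Integrable (fun s : ℝ => p.eval s * w s t) ∧
      Integrable (fun s : ℝ => p.eval s * w t s))
    (P Q : Fin N → Polynomial ℝ)
    (hdegP : ∀ i, (P i).degree = ((i : ℕ) : WithBot ℕ))
    (hdegQ : ∀ i, (Q i).degree = ((i : ℕ) : WithBot ℕ))
    (horth : ∀ i j : Fin N,
      (∫ s : ℝ × ℝ, (P i).eval s.1 * (Q j).eval s.2 * w s.2 s.1) =
        if i = j then (1 : ℝ) else 0)
    (k l : ℕ) (hk : k ≤ N) (hl : l ≤ N) (x : Fin k → ℝ) (y : Fin l → ℝ) :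
    corrFun N w P Q k l hk hl x y =
      Matrix.det (Matrix.fromBlocks
        (Matrix.of fun r s : Fin k => ∫ t : ℝ, Hker N P Q (x r) t * w t (x s))
        (Matrix.of fun (r : Fin k) (s : Fin l) => Hker N P Q (x r) (y s))
        (Matrix.of fun (r : Fin l) (s : Fin k) =>
          (∫ t : ℝ, ∫ t' : ℝ, w (y r) t * Hker N P Q t t' * w t' (x s)) - w (y r) (x s))
        (Matrix.of fun r s : Fin l => ∫ t : ℝ, w (y r) t * Hker N P Q t (y s))) := by
  have hko : k + (N - k) = N := by omega
  have hlo : l + (N - l) = N := by omega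
  have hjd : ∀ X Y : Fin N → ℝ, jointDensity N w P Q X Y
      = (1/(N.factorial : ℝ)^2) * EM.Dfun w P Q X Y := by
    intro X Y
    simp only [jointDensity, EM.Dfun]
    ring
  have hstep1 : (fun u : Fin (N-k) → ℝ => ∫ v : Fin (N-l) → ℝ, jointDensity N w P Q
      (fun i => Fin.append x u (Fin.cast (by omega) i))
      (fun i => Fin.append y v (Fin.cast (by omega) i)))
      = fun u : Fin (N-k) → ℝ => (1/(N.factorial:ℝ)^2) * (((N-l).factorial : ℝ)
          * (EM.Tm w P Q N l (EM.app hko x u) y).det) := by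
    funext u
    have hfv : (fun v : Fin (N-l) → ℝ => jointDensity N w P Q
        (fun i => Fin.append x u (Fin.cast (by omega) i))
        (fun i => Fin.append y v (Fin.cast (by omega) i)))
        = fun v : Fin (N-l) → ℝ => (1/(N.factorial:ℝ)^2)
            * EM.Dfun w P Q (EM.app hko x u) (EM.app hlo y v) := by
      funext v
      rw [hjd]
      rfl
    rw [hfv, integral_const_mul,
      EM.S1 w P Q hint2 hint1 horth (N - l) hlo (EM.app hko x u) y]
  rw [corrFun, hstep1, integral_const_mul, integral_const_mul,
    EM.S2 w P Q hint2 hint1 horth (N - k) hko x y,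
    EM.Tm_spec w P Q hint1 k l x y]
  have hf1 : ((N-k).factorial : ℝ) ≠ 0 := Nat.cast_ne_zero.2 (Nat.factorial_ne_zero _)
  have hf2 : ((N-l).factorial : ℝ) ≠ 0 := Nat.cast_ne_zero.2 (Nat.factorial_ne_zero _)
  have hf3 : (N.factorial : ℝ) ≠ 0 := Nat.cast_ne_zero.2 (Nat.factorial_ne_zero _)
  field_simp
end

section
/- Expansion of a determinant along the first k rows and the first l columns: det M = Σ_{d = max(k,l)}^{min(k+l,N)} (1/d!) Σ_{(a,b)} ε(a,b) · (∏_{i=1}^d M_{a_i b_i}) · det M(â; b̂), where the inner sum is over all pairs of d-tuples a = (a₁,…,a_d) and b = (b₁,…,b_d) of pairwise distinct indices in {1,…,N} such that {1,…,k} ⊆ {a₁,…,a_d}, {1,…,l} ⊆ {b₁,…,b_d}, and for every i ∈ {1,…,d} either a_i ≤ k or b_i ≤ l. Here det M(â; b̂) denotes the determinant of the (N−d) × (N−d) submatrix of M obtained by deleting rows a₁,…,a_d and columns b₁,…,b_d (the remaining rows and columns taken in increasing order), and ε(a,b) = (−1)^{Σ_{i=1}^d a_i + Σ_{i=1}^d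 b_i} · sgn(α ∘ β^{−1}), where α, β are the unique permutations of {1,…,d} with a_{α(1)} < ⋯ < a_{α(d)} and b_{β(1)} < ⋯ < b_{β(d)}. -/
open scoped Classical

open Finset Equiv

namespace DetExp

variable {N d : ℕ}

noncomputable def cA (A : Finset (Fin N)) : Finset (Fin N) := Finset.univ \ A

lemma mem_cA {A : Finset (Fin N)} {x} : x ∈ cA A ↔ x ∉ A := by simp [cA]

lemma card_cA (A : Finset (Fin N)) (hA : A.card = d) : (cA A).card = N - d := by
  simp [cA, Finset.card_sdiff_of_subset (Finset.subset_univ _), hA]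

lemma card_le (A : Finset (Fin N)) (hA : A.card = d) : d ≤ N := by
  rw [← hA]
  simpa using Finset.card_le_univ A

noncomputable def rFun (A : Finset (Fin N)) (hA : A.card = d) : (Fin d ⊕ Fin (N - d)) → Fin N :=
  Sum.elim (A.orderEmbOfFin hA) ((cA A).orderEmbOfFin (card_cA A hA))

lemma rFun_bijective (A : Finset (Fin N)) (hA : A.card = d) :
    Function.Bijective (rFun A hA) := by
  have hd := card_le A hA
  rw [Fintype.bijective_iff_injective_and_card]
  constructor
  · rintro (i | i) (j | j) hij <;> simp only [rFun, Sum.elim_inl, Sum.elim_inr] at hij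
    · exact congrArg _ ((A.orderEmbOfFin hA).injective hij)
    · exact absurd (mem_cA.1 ((cA A).orderEmbOfFin_mem _ j)) (by
        rw [← hij]; simp [A.orderEmbOfFin_mem hA i])
    · exact absurd (mem_cA.1 ((cA A).orderEmbOfFin_mem _ i)) (by
        rw [hij]; simp [A.orderEmbOfFin_mem hA j])
    · exact congrArg _ (((cA A).orderEmbOfFin _).injective hij)
  · simp [Nat.add_sub_cancel' hd]

noncomputable def rEquiv (A : Finset (Fin N)) (hA : A.card = d) : (Fin d ⊕ Fin (N - d)) ≃ Fin N :=
  Equiv.ofBijective _ (rFun_bijective A hA)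

@[simp] lemma rEquiv_inl (A : Finset (Fin N)) (hA : A.card = d) (i : Fin d) :
    rEquiv A hA (Sum.inl i) = A.orderEmbOfFin hA i := rfl

@[simp] lemma rEquiv_inr (A : Finset (Fin N)) (hA : A.card = d) (j : Fin (N - d)) :
    rEquiv A hA (Sum.inr j) = (cA A).orderEmbOfFin (card_cA A hA) j := rfl

noncomputable def fsc (hd : d ≤ N) : (Fin d ⊕ Fin (N - d)) ≃ Fin N :=
  finSumFinEquiv.trans (finCongr (Nat.add_sub_cancel' hd))

@[simp] lemma fsc_inl (hd : d ≤ N) (i : Fin d) :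
    ((fsc hd (Sum.inl i)) : ℕ) = (i : ℕ) := rfl

@[simp] lemma fsc_inr (hd : d ≤ N) (j : Fin (N - d)) :
    ((fsc hd (Sum.inr j)) : ℕ) = d + (j : ℕ) := rfl

noncomputable def qperm (A : Finset (Fin N)) (hA : A.card = d) : Equiv.Perm (Fin N) :=
  (fsc (card_le A hA)).symm.trans (rEquiv A hA)
variable {N d : ℕ}

lemma mem_iff_of_initial (A : Finset (Fin N)) (hA : A.card = d)
    (h : ∀ x ∈ A, ∀ y : Fin N, y ≤ x → y ∈ A) (x : Fin N) : x ∈ A ↔ (x : ℕ) < d := by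
  constructor
  · intro hx
    have hsub : Finset.Iic x ⊆ A := fun y hy => h x hx y (Finset.mem_Iic.1 hy)
    have := Finset.card_le_card hsub
    rw [Fin.card_Iic, hA] at this
    omega
  · intro hx
    have hsub : A.image (Fin.val) ⊆ Finset.range d := by
      intro m hm
      simp only [Finset.mem_image] at hm
      obtain ⟨y, hy, rfl⟩ := hm
      by_contra hc
      simp only [Finset.mem_range, not_lt] at hc
      -- y ∈ A with y.val ≥ d; but then Iic y ⊆ A has card y+1 > d
      have hsub : Finset.Iic y ⊆ A := fun z hz => h y hy z (Finset.mem_Iic.1 hz)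
      have := Finset.card_le_card hsub
      rw [Fin.card_Iic, hA] at this
      omega
    have heq : A.image (Fin.val) = Finset.range d := by
      apply Finset.eq_of_subset_of_card_le hsub
      rw [Finset.card_image_of_injective _ Fin.val_injective, hA, Finset.card_range]
    have : (x : ℕ) ∈ A.image Fin.val := by rw [heq]; simpa using hx
    simp only [Finset.mem_image] at this
    obtain ⟨y, hy, hyx⟩ := this
    rwa [show y = x from Fin.ext hyx] at hy

lemma qperm_initial (A : Finset (Fin N)) (hA : A.card = d)
    (h : ∀ x ∈ A, ∀ y : Fin N, y ≤ x → y ∈ A) : qperm A hA = Equiv.refl _ := by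
  have hd := card_le A hA
  have hmem := mem_iff_of_initial A hA h
  ext x
  obtain ⟨s, rfl⟩ := (fsc hd).surjective x
  have : qperm A hA (fsc hd s) = rEquiv A hA s :=
    congrArg (rEquiv A hA) ((fsc hd).symm_apply_apply s)
  rw [this]
  cases s with
  | inl i =>
    have h1 : (fun i : Fin d => (⟨(i : ℕ), lt_of_lt_of_le i.2 hd⟩ : Fin N)) = A.orderEmbOfFin hA := by
      apply Finset.orderEmbOfFin_unique
      · intro j; rw [hmem]; exact j.2
      · intro i j hij; exact hij
    simp only [rEquiv_inl, Equiv.refl_apply, ← h1]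
    exact (fsc_inl hd i).symm
  | inr j =>
    have h2 : (fun j : Fin (N - d) => (⟨d + (j : ℕ), by omega⟩ : Fin N)) =
        (cA A).orderEmbOfFin (card_cA A hA) := by
      apply Finset.orderEmbOfFin_unique
      · intro j; rw [mem_cA, hmem]; simp
      · intro i j hij; exact Nat.add_lt_add_left hij d
    simp only [rEquiv_inr, Equiv.refl_apply, ← h2]
    exact (fsc_inr hd j).symm


lemma card_insert_erase {A : Finset (Fin N)} (hA : A.card = d) {a a' : Fin N}
    (ha : a ∈ A) (ha' : a' ∉ A) : (insert a' (A.erase a)).card = d := by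
  rw [Finset.card_insert_of_notMem (fun h => ha' (Finset.mem_of_mem_erase h)),
    Finset.card_erase_of_mem ha, hA]
  have : 1 ≤ d := hA ▸ Finset.card_pos.2 ⟨a, ha⟩
  omega

lemma qperm_swap (A : Finset (Fin N)) (hA : A.card = d) (a a' : Fin N)
    (ha : a ∈ A) (ha' : a' ∉ A) (hv : (a' : ℕ) + 1 = (a : ℕ)) :
    qperm A hA = Equiv.swap a' a * qperm (insert a' (A.erase a)) (card_insert_erase hA ha ha') := by
  set A' := insert a' (A.erase a) with hA'def
  set hA' := card_insert_erase hA ha ha'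
  have haa' : a' ≠ a := fun h => by
    have := congrArg Fin.val h; omega
  have haA' : a ∉ A' := by
    simp only [hA'def, Finset.mem_insert, Finset.mem_erase]
    push_neg
    exact ⟨haa'.symm, fun h => absurd rfl h⟩
  have ha'A' : a' ∈ A' := Finset.mem_insert_self _ _
  have hmemA' : ∀ x ∈ A', x ≠ a' → x ∈ A := by
    intro x hx hxa'
    rcases Finset.mem_insert.1 hx with h | h
    · exact absurd h hxa'
    · exact Finset.mem_of_mem_erase h
  have key1 : (fun i : Fin d => Equiv.swap a' a (A'.orderEmbOfFin hA' i)) = A.orderEmbOfFin hA := by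
    apply Finset.orderEmbOfFin_unique
    · intro i
      set x := A'.orderEmbOfFin hA' i with hx
      have hxA' : x ∈ A' := A'.orderEmbOfFin_mem hA' i
      by_cases hxa' : x = a'
      · rw [hxa', Equiv.swap_apply_left]; exact ha
      · rw [Equiv.swap_apply_of_ne_of_ne hxa' (fun h => haA' (by rw [← h]; exact hxA'))]
        exact hmemA' x hxA' hxa'
    · intro i j hij
      have hmono := (A'.orderEmbOfFin hA').strictMono hij
      set u := A'.orderEmbOfFin hA' i with hu
      set v := A'.orderEmbOfFin hA' j with hv2
      have huA' : u ∈ A' := A'.orderEmbOfFin_mem hA' i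
      have hvA' : v ∈ A' := A'.orderEmbOfFin_mem hA' j
      have hua : (u : ℕ) ≠ (a : ℕ) := fun h => haA' ((Fin.ext h : u = a) ▸ huA')
      have hva : (v : ℕ) ≠ (a : ℕ) := fun h => haA' ((Fin.ext h : v = a) ▸ hvA')
      have hm : (u : ℕ) < (v : ℕ) := hmono
      clear_value u v
      simp only [Equiv.swap_apply_def]
      split_ifs <;> simp_all only [Fin.lt_def, Fin.ext_iff] <;> omega
  have key2 : (fun j : Fin (N - d) =>
      Equiv.swap a' a ((cA A').orderEmbOfFin (card_cA A' hA') j)) =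
      (cA A).orderEmbOfFin (card_cA A hA) := by
    apply Finset.orderEmbOfFin_unique
    · intro j
      set x := (cA A').orderEmbOfFin (card_cA A' hA') j with hx
      have hxA' : x ∉ A' := mem_cA.1 ((cA A').orderEmbOfFin_mem (card_cA A' hA') j)
      have hxa' : x ≠ a' := fun h => hxA' (h ▸ ha'A')
      by_cases hxa : x = a
      · rw [hxa, Equiv.swap_apply_right]
        exact mem_cA.2 ha'
      · rw [Equiv.swap_apply_of_ne_of_ne hxa' hxa]
        refine mem_cA.2 (fun hxA => hxA' ?_)
        exact Finset.mem_insert_of_mem (Finset.mem_erase.2 ⟨hxa, hxA⟩)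
    · intro i j hij
      have hmono := ((cA A').orderEmbOfFin (card_cA A' hA')).strictMono hij
      set u := (cA A').orderEmbOfFin (card_cA A' hA') i with hu
      set v := (cA A').orderEmbOfFin (card_cA A' hA') j with hv2
      have huA' : u ∉ A' := mem_cA.1 ((cA A').orderEmbOfFin_mem _ i)
      have hvA' : v ∉ A' := mem_cA.1 ((cA A').orderEmbOfFin_mem _ j)
      have hua : (u : ℕ) ≠ (a' : ℕ) := fun h => huA' ((Fin.ext h : u = a') ▸ ha'A')
      have hva : (v : ℕ) ≠ (a' : ℕ) := fun h => hvA' ((Fin.ext h : v = a') ▸ ha'A')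
      have hm : (u : ℕ) < (v : ℕ) := hmono
      clear_value u v
      simp only [Equiv.swap_apply_def]
      split_ifs <;> simp_all only [Fin.lt_def, Fin.ext_iff] <;> omega
  have hd := card_le A hA
  ext x
  obtain ⟨s, rfl⟩ := (fsc hd).surjective x
  have L : qperm A hA (fsc hd s) = rEquiv A hA s :=
    congrArg (rEquiv A hA) ((fsc hd).symm_apply_apply s)
  have R : qperm A' hA' (fsc hd s) = rEquiv A' hA' s :=
    congrArg (rEquiv A' hA') ((fsc hd).symm_apply_apply s)
  rw [Equiv.Perm.mul_apply, L, R]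
  cases s with
  | inl i =>
    rw [rEquiv_inl, rEquiv_inl]
    exact congrArg Fin.val (congrFun key1 i).symm
  | inr j =>
    rw [rEquiv_inr, rEquiv_inr]
    exact congrArg Fin.val (congrFun key2 j).symm

lemma sign_qperm_aux : ∀ (m : ℕ) (A : Finset (Fin N)) (hA : A.card = d),
    (∑ x ∈ A, (x : ℕ)) = m →
    Equiv.Perm.sign (qperm A hA) = (-1) ^ (m + ∑ i ∈ Finset.range d, i) := by
  intro m
  induction m using Nat.strong_induction_on with
  | _ m ih =>
    intro A hA hm
    by_cases hinit : ∀ x ∈ A, ∀ y : Fin N, y ≤ x → y ∈ A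
    · rw [qperm_initial A hA hinit]
      have hmem := mem_iff_of_initial A hA hinit
      have himg : A.image Fin.val = Finset.range d := by
        ext m
        simp only [Finset.mem_image, Finset.mem_range]
        constructor
        · rintro ⟨y, hy, rfl⟩; exact (hmem y).1 hy
        · intro hmlt
          exact ⟨⟨m, lt_of_lt_of_le hmlt (card_le A hA)⟩, (hmem _).2 hmlt, rfl⟩
      have hsum : ∑ x ∈ A, (x : ℕ) = ∑ i ∈ Finset.range d, i := by
        rw [← himg, Finset.sum_image (fun x _ y _ h => Fin.val_injective h)]
      rw [← hm, hsum]
      rw [show Equiv.refl (Fin N) = (1 : Equiv.Perm (Fin N)) from rfl, map_one]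
      exact (Even.neg_one_pow ⟨∑ i ∈ Finset.range d, i, by ring⟩).symm
    · push_neg at hinit
      obtain ⟨x, hx, y, hyx, hyA⟩ := hinit
      have hyxlt : y < x := lt_of_le_of_ne hyx (fun h => hyA (h ▸ hx))
      set T := A.filter (fun z => y < z) with hT
      have hTne : T.Nonempty := ⟨x, Finset.mem_filter.2 ⟨hx, hyxlt⟩⟩
      set a := T.min' hTne with ha_def
      have haT : a ∈ T := T.min'_mem hTne
      have haA : a ∈ A := (Finset.mem_filter.1 haT).1
      have hya : y < a := (Finset.mem_filter.1 haT).2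
      have ha1 : 1 ≤ (a : ℕ) := by
        have : (y : ℕ) < (a : ℕ) := hya
        omega
      have haN : (a : ℕ) - 1 < N := by
        have := a.2; omega
      set a' : Fin N := ⟨(a : ℕ) - 1, haN⟩ with ha'_def
      have hv : (a' : ℕ) + 1 = (a : ℕ) := by simp [ha'_def]; omega
      have ha'A : a' ∉ A := by
        intro hc
        by_cases hya' : y < a'
        · have : a ≤ a' := T.min'_le a' (Finset.mem_filter.2 ⟨hc, hya'⟩)
          have : (a : ℕ) ≤ (a' : ℕ) := this
          omega
        · have h1 : (a' : ℕ) ≤ (y : ℕ) := by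
            have := not_lt.1 hya'
            exact this
          have h2 : (y : ℕ) < (a : ℕ) := hya
          have : y = a' := Fin.ext (by omega)
          exact hyA (this ▸ hc)
      rw [qperm_swap A hA a a' haA ha'A hv, map_mul,
        Equiv.Perm.sign_swap (fun h => by have := congrArg Fin.val h; omega)]
      have hsum' : (∑ z ∈ insert a' (A.erase a), (z : ℕ)) = m - 1 := by
        rw [Finset.sum_insert (fun h => ha'A (Finset.mem_of_mem_erase h))]
        have h3 : (a : ℕ) + ∑ x ∈ A.erase a, (x : ℕ) = ∑ x ∈ A, (x : ℕ) :=
          Finset.add_sum_erase A (fun z : Fin N => (z : ℕ)) haA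
        have h4 : (a' : ℕ) = (a : ℕ) - 1 := rfl
        omega
      have hm1 : 1 ≤ m := by
        rw [← hm]
        calc 1 ≤ (a : ℕ) := ha1
        _ ≤ ∑ z ∈ A, (z : ℕ) := Finset.single_le_sum (fun z _ => Nat.zero_le _) haA
      rw [ih (m - 1) (by omega) _ _ hsum']
      rw [show m + ∑ i ∈ Finset.range d, i = (m - 1 + ∑ i ∈ Finset.range d, i) + 1 by omega,
        pow_succ]
      exact mul_comm _ _

lemma sign_qperm (A : Finset (Fin N)) (hA : A.card = d) :
    Equiv.Perm.sign (qperm A hA) =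
      (-1) ^ ((∑ x ∈ A, (x : ℕ)) + ∑ i ∈ Finset.range d, i) :=
  sign_qperm_aux _ A hA rfl

noncomputable def Aset (a : Fin d → Fin N) : Finset (Fin N) := Finset.image a Finset.univ

lemma mem_Aset {a : Fin d → Fin N} {x : Fin N} : x ∈ Aset a ↔ ∃ i, a i = x := by
  simp [Aset]

lemma card_Aset {a : Fin d → Fin N} (ha : Function.Injective a) : (Aset a).card = d := by
  rw [Aset, Finset.card_image_of_injective _ ha, Finset.card_univ, Fintype.card_fin]

noncomputable def cEmb (a : Fin d → Fin N) (ha : Function.Injective a) : Fin (N - d) ↪o Fin N :=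
  (cA (Aset a)).orderEmbOfFin (card_cA _ (card_Aset ha))

lemma cEmb_not_mem (a : Fin d → Fin N) (ha : Function.Injective a) (j : Fin (N - d)) :
    cEmb a ha j ∉ Aset a := mem_cA.1 ((cA (Aset a)).orderEmbOfFin_mem _ j)

noncomputable def eqAB (a : Fin d → Fin N) (ha : Function.Injective a)
    (τ : Equiv.Perm (Fin (N - d))) : (Fin d ⊕ Fin (N - d)) ≃ Fin N := by
  refine Equiv.ofBijective (Sum.elim a (⇑(cEmb a ha) ∘ ⇑τ)) ?_
  rw [Fintype.bijective_iff_injective_and_card]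
  constructor
  · rintro (i | i) (j | j) hij <;> simp only [Sum.elim_inl, Sum.elim_inr, Function.comp] at hij
    · exact congrArg _ (ha hij)
    · exact absurd (mem_Aset.2 ⟨i, hij⟩) (cEmb_not_mem a ha (τ j))
    · exact absurd (mem_Aset.2 ⟨j, hij.symm⟩) (cEmb_not_mem a ha (τ i))
    · exact congrArg _ (τ.injective ((cEmb a ha).injective hij))
  · simp [Nat.add_sub_cancel' (card_le _ (card_Aset ha))]

@[simp] lemma eqAB_inl (a : Fin d → Fin N) (ha : Function.Injective a)
    (τ : Equiv.Perm (Fin (N - d))) (i : Fin d) : eqAB a ha τ (Sum.inl i) = a i := rfl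

@[simp] lemma eqAB_inr (a : Fin d → Fin N) (ha : Function.Injective a)
    (τ : Equiv.Perm (Fin (N - d))) (j : Fin (N - d)) :
    eqAB a ha τ (Sum.inr j) = cEmb a ha (τ j) := rfl

noncomputable def buildPerm (a b : Fin d → Fin N) (ha : Function.Injective a)
    (hb : Function.Injective b) (τ : Equiv.Perm (Fin (N - d))) : Equiv.Perm (Fin N) :=
  (eqAB b hb 1).symm.trans (eqAB a ha τ)

lemma buildPerm_apply_b (a b : Fin d → Fin N) (ha : Function.Injective a)
    (hb : Function.Injective b) (τ : Equiv.Perm (Fin (N - d))) (i : Fin d) :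
    buildPerm a b ha hb τ (b i) = a i := by
  have h1 : (eqAB b hb 1).symm (b i) = Sum.inl i := by
    rw [Equiv.symm_apply_eq]; rfl
  simp only [buildPerm, Equiv.trans_apply, h1, eqAB_inl]

lemma buildPerm_apply_c (a b : Fin d → Fin N) (ha : Function.Injective a)
    (hb : Function.Injective b) (τ : Equiv.Perm (Fin (N - d))) (j : Fin (N - d)) :
    buildPerm a b ha hb τ (cEmb b hb j) = cEmb a ha (τ j) := by
  have h1 : (eqAB b hb 1).symm (cEmb b hb j) = Sum.inr j := by
    rw [Equiv.symm_apply_eq]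
    show cEmb b hb ((1 : Equiv.Perm (Fin (N - d))) j) = cEmb b hb j
    rfl
  simp only [buildPerm, Equiv.trans_apply, h1, eqAB_inr]

lemma comp_sort (a : Fin d → Fin N) (ha : Function.Injective a) :
    (fun i => a (Tuple.sort a i)) = ⇑((Aset a).orderEmbOfFin (card_Aset ha)) := by
  apply Finset.orderEmbOfFin_unique
  · intro i; exact mem_Aset.2 ⟨_, rfl⟩
  · exact (Tuple.monotone_sort a).strictMono_of_injective
      (ha.comp (Tuple.sort a).injective)

lemma buildPerm_decomp (a b : Fin d → Fin N) (ha : Function.Injective a)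
    (hb : Function.Injective b) (τ : Equiv.Perm (Fin (N - d))) :
    buildPerm a b ha hb τ =
      ((rEquiv (Aset b) (card_Aset hb)).permCongr
          (Equiv.sumCongr ((Tuple.sort b).trans (Tuple.sort a).symm) τ)).trans
        ((rEquiv (Aset b) (card_Aset hb)).symm.trans (rEquiv (Aset a) (card_Aset ha))) := by
  have hca := comp_sort a ha
  have hcb := comp_sort b hb
  apply Equiv.ext
  intro x
  obtain ⟨s, rfl⟩ := (rEquiv (Aset b) (card_Aset hb)).surjective x
  rw [Equiv.trans_apply, Equiv.permCongr_apply, Equiv.symm_apply_apply,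
    Equiv.trans_apply, Equiv.symm_apply_apply]
  cases s with
  | inl i =>
    rw [Equiv.sumCongr_apply, rEquiv_inl]
    show (buildPerm a b ha hb τ) ((Aset b).orderEmbOfFin (card_Aset hb) i) =
      rEquiv (Aset a) (card_Aset ha) (Sum.map _ _ (Sum.inl i))
    rw [← congrFun hcb i, buildPerm_apply_b]
    show a (Tuple.sort b i) =
      (Aset a).orderEmbOfFin (card_Aset ha) ((Tuple.sort a).symm ((Tuple.sort b) i))
    rw [← congrFun hca ((Tuple.sort a).symm ((Tuple.sort b) i)), Equiv.apply_symm_apply]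
  | inr j =>
    rw [Equiv.sumCongr_apply, rEquiv_inr]
    show (buildPerm a b ha hb τ) (cEmb b hb j) =
      rEquiv (Aset a) (card_Aset ha) (Sum.map _ _ (Sum.inr j))
    rw [buildPerm_apply_c]
    rfl

lemma sign_buildPerm (a b : Fin d → Fin N) (ha : Function.Injective a)
    (hb : Function.Injective b) (τ : Equiv.Perm (Fin (N - d))) :
    Equiv.Perm.sign (buildPerm a b ha hb τ) =
      (-1) ^ ((∑ x ∈ Aset a, (x : ℕ)) + ∑ x ∈ Aset b, (x : ℕ)) *
        Equiv.Perm.sign (Tuple.sort a * (Tuple.sort b)⁻¹) * Equiv.Perm.sign τ := by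
  rw [buildPerm_decomp a b ha hb τ]
  rw [show ∀ p q : Equiv.Perm (Fin N), p.trans q = q * p from fun p q => rfl, map_mul]
  have h1 : Equiv.Perm.sign ((rEquiv (Aset b) (card_Aset hb)).permCongr
      (Equiv.sumCongr ((Tuple.sort b).trans (Tuple.sort a).symm) τ)) =
      Equiv.Perm.sign (Tuple.sort a * (Tuple.sort b)⁻¹) * Equiv.Perm.sign τ := by
    rw [Equiv.Perm.sign_permCongr, Equiv.Perm.sign_sumCongr]
    congr 1
    rw [show (Tuple.sort b).trans (Tuple.sort a).symm = (Tuple.sort a)⁻¹ * Tuple.sort b from rfl]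
    rw [map_mul, map_mul, Equiv.Perm.sign_inv, Equiv.Perm.sign_inv, mul_comm]
  have h2 : (rEquiv (Aset b) (card_Aset hb)).symm.trans (rEquiv (Aset a) (card_Aset ha)) =
      qperm (Aset a) (card_Aset ha) * (qperm (Aset b) (card_Aset hb))⁻¹ := by
    apply Equiv.ext
    intro x
    simp only [qperm, Equiv.Perm.mul_apply, Equiv.trans_apply]
    rw [show (((fsc (card_le _ (card_Aset hb))).symm.trans
        (rEquiv (Aset b) (card_Aset hb)))⁻¹ : Equiv.Perm (Fin N)) =
      ((fsc (card_le _ (card_Aset hb))).symm.trans (rEquiv (Aset b) (card_Aset hb))).symm from rfl]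
    simp
  rw [h1, h2, map_mul, Equiv.Perm.sign_inv, sign_qperm, sign_qperm]
  rw [← pow_add]
  have heq : (∑ x ∈ Aset a, (x : ℕ)) + ∑ i ∈ Finset.range d, i +
      ((∑ x ∈ Aset b, (x : ℕ)) + ∑ i ∈ Finset.range d, i) =
      ((∑ x ∈ Aset a, (x : ℕ)) + ∑ x ∈ Aset b, (x : ℕ)) + 2 * ∑ i ∈ Finset.range d, i := by
    ring
  rw [heq, pow_add, Even.neg_one_pow (even_two_mul (∑ i ∈ Finset.range d, i)), mul_one]
  exact (mul_assoc _ _ _).symm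

lemma prod_split (b : Fin d → Fin N) (hb : Function.Injective b) (f : Fin N → ℂ) :
    ∏ x : Fin N, f x = (∏ i, f (b i)) * ∏ j, f (cEmb b hb j) := by
  rw [← Equiv.prod_comp (eqAB b hb 1) f, Fintype.prod_sum_type]
  rfl

noncomputable def Dset (k l : ℕ) (σ : Equiv.Perm (Fin N)) : Finset (Fin N) :=
  Finset.univ.filter (fun x => (x : ℕ) < l ∨ ((σ x : ℕ) < k))

lemma mem_Dset {k l : ℕ} {σ : Equiv.Perm (Fin N)} {x : Fin N} :
    x ∈ Dset k l σ ↔ (x : ℕ) < l ∨ ((σ x : ℕ) < k) := by simp [Dset]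

lemma Dset_buildPerm (k l : ℕ) (a b : Fin d → Fin N) (ha : Function.Injective a)
    (hb : Function.Injective b) (τ : Equiv.Perm (Fin (N - d)))
    (hcova : ∀ x : Fin N, (x : ℕ) < k → ∃ i, a i = x)
    (hcovb : ∀ x : Fin N, (x : ℕ) < l → ∃ i, b i = x)
    (hcond : ∀ i, (a i : ℕ) < k ∨ (b i : ℕ) < l) :
    Dset k l (buildPerm a b ha hb τ) = Aset b := by
  ext x
  rw [mem_Dset, mem_Aset]
  constructor
  · rintro (hx | hx)
    · exact hcovb x hx
    · obtain ⟨i, hi⟩ := hcova _ hx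
      refine ⟨i, (buildPerm a b ha hb τ).injective ?_⟩
      rw [buildPerm_apply_b, hi]
  · rintro ⟨i, rfl⟩
    rcases hcond i with h | h
    · right
      rwa [buildPerm_apply_b]
    · left
      exact h

lemma card_filter_lt (l : ℕ) (hl : l ≤ N) :
    (Finset.univ.filter (fun x : Fin N => (x : ℕ) < l)).card = l := by
  have himg : (Finset.univ.filter (fun x : Fin N => (x : ℕ) < l)).image Fin.val =
      Finset.range l := by
    ext m
    simp only [Finset.mem_image, Finset.mem_filter, Finset.mem_univ, true_and, Finset.mem_range]
    constructor
    · rintro ⟨y, hy, rfl⟩; exact hy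
    · intro hm; exact ⟨⟨m, lt_of_lt_of_le hm hl⟩, hm, rfl⟩
  calc (Finset.univ.filter (fun x : Fin N => (x : ℕ) < l)).card
      = ((Finset.univ.filter (fun x : Fin N => (x : ℕ) < l)).image Fin.val).card :=
        (Finset.card_image_of_injective _ Fin.val_injective).symm
    _ = l := by rw [himg, Finset.card_range]

lemma filter_perm_eq (p : Fin N → Prop) (σ : Equiv.Perm (Fin N)) :
    Finset.univ.filter (fun x => p (σ x)) = (Finset.univ.filter p).image ⇑σ⁻¹ := by
  ext x
  simp only [Finset.mem_filter, Finset.mem_univ, true_and, Finset.mem_image]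
  constructor
  · intro hx; exact ⟨σ x, hx, σ.symm_apply_apply x⟩
  · rintro ⟨y, hy, rfl⟩
    simpa using hy

lemma Dcard_mem (k l : ℕ) (hk : k ≤ N) (hl : l ≤ N) (σ : Equiv.Perm (Fin N)) :
    (Dset k l σ).card ∈ Finset.Icc (max k l) (min (k + l) N) := by
  have hsplit : Dset k l σ =
      (Finset.univ.filter (fun x : Fin N => (x : ℕ) < l)) ∪
        (Finset.univ.filter (fun x : Fin N => ((σ x : ℕ) < k))) := by
    rw [Dset, Finset.filter_or]
  have hck : (Finset.univ.filter (fun x : Fin N => ((σ x : ℕ) < k))).card = k := by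
    have hbij : (Finset.univ.filter (fun x : Fin N => ((σ x : ℕ) < k))).card =
        (Finset.univ.filter (fun x : Fin N => (x : ℕ) < k)).card := by
      apply Finset.card_bij (fun x _ => σ x)
      · intro x hx
        simp only [Finset.mem_filter, Finset.mem_univ, true_and] at hx ⊢
        exact hx
      · intro x _ y _ hxy
        exact σ.injective hxy
      · intro y hy
        refine ⟨σ⁻¹ y, ?_, by simp⟩
        simp only [Finset.mem_filter, Finset.mem_univ, true_and] at hy ⊢
        simpa using hy
    rw [hbij, card_filter_lt k hk]
  rw [Finset.mem_Icc]
  refine ⟨max_le ?_ ?_, le_min ?_ ?_⟩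
  · calc k = (Finset.univ.filter (fun x : Fin N => ((σ x : ℕ) < k))).card := hck.symm
      _ ≤ (Dset k l σ).card := Finset.card_le_card
        (fun x hx => by rw [hsplit]; exact Finset.mem_union_right _ hx)
  · calc l = (Finset.univ.filter (fun x : Fin N => (x : ℕ) < l)).card := (card_filter_lt l hl).symm
      _ ≤ (Dset k l σ).card := Finset.card_le_card
        (fun x hx => by rw [hsplit]; exact Finset.mem_union_left _ hx)
  · rw [hsplit]
    calc ((Finset.univ.filter (fun x : Fin N => (x : ℕ) < l)) ∪
        (Finset.univ.filter (fun x : Fin N => ((σ x : ℕ) < k)))).card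
        ≤ _ + _ := Finset.card_union_le _ _
      _ = k + l := by rw [card_filter_lt l hl, hck]; exact Nat.add_comm l k
  · calc (Dset k l σ).card ≤ Finset.univ.card := Finset.card_le_univ _
      _ = N := by simp

lemma exists_orderEmbOfFin_eq {s : Finset (Fin N)} (hs : s.card = d) {x : Fin N} (hx : x ∈ s) :
    ∃ i, s.orderEmbOfFin hs i = x := by
  have hr := Finset.range_orderEmbOfFin s hs
  have hx' : x ∈ Set.range ⇑(s.orderEmbOfFin hs) := by
    rw [hr]; exact hx
  exact hx'

section Psi

variable (k l : ℕ) (σ : Equiv.Perm (Fin N)) (hd : (Dset k l σ).card = d) (g : Equiv.Perm (Fin d))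

noncomputable def bmap : Fin d → Fin N := fun i => (Dset k l σ).orderEmbOfFin hd (g i)

lemma bmap_inj : Function.Injective (bmap k l σ hd g) :=
  fun _ _ h => g.injective (((Dset k l σ).orderEmbOfFin hd).injective h)

lemma Aset_bmap : Aset (bmap k l σ hd g) = Dset k l σ := by
  ext x
  rw [mem_Aset]
  constructor
  · rintro ⟨i, rfl⟩
    exact (Dset k l σ).orderEmbOfFin_mem hd (g i)
  · intro hx
    obtain ⟨i, hi⟩ := exists_orderEmbOfFin_eq hd hx
    exact ⟨g⁻¹ i, by simp [bmap, hi]⟩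

noncomputable def amap : Fin d → Fin N := fun i => σ (bmap k l σ hd g i)

lemma amap_inj : Function.Injective (amap k l σ hd g) :=
  fun _ _ h => bmap_inj k l σ hd g (σ.injective h)

lemma Aset_amap : Aset (amap k l σ hd g) = (Dset k l σ).image ⇑σ := by
  ext x
  rw [mem_Aset]
  simp only [Finset.mem_image]
  constructor
  · rintro ⟨i, rfl⟩
    exact ⟨bmap k l σ hd g i, by rw [← Aset_bmap k l σ hd g]; exact mem_Aset.2 ⟨i, rfl⟩, rfl⟩
  · rintro ⟨y, hy, rfl⟩
    obtain ⟨i, hi⟩ := mem_Aset.1 (by rw [Aset_bmap k l σ hd g]; exact hy : y ∈ Aset (bmap k l σ hd g))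
    exact ⟨i, by rw [amap, hi]⟩

lemma cov_b : ∀ x : Fin N, (x : ℕ) < l → ∃ i, bmap k l σ hd g i = x := by
  intro x hx
  have : x ∈ Aset (bmap k l σ hd g) := by
    rw [Aset_bmap]; exact mem_Dset.2 (Or.inl hx)
  exact mem_Aset.1 this

lemma cov_a : ∀ x : Fin N, (x : ℕ) < k → ∃ i, amap k l σ hd g i = x := by
  intro x hx
  have h1 : σ⁻¹ x ∈ Dset k l σ := mem_Dset.2 (Or.inr (by simpa using hx))
  obtain ⟨i, hi⟩ := mem_Aset.1 (by rw [Aset_bmap k l σ hd g]; exact h1 :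
    σ⁻¹ x ∈ Aset (bmap k l σ hd g))
  exact ⟨i, by rw [amap, hi]; simp⟩

lemma cond_ab : ∀ i, (amap k l σ hd g i : ℕ) < k ∨ (bmap k l σ hd g i : ℕ) < l := by
  intro i
  have : bmap k l σ hd g i ∈ Dset k l σ := by
    rw [← Aset_bmap k l σ hd g]; exact mem_Aset.2 ⟨i, rfl⟩
  exact (mem_Dset.1 this).symm.imp (fun h => h) (fun h => h)

lemma smem : ∀ j, σ (cEmb (bmap k l σ hd g) (bmap_inj k l σ hd g) j) ∈
    cA (Aset (amap k l σ hd g)) := by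
  intro j
  rw [mem_cA, Aset_amap]
  intro hc
  obtain ⟨y, hy, hyx⟩ := Finset.mem_image.1 hc
  have : y = cEmb (bmap k l σ hd g) (bmap_inj k l σ hd g) j := σ.injective hyx
  rw [this] at hy
  have hnot := cEmb_not_mem (bmap k l σ hd g) (bmap_inj k l σ hd g) j
  rw [Aset_bmap] at hnot
  exact hnot hy

noncomputable def tmap : Equiv.Perm (Fin (N - d)) := by
  refine Equiv.ofBijective (fun j =>
    ((cA (Aset (amap k l σ hd g))).orderIsoOfFin
        (card_cA _ (card_Aset (amap_inj k l σ hd g)))).symm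
      ⟨σ (cEmb (bmap k l σ hd g) (bmap_inj k l σ hd g) j), smem k l σ hd g j⟩) ?_
  rw [← Finite.injective_iff_bijective]
  intro j1 j2 h
  have h2 := congrArg (fun z => (((cA (Aset (amap k l σ hd g))).orderIsoOfFin
    (card_cA _ (card_Aset (amap_inj k l σ hd g)))) z : Fin N)) h
  simp only [OrderIso.apply_symm_apply] at h2
  exact (cEmb _ _).injective (σ.injective h2)

lemma tmap_spec (j : Fin (N - d)) :
    cEmb (amap k l σ hd g) (amap_inj k l σ hd g) (tmap k l σ hd g j) =
      σ (cEmb (bmap k l σ hd g) (bmap_inj k l σ hd g) j) := by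
  show ((cA (Aset (amap k l σ hd g))).orderEmbOfFin
    (card_cA _ (card_Aset (amap_inj k l σ hd g)))) (tmap k l σ hd g j) = _
  rw [← Finset.coe_orderIsoOfFin_apply]
  show (((cA (Aset (amap k l σ hd g))).orderIsoOfFin (card_cA _ (card_Aset (amap_inj k l σ hd g))))
    (((cA (Aset (amap k l σ hd g))).orderIsoOfFin (card_cA _ (card_Aset (amap_inj k l σ hd g)))).symm ⟨_, smem k l σ hd g j⟩) : Fin N) = _
  rw [OrderIso.apply_symm_apply]

lemma buildPerm_of_sigma :
    buildPerm (amap k l σ hd g) (bmap k l σ hd g) (amap_inj k l σ hd g) (bmap_inj k l σ hd g)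
      (tmap k l σ hd g) = σ := by
  apply Equiv.ext
  intro x
  by_cases hx : x ∈ Aset (bmap k l σ hd g)
  · obtain ⟨i, rfl⟩ := mem_Aset.1 hx
    rw [buildPerm_apply_b]
    rfl
  · have hx' : x ∈ cA (Aset (bmap k l σ hd g)) := mem_cA.2 hx
    obtain ⟨j, rfl⟩ := exists_orderEmbOfFin_eq (card_cA _ (card_Aset (bmap_inj k l σ hd g))) hx'
    show buildPerm _ _ _ _ _ (cEmb (bmap k l σ hd g) (bmap_inj k l σ hd g) j) = _
    rw [buildPerm_apply_c, tmap_spec]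
    rfl

lemma sort_bmap : Tuple.sort (bmap k l σ hd g) = g⁻¹ := by
  symm
  rw [Tuple.eq_sort_iff]
  constructor
  · intro i j hij
    show bmap k l σ hd g (g⁻¹ i) ≤ bmap k l σ hd g (g⁻¹ j)
    simp only [bmap, Equiv.Perm.coe_inv, Equiv.apply_symm_apply]
    exact ((Dset k l σ).orderEmbOfFin hd).monotone hij
  · intro i j hij heq
    exfalso
    simp only [bmap, Equiv.Perm.coe_inv, Equiv.apply_symm_apply] at heq
    exact absurd (((Dset k l σ).orderEmbOfFin hd).injective heq) (ne_of_lt hij)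

end Psi

lemma sum_val_add_one (a : Fin d → Fin N) (ha : Function.Injective a) :
    ∑ i, ((a i : ℕ) + 1) = (∑ x ∈ Aset a, (x : ℕ)) + d := by
  rw [Finset.sum_add_distrib, Finset.sum_const, Finset.card_univ, Fintype.card_fin,
    smul_eq_mul, mul_one]
  congr 1
  rw [Aset, Finset.sum_image (fun x _ y _ hxy => ha hxy)]

lemma prod_buildPerm (M : Matrix (Fin N) (Fin N) ℂ) (a b : Fin d → Fin N)
    (ha : Function.Injective a) (hb : Function.Injective b) (τ : Equiv.Perm (Fin (N - d))) :
    ∏ x : Fin N, M (buildPerm a b ha hb τ x) x =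
      (∏ i, M (a i) (b i)) * ∏ j, M (cEmb a ha (τ j)) (cEmb b hb j) := by
  rw [prod_split b hb (fun x => M (buildPerm a b ha hb τ x) x)]
  congr 1
  · exact Finset.prod_congr rfl (fun i _ => by rw [buildPerm_apply_b])
  · exact Finset.prod_congr rfl (fun j _ => by rw [buildPerm_apply_c])

lemma orderEmbOfFin_congr_apply {s t : Finset (Fin N)} (h : s = t) (hs : s.card = d)
    (ht : t.card = d) (i : Fin d) : s.orderEmbOfFin hs i = t.orderEmbOfFin ht i := by
  subst h; rfl

lemma cEmb_congr {a a' : Fin d → Fin N} (h : a = a') (ha : Function.Injective a)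
    (ha' : Function.Injective a') : ⇑(cEmb a ha) = ⇑(cEmb a' ha') := by
  subst h; rfl

lemma key_lemma (N d k l : ℕ) (M : Matrix (Fin N) (Fin N) ℂ) :
    (∑ ab : (Fin d → Fin N) × (Fin d → Fin N),
        if h : Function.Injective ab.1 ∧ Function.Injective ab.2 ∧
                (∀ i : Fin N, (i : ℕ) < k → ∃ j, ab.1 j = i) ∧
                (∀ i : Fin N, (i : ℕ) < l → ∃ j, ab.2 j = i) ∧
                (∀ i : Fin d, (ab.1 i : ℕ) < k ∨ (ab.2 i : ℕ) < l) then
          (-1 : ℂ) ^ ((∑ i, ((ab.1 i : ℕ) + 1)) + ∑ i, ((ab.2 i : ℕ) + 1)) *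
              ((Equiv.Perm.sign (Tuple.sort ab.1 * (Tuple.sort ab.2)⁻¹) : ℤ) : ℂ) *
              (∏ i, M (ab.1 i) (ab.2 i)) *
              Matrix.det (M.submatrix
                (fun i : Fin (N - d) =>
                  (Finset.univ \ Finset.image ab.1 Finset.univ).orderEmbOfFin
                    (show (Finset.univ \ Finset.image ab.1 Finset.univ).card = N - d by
                      rw [Finset.card_sdiff_of_subset (Finset.subset_univ _), Finset.card_univ,
                        Fintype.card_fin,
                        Finset.card_image_of_injective _ h.1, Finset.card_univ,
                        Fintype.card_fin]) i)
                (fun i : Fin (N - d) =>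
                  (Finset.univ \ Finset.image ab.2 Finset.univ).orderEmbOfFin
                    (show (Finset.univ \ Finset.image ab.2 Finset.univ).card = N - d by
                      rw [Finset.card_sdiff_of_subset (Finset.subset_univ _), Finset.card_univ,
                        Fintype.card_fin,
                        Finset.card_image_of_injective _ h.2.1, Finset.card_univ,
                        Fintype.card_fin]) i))
        else 0) =
      (d.factorial : ℂ) *
        ∑ σ ∈ Finset.univ.filter (fun σ : Equiv.Perm (Fin N) => (Dset k l σ).card = d),
          ((Equiv.Perm.sign σ : ℤ) : ℂ) * ∏ x, M (σ x) x := by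
  classical
  have step1 : (∑ ab : (Fin d → Fin N) × (Fin d → Fin N),
        if h : Function.Injective ab.1 ∧ Function.Injective ab.2 ∧
                (∀ i : Fin N, (i : ℕ) < k → ∃ j, ab.1 j = i) ∧
                (∀ i : Fin N, (i : ℕ) < l → ∃ j, ab.2 j = i) ∧
                (∀ i : Fin d, (ab.1 i : ℕ) < k ∨ (ab.2 i : ℕ) < l) then
          (-1 : ℂ) ^ ((∑ i, ((ab.1 i : ℕ) + 1)) + ∑ i, ((ab.2 i : ℕ) + 1)) *
              ((Equiv.Perm.sign (Tuple.sort ab.1 * (Tuple.sort ab.2)⁻¹) : ℤ) : ℂ) *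
              (∏ i, M (ab.1 i) (ab.2 i)) *
              Matrix.det (M.submatrix
                (fun i : Fin (N - d) =>
                  (Finset.univ \ Finset.image ab.1 Finset.univ).orderEmbOfFin
                    (show (Finset.univ \ Finset.image ab.1 Finset.univ).card = N - d by
                      rw [Finset.card_sdiff_of_subset (Finset.subset_univ _), Finset.card_univ,
                        Fintype.card_fin,
                        Finset.card_image_of_injective _ h.1, Finset.card_univ,
                        Fintype.card_fin]) i)
                (fun i : Fin (N - d) =>
                  (Finset.univ \ Finset.image ab.2 Finset.univ).orderEmbOfFin
                    (show (Finset.univ \ Finset.image ab.2 Finset.univ).card = N - d by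
                      rw [Finset.card_sdiff_of_subset (Finset.subset_univ _), Finset.card_univ,
                        Fintype.card_fin,
                        Finset.card_image_of_injective _ h.2.1, Finset.card_univ,
                        Fintype.card_fin]) i))
        else 0) =
      ∑ ab ∈ Finset.univ.filter (fun ab : (Fin d → Fin N) × (Fin d → Fin N) => Function.Injective ab.1 ∧ Function.Injective ab.2 ∧
                (∀ i : Fin N, (i : ℕ) < k → ∃ j, ab.1 j = i) ∧
                (∀ i : Fin N, (i : ℕ) < l → ∃ j, ab.2 j = i) ∧
                (∀ i : Fin d, (ab.1 i : ℕ) < k ∨ (ab.2 i : ℕ) < l)),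
        (if h : Function.Injective ab.1 ∧ Function.Injective ab.2 ∧
                (∀ i : Fin N, (i : ℕ) < k → ∃ j, ab.1 j = i) ∧
                (∀ i : Fin N, (i : ℕ) < l → ∃ j, ab.2 j = i) ∧
                (∀ i : Fin d, (ab.1 i : ℕ) < k ∨ (ab.2 i : ℕ) < l) then
          (-1 : ℂ) ^ ((∑ i, ((ab.1 i : ℕ) + 1)) + ∑ i, ((ab.2 i : ℕ) + 1)) *
              ((Equiv.Perm.sign (Tuple.sort ab.1 * (Tuple.sort ab.2)⁻¹) : ℤ) : ℂ) *
              (∏ i, M (ab.1 i) (ab.2 i)) *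
              Matrix.det (M.submatrix
                (fun i : Fin (N - d) =>
                  (Finset.univ \ Finset.image ab.1 Finset.univ).orderEmbOfFin
                    (show (Finset.univ \ Finset.image ab.1 Finset.univ).card = N - d by
                      rw [Finset.card_sdiff_of_subset (Finset.subset_univ _), Finset.card_univ,
                        Fintype.card_fin,
                        Finset.card_image_of_injective _ h.1, Finset.card_univ,
                        Fintype.card_fin]) i)
                (fun i : Fin (N - d) =>
                  (Finset.univ \ Finset.image ab.2 Finset.univ).orderEmbOfFin
                    (show (Finset.univ \ Finset.image ab.2 Finset.univ).card = N - d by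
                      rw [Finset.card_sdiff_of_subset (Finset.subset_univ _), Finset.card_univ,
                        Fintype.card_fin,
                        Finset.card_image_of_injective _ h.2.1, Finset.card_univ,
                        Fintype.card_fin]) i))
        else 0) := by
    refine (Finset.sum_filter_of_ne (fun ab _ hne => ?_)).symm
    by_contra hc
    exact hne (dif_neg hc)
  have step2 : (∑ ab ∈ Finset.univ.filter
        (fun ab : (Fin d → Fin N) × (Fin d → Fin N) => Function.Injective ab.1 ∧ Function.Injective ab.2 ∧
                (∀ i : Fin N, (i : ℕ) < k → ∃ j, ab.1 j = i) ∧
                (∀ i : Fin N, (i : ℕ) < l → ∃ j, ab.2 j = i) ∧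
                (∀ i : Fin d, (ab.1 i : ℕ) < k ∨ (ab.2 i : ℕ) < l)),
        (if h : Function.Injective ab.1 ∧ Function.Injective ab.2 ∧
                (∀ i : Fin N, (i : ℕ) < k → ∃ j, ab.1 j = i) ∧
                (∀ i : Fin N, (i : ℕ) < l → ∃ j, ab.2 j = i) ∧
                (∀ i : Fin d, (ab.1 i : ℕ) < k ∨ (ab.2 i : ℕ) < l) then
          (-1 : ℂ) ^ ((∑ i, ((ab.1 i : ℕ) + 1)) + ∑ i, ((ab.2 i : ℕ) + 1)) *
              ((Equiv.Perm.sign (Tuple.sort ab.1 * (Tuple.sort ab.2)⁻¹) : ℤ) : ℂ) *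
              (∏ i, M (ab.1 i) (ab.2 i)) *
              Matrix.det (M.submatrix
                (fun i : Fin (N - d) =>
                  (Finset.univ \ Finset.image ab.1 Finset.univ).orderEmbOfFin
                    (show (Finset.univ \ Finset.image ab.1 Finset.univ).card = N - d by
                      rw [Finset.card_sdiff_of_subset (Finset.subset_univ _), Finset.card_univ,
                        Fintype.card_fin,
                        Finset.card_image_of_injective _ h.1, Finset.card_univ,
                        Fintype.card_fin]) i)
                (fun i : Fin (N - d) =>
                  (Finset.univ \ Finset.image ab.2 Finset.univ).orderEmbOfFin
                    (show (Finset.univ \ Finset.image ab.2 Finset.univ).card = N - d by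
                      rw [Finset.card_sdiff_of_subset (Finset.subset_univ _), Finset.card_univ,
                        Fintype.card_fin,
                        Finset.card_image_of_injective _ h.2.1, Finset.card_univ,
                        Fintype.card_fin]) i))
        else 0)) =
      ∑ p ∈ (Finset.univ.filter
          (fun ab : (Fin d → Fin N) × (Fin d → Fin N) => Function.Injective ab.1 ∧ Function.Injective ab.2 ∧
                (∀ i : Fin N, (i : ℕ) < k → ∃ j, ab.1 j = i) ∧
                (∀ i : Fin N, (i : ℕ) < l → ∃ j, ab.2 j = i) ∧
                (∀ i : Fin d, (ab.1 i : ℕ) < k ∨ (ab.2 i : ℕ) < l))) ×ˢ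
          (Finset.univ : Finset (Equiv.Perm (Fin (N - d)))),
        (if h : Function.Injective p.1.1 ∧ Function.Injective p.1.2 ∧
                (∀ i : Fin N, (i : ℕ) < k → ∃ j, p.1.1 j = i) ∧
                (∀ i : Fin N, (i : ℕ) < l → ∃ j, p.1.2 j = i) ∧
                (∀ i : Fin d, (p.1.1 i : ℕ) < k ∨ (p.1.2 i : ℕ) < l) then
          (-1 : ℂ) ^ ((∑ i, ((p.1.1 i : ℕ) + 1)) + ∑ i, ((p.1.2 i : ℕ) + 1)) *
              ((Equiv.Perm.sign (Tuple.sort p.1.1 * (Tuple.sort p.1.2)⁻¹) : ℤ) : ℂ) *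
              (∏ i, M (p.1.1 i) (p.1.2 i)) *
              (((Equiv.Perm.sign p.2 : ℤ) : ℂ) *
                ∏ j, M (cEmb p.1.1 h.1 (p.2 j)) (cEmb p.1.2 h.2.1 j))
        else 0) := by
    rw [Finset.sum_product]
    refine Finset.sum_congr rfl (fun ab hab => ?_)
    have hP := (Finset.mem_filter.1 hab).2
    rw [dif_pos hP]
    have hrhs : ∀ τ : Equiv.Perm (Fin (N - d)),
        (fun p : ((Fin d → Fin N) × (Fin d → Fin N)) × Equiv.Perm (Fin (N - d)) =>
          (if h : Function.Injective p.1.1 ∧ Function.Injective p.1.2 ∧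
                (∀ i : Fin N, (i : ℕ) < k → ∃ j, p.1.1 j = i) ∧
                (∀ i : Fin N, (i : ℕ) < l → ∃ j, p.1.2 j = i) ∧
                (∀ i : Fin d, (p.1.1 i : ℕ) < k ∨ (p.1.2 i : ℕ) < l) then
            (-1 : ℂ) ^ ((∑ i, ((p.1.1 i : ℕ) + 1)) + ∑ i, ((p.1.2 i : ℕ) + 1)) *
              ((Equiv.Perm.sign (Tuple.sort p.1.1 * (Tuple.sort p.1.2)⁻¹) : ℤ) : ℂ) *
              (∏ i, M (p.1.1 i) (p.1.2 i)) *
              (((Equiv.Perm.sign p.2 : ℤ) : ℂ) *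
                ∏ j, M (cEmb p.1.1 h.1 (p.2 j)) (cEmb p.1.2 h.2.1 j))
          else 0)) (ab, τ) =
        (-1 : ℂ) ^ ((∑ i, ((ab.1 i : ℕ) + 1)) + ∑ i, ((ab.2 i : ℕ) + 1)) *
              ((Equiv.Perm.sign (Tuple.sort ab.1 * (Tuple.sort ab.2)⁻¹) : ℤ) : ℂ) *
              (∏ i, M (ab.1 i) (ab.2 i)) *
              (((Equiv.Perm.sign τ : ℤ) : ℂ) *
                ∏ j, M (cEmb ab.1 hP.1 (τ j)) (cEmb ab.2 hP.2.1 j)) := by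
      intro τ
      exact dif_pos hP
    rw [Finset.sum_congr rfl (fun τ _ => hrhs τ)]
    rw [Matrix.det_apply', Finset.mul_sum]
    refine Finset.sum_congr rfl (fun τ _ => ?_)
    rfl
  rw [step1, step2]
  have hfP : ∀ p ∈ (Finset.univ.filter
      (fun ab : (Fin d → Fin N) × (Fin d → Fin N) => Function.Injective ab.1 ∧ Function.Injective ab.2 ∧
                (∀ i : Fin N, (i : ℕ) < k → ∃ j, ab.1 j = i) ∧
                (∀ i : Fin N, (i : ℕ) < l → ∃ j, ab.2 j = i) ∧
                (∀ i : Fin d, (ab.1 i : ℕ) < k ∨ (ab.2 i : ℕ) < l))) ×ˢ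
      (Finset.univ : Finset (Equiv.Perm (Fin (N - d)))),
      (fun ab : (Fin d → Fin N) × (Fin d → Fin N) => Function.Injective ab.1 ∧ Function.Injective ab.2 ∧
                (∀ i : Fin N, (i : ℕ) < k → ∃ j, ab.1 j = i) ∧
                (∀ i : Fin N, (i : ℕ) < l → ∃ j, ab.2 j = i) ∧
                (∀ i : Fin d, (ab.1 i : ℕ) < k ∨ (ab.2 i : ℕ) < l)) p.1 :=
    fun p hp => (Finset.mem_filter.1 (Finset.mem_product.1 hp).1).2
  have hfQ : ∀ q ∈ (Finset.univ.filter
      (fun σ : Equiv.Perm (Fin N) => (Dset k l σ).card = d)) ×ˢ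
      (Finset.univ : Finset (Equiv.Perm (Fin d))),
      (Dset k l q.1).card = d :=
    fun q hq => (Finset.mem_filter.1 (Finset.mem_product.1 hq).1).2
  have step3 : (∑ p ∈ (Finset.univ.filter
          (fun ab : (Fin d → Fin N) × (Fin d → Fin N) => Function.Injective ab.1 ∧ Function.Injective ab.2 ∧
                (∀ i : Fin N, (i : ℕ) < k → ∃ j, ab.1 j = i) ∧
                (∀ i : Fin N, (i : ℕ) < l → ∃ j, ab.2 j = i) ∧
                (∀ i : Fin d, (ab.1 i : ℕ) < k ∨ (ab.2 i : ℕ) < l))) ×ˢ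
          (Finset.univ : Finset (Equiv.Perm (Fin (N - d)))),
        (if h : Function.Injective p.1.1 ∧ Function.Injective p.1.2 ∧
                (∀ i : Fin N, (i : ℕ) < k → ∃ j, p.1.1 j = i) ∧
                (∀ i : Fin N, (i : ℕ) < l → ∃ j, p.1.2 j = i) ∧
                (∀ i : Fin d, (p.1.1 i : ℕ) < k ∨ (p.1.2 i : ℕ) < l) then
          (-1 : ℂ) ^ ((∑ i, ((p.1.1 i : ℕ) + 1)) + ∑ i, ((p.1.2 i : ℕ) + 1)) *
              ((Equiv.Perm.sign (Tuple.sort p.1.1 * (Tuple.sort p.1.2)⁻¹) : ℤ) : ℂ) *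
              (∏ i, M (p.1.1 i) (p.1.2 i)) *
              (((Equiv.Perm.sign p.2 : ℤ) : ℂ) *
                ∏ j, M (cEmb p.1.1 h.1 (p.2 j)) (cEmb p.1.2 h.2.1 j))
        else 0)) =
      ∑ q ∈ (Finset.univ.filter
          (fun σ : Equiv.Perm (Fin N) => (Dset k l σ).card = d)) ×ˢ
          (Finset.univ : Finset (Equiv.Perm (Fin d))),
        ((Equiv.Perm.sign q.1 : ℤ) : ℂ) * ∏ x, M (q.1 x) x := by
    refine Finset.sum_bij'
      (fun p hp => (buildPerm p.1.1 p.1.2 (hfP p hp).1 (hfP p hp).2.1 p.2,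
        (Tuple.sort p.1.2)⁻¹))
      (fun q hq => ((amap k l q.1 (hfQ q hq) q.2, bmap k l q.1 (hfQ q hq) q.2),
        tmap k l q.1 (hfQ q hq) q.2))
      ?_ ?_ ?_ ?_ ?_
    · -- hi
      intro p hp
      have hP := hfP p hp
      refine Finset.mem_product.2 ⟨Finset.mem_filter.2 ⟨Finset.mem_univ _, ?_⟩, Finset.mem_univ _⟩
      rw [Dset_buildPerm k l p.1.1 p.1.2 hP.1 hP.2.1 p.2 hP.2.2.1 hP.2.2.2.1 hP.2.2.2.2]
      exact card_Aset hP.2.1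
    · -- hj
      intro q hq
      have hQ := hfQ q hq
      refine Finset.mem_product.2 ⟨Finset.mem_filter.2 ⟨Finset.mem_univ _, ?_⟩, Finset.mem_univ _⟩
      exact ⟨amap_inj k l q.1 hQ q.2, bmap_inj k l q.1 hQ q.2, cov_a k l q.1 hQ q.2,
        cov_b k l q.1 hQ q.2, cond_ab k l q.1 hQ q.2⟩
    · -- left_inv
      intro p hp
      obtain ⟨⟨a, b⟩, τ⟩ := p
      have hP := hfP _ hp
      have ha : Function.Injective a := hP.1
      have hb : Function.Injective b := hP.2.1
      have hDset : Dset k l (buildPerm a b ha hb τ) = Aset b :=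
        Dset_buildPerm k l a b ha hb τ hP.2.2.1 hP.2.2.2.1 hP.2.2.2.2
      have hbe : ∀ pf : (Dset k l (buildPerm a b ha hb τ)).card = d,
          bmap k l (buildPerm a b ha hb τ) pf (Tuple.sort b)⁻¹ = b := by
        intro pf
        funext i
        show (Dset k l (buildPerm a b ha hb τ)).orderEmbOfFin pf ((Tuple.sort b)⁻¹ i) = b i
        rw [orderEmbOfFin_congr_apply hDset pf (card_Aset hb)]
        rw [← comp_sort b hb]
        simp
      have hae : ∀ pf : (Dset k l (buildPerm a b ha hb τ)).card = d,
          amap k l (buildPerm a b ha hb τ) pf (Tuple.sort b)⁻¹ = a := by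
        intro pf
        funext i
        show (buildPerm a b ha hb τ)
          (bmap k l (buildPerm a b ha hb τ) pf (Tuple.sort b)⁻¹ i) = a i
        rw [congrFun (hbe pf) i, buildPerm_apply_b]
      have hte : ∀ pf : (Dset k l (buildPerm a b ha hb τ)).card = d,
          tmap k l (buildPerm a b ha hb τ) pf (Tuple.sort b)⁻¹ = τ := by
        intro pf
        refine Equiv.ext (fun j => (cEmb a ha).injective ?_)
        have h1 := tmap_spec k l (buildPerm a b ha hb τ) pf (Tuple.sort b)⁻¹ j
        rw [cEmb_congr (hae pf) _ ha, cEmb_congr (hbe pf) _ hb] at h1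
        rw [h1, buildPerm_apply_c]
      exact Prod.ext (Prod.ext (hae _) (hbe _)) (hte _)
    · -- right_inv
      intro q hq
      obtain ⟨σ, g⟩ := q
      have hQ := hfQ _ hq
      refine Prod.ext ?_ ?_
      · exact buildPerm_of_sigma k l σ hQ g
      · show (Tuple.sort (bmap k l σ hQ g))⁻¹ = g
        rw [sort_bmap, inv_inv]
    · -- term equality
      intro p hp
      obtain ⟨⟨a, b⟩, τ⟩ := p
      have hP := hfP _ hp
      have ha : Function.Injective a := hP.1
      have hb : Function.Injective b := hP.2.1
      dsimp only
      rw [dif_pos hP]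
      have hsgn : ((Equiv.Perm.sign (buildPerm a b ha hb τ) : ℤ) : ℂ) =
          (-1 : ℂ) ^ ((∑ x ∈ Aset a, (x : ℕ)) + ∑ x ∈ Aset b, (x : ℕ)) *
            ((Equiv.Perm.sign (Tuple.sort a * (Tuple.sort b)⁻¹) : ℤ) : ℂ) *
            ((Equiv.Perm.sign τ : ℤ) : ℂ) := by
        rw [sign_buildPerm a b ha hb τ, Units.val_mul, Units.val_mul,
          Units.val_pow_eq_pow_val, Units.val_neg, Units.val_one, Int.cast_mul, Int.cast_mul,
          Int.cast_pow, Int.cast_neg, Int.cast_one]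
      rw [hsgn, prod_buildPerm M a b ha hb τ, sum_val_add_one a ha, sum_val_add_one b hb]
      rw [show ((∑ x ∈ Aset a, (x : ℕ)) + d) + ((∑ x ∈ Aset b, (x : ℕ)) + d) =
        ((∑ x ∈ Aset a, (x : ℕ)) + ∑ x ∈ Aset b, (x : ℕ)) + 2 * d by ring]
      rw [pow_add, pow_mul, neg_one_sq, one_pow, mul_one]
      ring
  rw [step3, Finset.sum_product]
  rw [Finset.mul_sum]
  refine Finset.sum_congr rfl (fun σ hσ => ?_)
  simp only [Finset.sum_const, Finset.card_univ, Fintype.card_perm, Fintype.card_fin,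
    nsmul_eq_mul]

end DetExp
/-- **Lemma 3.3.** Expansion of a determinant along the first `k` rows and the first
`l` columns:
`det M = Σ_{d=max(k,l)}^{min(k+l,N)} (1/d!) Σ_{(a,b)} ε(a,b) (∏ M_{a_i b_i}) det M(â;b̂)`,
where the inner sum is over pairs of `d`-tuples `a, b` of pairwise distinct indices
such that `{1,…,k} ⊆ {a_i}`, `{1,…,l} ⊆ {b_i}`, and for each `i` either `a_i ≤ k` or
`b_i ≤ l`; `M(â;b̂)` is the submatrix with rows `a` and columns `b` deleted (remaining
rows and columns in increasing order), and
`ε(a,b) = (−1)^{Σ a_i + Σ b_i} · sgn(α ∘ β⁻¹)` with `α, β` the sorting permutations of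
`a, b`. (Indices in the paper are 1-based; here `Fin N` is 0-based, so `a_i` 1-based
corresponds to `(a i : ℕ) + 1`, and `a_i ≤ k` to `(a i : ℕ) < k`.) -/
theorem det_expansion_rows_cols
    (N : ℕ) (hN : 1 ≤ N) (M : Matrix (Fin N) (Fin N) ℂ)
    (k l : ℕ) (hk : k ≤ N) (hl : l ≤ N) :
    M.det =
      ∑ d ∈ Finset.Icc (max k l) (min (k + l) N),
        ((d.factorial : ℂ))⁻¹ *
          ∑ ab : (Fin d → Fin N) × (Fin d → Fin N),
            if h : Function.Injective ab.1 ∧ Function.Injective ab.2 ∧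
                (∀ i : Fin N, (i : ℕ) < k → ∃ j, ab.1 j = i) ∧
                (∀ i : Fin N, (i : ℕ) < l → ∃ j, ab.2 j = i) ∧
                (∀ i : Fin d, (ab.1 i : ℕ) < k ∨ (ab.2 i : ℕ) < l) then
              (-1 : ℂ) ^ ((∑ i, ((ab.1 i : ℕ) + 1)) + ∑ i, ((ab.2 i : ℕ) + 1)) *
              ((Equiv.Perm.sign (Tuple.sort ab.1 * (Tuple.sort ab.2)⁻¹) : ℤ) : ℂ) *
              (∏ i, M (ab.1 i) (ab.2 i)) *
              Matrix.det (M.submatrix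
                (fun i : Fin (N - d) =>
                  (Finset.univ \ Finset.image ab.1 Finset.univ).orderEmbOfFin
                    (show (Finset.univ \ Finset.image ab.1 Finset.univ).card = N - d by
                      rw [Finset.card_sdiff_of_subset (Finset.subset_univ _), Finset.card_univ,
                        Fintype.card_fin,
                        Finset.card_image_of_injective _ h.1, Finset.card_univ,
                        Fintype.card_fin]) i)
                (fun i : Fin (N - d) =>
                  (Finset.univ \ Finset.image ab.2 Finset.univ).orderEmbOfFin
                    (show (Finset.univ \ Finset.image ab.2 Finset.univ).card = N - d by
                      rw [Finset.card_sdiff_of_subset (Finset.subset_univ _), Finset.card_univ,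
                        Fintype.card_fin,
                        Finset.card_image_of_injective _ h.2.1, Finset.card_univ,
                        Fintype.card_fin]) i))
            else 0 := by
  classical
  calc M.det = ∑ σ : Equiv.Perm (Fin N), ((Equiv.Perm.sign σ : ℤ) : ℂ) * ∏ i, M (σ i) i :=
        Matrix.det_apply' M
    _ = ∑ d ∈ Finset.Icc (max k l) (min (k + l) N),
          ∑ σ ∈ Finset.univ.filter
            (fun σ : Equiv.Perm (Fin N) => (DetExp.Dset k l σ).card = d),
            ((Equiv.Perm.sign σ : ℤ) : ℂ) * ∏ i, M (σ i) i :=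
        (Finset.sum_fiberwise_of_maps_to
          (fun σ _ => DetExp.Dcard_mem k l hk hl σ) _).symm
    _ = _ := by
        refine Finset.sum_congr rfl (fun d hd => ?_)
        rw [DetExp.key_lemma N d k l M,
          inv_mul_cancel_left₀ (Nat.cast_ne_zero.2 d.factorial_ne_zero)]
end

section
/- Integrating out eigenvalues against biorthogonal polynomials: for every integer d with 0 ≤ d ≤ N and all real numbers x₁,…,x_d, y₁,…,y_d, ∫_{ℝ^{N−d}} ∫_{ℝ^{N−d}} det[w(y_i,x_j)]_{i,j=d+1}^{N} · det[P_{i−1}(x_j)]_{i,j=1}^{N} · det[Q_{i−1}(y_j)]_{i,j=1}^{N} dx_{d+1}⋯dx_N dy_{d+1}⋯dy_N = ((N−d)!)² · det[H(x_i,y_j)]_{i,j=1}^{d} (for d = N the integral is vacuous and the claim reads det[P_{i−1}(x_j)] · det[Q_{i−1}(y_j)] = det[H(x_i,y_j)]; for d = 0 the right-hand side is (N!)²). -/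
open MeasureTheory Polynomial

section helpers
open Equiv Finset Matrix


set_option linter.unusedSectionVars false

lemma exists_sumCongr_left_of_fix_inr {A B : Type*} (ν : Equiv.Perm (A ⊕ B))
    (h : ∀ b : B, ν (Sum.inr b) = Sum.inr b) :
    ∃ α : Equiv.Perm A, ν = Equiv.sumCongr α (Equiv.refl B) := by
  have hsymm : ∀ b : B, ν.symm (Sum.inr b) = Sum.inr b := by
    intro b; rw [Equiv.symm_apply_eq, h]
  have key1 : ∀ a : A, ∃ a' : A, ν (Sum.inl a) = Sum.inl a' := by
    intro a
    rcases hx : ν (Sum.inl a) with a' | b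
    · exact ⟨a', rfl⟩
    · exfalso
      have : ν (Sum.inl a) = ν (Sum.inr b) := by rw [hx, h]
      simpa using ν.injective this
  have key2 : ∀ a : A, ∃ a' : A, ν.symm (Sum.inl a) = Sum.inl a' := by
    intro a
    rcases hx : ν.symm (Sum.inl a) with a' | b
    · exact ⟨a', rfl⟩
    · exfalso
      have : ν.symm (Sum.inl a) = ν.symm (Sum.inr b) := by rw [hx, hsymm]
      simpa using ν.symm.injective this
  refine ⟨⟨fun a => (key1 a).choose, fun a => (key2 a).choose, ?_, ?_⟩, ?_⟩
  · intro a
    have h1 := (key1 a).choose_spec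
    have h2 := (key2 (key1 a).choose).choose_spec
    have h3 : ν.symm (Sum.inl (key1 a).choose) = Sum.inl a := by
      rw [← h1, Equiv.symm_apply_apply]
    exact Sum.inl.inj (h2.symm.trans h3)
  · intro a
    have h2 := (key2 a).choose_spec
    have h1 := (key1 (key2 a).choose).choose_spec
    have h3 : ν (Sum.inl (key2 a).choose) = Sum.inl a := by
      rw [← h2, Equiv.apply_symm_apply]
    exact Sum.inl.inj (h1.symm.trans h3)
  · ext z
    rcases z with a | b
    · simp only [Equiv.sumCongr_apply, Sum.map_inl, Equiv.coe_fn_mk]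
      exact (key1 a).choose_spec
    · simp only [Equiv.sumCongr_apply, Sum.map_inr, Equiv.refl_apply]
      exact h b

noncomputable def iotaL (d n : ℕ) (α : Equiv.Perm (Fin d)) : Equiv.Perm (Fin (d + n)) :=
  (finSumFinEquiv (m := d) (n := n)).permCongr (Equiv.sumCongr α (Equiv.refl (Fin n)))

noncomputable def iotaR (d n : ℕ) (β : Equiv.Perm (Fin n)) : Equiv.Perm (Fin (d + n)) :=
  (finSumFinEquiv (m := d) (n := n)).permCongr (Equiv.sumCongr (Equiv.refl (Fin d)) β)

@[simp] lemma iotaL_castAdd (d n : ℕ) (α : Equiv.Perm (Fin d)) (j : Fin d) :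
    iotaL d n α (Fin.castAdd n j) = Fin.castAdd n (α j) := by
  simp [iotaL, Equiv.permCongr_apply, finSumFinEquiv_symm_apply_castAdd]

@[simp] lemma iotaL_natAdd (d n : ℕ) (α : Equiv.Perm (Fin d)) (i : Fin n) :
    iotaL d n α (Fin.natAdd d i) = Fin.natAdd d i := by
  simp [iotaL, Equiv.permCongr_apply, finSumFinEquiv_symm_apply_natAdd]

@[simp] lemma iotaR_castAdd (d n : ℕ) (β : Equiv.Perm (Fin n)) (j : Fin d) :
    iotaR d n β (Fin.castAdd n j) = Fin.castAdd n j := by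
  simp [iotaR, Equiv.permCongr_apply, finSumFinEquiv_symm_apply_castAdd]

@[simp] lemma iotaR_natAdd (d n : ℕ) (β : Equiv.Perm (Fin n)) (i : Fin n) :
    iotaR d n β (Fin.natAdd d i) = Fin.natAdd d (β i) := by
  simp [iotaR, Equiv.permCongr_apply, finSumFinEquiv_symm_apply_natAdd]

@[simp] lemma sign_iotaL (d n : ℕ) (α : Equiv.Perm (Fin d)) :
    Equiv.Perm.sign (iotaL d n α) = Equiv.Perm.sign α := by
  simp [iotaL, Equiv.Perm.sign_permCongr, Equiv.Perm.sign_sumCongr]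

@[simp] lemma sign_iotaR (d n : ℕ) (β : Equiv.Perm (Fin n)) :
    Equiv.Perm.sign (iotaR d n β) = Equiv.Perm.sign β := by
  simp [iotaR, Equiv.Perm.sign_permCongr, Equiv.Perm.sign_sumCongr]

lemma sum_perm_fix_natAdd (d n : ℕ) (G : Equiv.Perm (Fin (d + n)) → ℝ) :
    ∑ μ : Equiv.Perm (Fin (d + n)),
      (if ∀ i : Fin n, μ (Fin.natAdd d i) = Fin.natAdd d i then G μ else 0)
    = ∑ α : Equiv.Perm (Fin d), G (iotaL d n α) := by
  rw [← Finset.sum_filter]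
  refine (Finset.sum_bij (fun (α : Equiv.Perm (Fin d)) _ => iotaL d n α) ?_ ?_ ?_ ?_).symm
  · intro α _
    simp only [Finset.mem_filter, Finset.mem_univ, true_and]
    intro i; simp
  · intro α _ α' _ hee
    ext j
    have h2 := congrArg (fun (μ : Equiv.Perm (Fin (d+n))) => μ (Fin.castAdd n j)) hee
    simp only [iotaL_castAdd] at h2
    simpa [Fin.ext_iff] using h2
  · intro μ hμ
    simp only [Finset.mem_filter, Finset.mem_univ, true_and] at hμ
    set ν : Equiv.Perm (Fin d ⊕ Fin n) := (finSumFinEquiv (m := d) (n := n)).symm.permCongr μ with hν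
    have hfix : ∀ b : Fin n, ν (Sum.inr b) = Sum.inr b := by
      intro b
      simp only [hν, Equiv.permCongr_apply, Equiv.symm_symm]
      rw [← finSumFinEquiv_symm_apply_natAdd b, Equiv.apply_symm_apply]
      rw [hμ b, finSumFinEquiv_symm_apply_natAdd]
    obtain ⟨α, hα⟩ := exists_sumCongr_left_of_fix_inr ν hfix
    refine ⟨α, Finset.mem_univ _, ?_⟩
    have : (finSumFinEquiv (m := d) (n := n)).permCongr ν = μ := by
      ext z
      simp [hν, Equiv.permCongr_apply]
    rw [← this, hα]; rfl
  · intros; rfl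

lemma exists_sumCongr_right_of_fix_inl {A B : Type*} (ν : Equiv.Perm (A ⊕ B))
    (h : ∀ a : A, ν (Sum.inl a) = Sum.inl a) :
    ∃ β : Equiv.Perm B, ν = Equiv.sumCongr (Equiv.refl A) β := by
  obtain ⟨β, hβ⟩ := exists_sumCongr_left_of_fix_inr (A := B) (B := A)
      ((Equiv.sumComm A B).permCongr ν)
      (by intro a; simp [Equiv.permCongr_apply, h a])
  refine ⟨β, ?_⟩
  ext z; rcases z with a | b
  · simp [h a]
  · have h2 := congrArg (fun (p : Equiv.Perm (B ⊕ A)) => p (Sum.inl b)) hβ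
    simp only [Equiv.permCongr_apply, Equiv.sumComm_symm, Equiv.sumComm_apply,
      Sum.swap_inl, Equiv.sumCongr_apply, Sum.map_inl, Equiv.refl_apply] at h2
    have h3 : ν (Sum.inr b) = Sum.inr (β b) := by
      have := congrArg (Equiv.sumComm A B).symm h2
      simpa using this
    simpa using h3

lemma sum_perm_fix_castAdd (d n : ℕ) (G : Equiv.Perm (Fin (d + n)) → ℝ) :
    ∑ μ : Equiv.Perm (Fin (d + n)),
      (if ∀ j : Fin d, μ (Fin.castAdd n j) = Fin.castAdd n j then G μ else 0)
    = ∑ β : Equiv.Perm (Fin n), G (iotaR d n β) := by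
  rw [← Finset.sum_filter]
  refine (Finset.sum_bij (fun (β : Equiv.Perm (Fin n)) _ => iotaR d n β) ?_ ?_ ?_ ?_).symm
  · intro β _
    simp only [Finset.mem_filter, Finset.mem_univ, true_and]
    intro j; simp
  · intro β _ β' _ hee
    ext i
    have h2 := congrArg (fun (μ : Equiv.Perm (Fin (d+n))) => μ (Fin.natAdd d i)) hee
    simp only [iotaR_natAdd] at h2
    simpa [Fin.ext_iff] using h2
  · intro μ hμ
    simp only [Finset.mem_filter, Finset.mem_univ, true_and] at hμ
    set ν : Equiv.Perm (Fin d ⊕ Fin n) := (finSumFinEquiv (m := d) (n := n)).symm.permCongr μ with hν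
    have hfix : ∀ a : Fin d, ν (Sum.inl a) = Sum.inl a := by
      intro a
      simp only [hν, Equiv.permCongr_apply, Equiv.symm_symm]
      rw [← finSumFinEquiv_symm_apply_castAdd a, Equiv.apply_symm_apply]
      rw [hμ a, finSumFinEquiv_symm_apply_castAdd]
    obtain ⟨β, hβ⟩ := exists_sumCongr_right_of_fix_inl ν hfix
    refine ⟨β, Finset.mem_univ _, ?_⟩
    have h4 : (finSumFinEquiv (m := d) (n := n)).permCongr ν = μ := by
      ext z
      simp [hν, Equiv.permCongr_apply]
    rw [← h4, hβ]; rfl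
  · intros; rfl

lemma exists_perm_extend {d n : ℕ} (b : Fin d → Fin (d + n)) (hb : Function.Injective b) :
    ∃ τ : Equiv.Perm (Fin (d + n)), ∀ j, τ (Fin.castAdd n j) = b j := by
  classical
  have hcard : Fintype.card (Fin n) = Fintype.card ((Set.range b)ᶜ : Set (Fin (d + n))) := by
    rw [Fintype.card_compl_set, Set.card_range_of_injective hb]
    simp
  let e2 : Fin n ≃ ((Set.range b)ᶜ : Set (Fin (d + n))) := Fintype.equivOfCardEq hcard
  let τ : Equiv.Perm (Fin (d + n)) :=
    (finSumFinEquiv (m := d) (n := n)).symm.trans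
      ((Equiv.sumCongr (Equiv.ofInjective b hb) e2).trans
        (Equiv.Set.sumCompl (Set.range b)))
  refine ⟨τ, fun j => ?_⟩
  simp [τ, finSumFinEquiv_symm_apply_castAdd, Equiv.Set.sumCompl_apply_inl]

lemma sum_perm_comp_castAdd (d n : ℕ) (V : (Fin d → Fin (d + n)) → ℝ)
    (hV : ∀ b, ¬ Function.Injective b → V b = 0) :
    ∑ τ : Equiv.Perm (Fin (d + n)), V (fun j => τ (Fin.castAdd n j))
      = (n.factorial : ℝ) * ∑ b : Fin d → Fin (d + n), V b := by
  classical
  rw [← Fintype.sum_fiberwise (fun (τ : Equiv.Perm (Fin (d + n))) (j : Fin d) =>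
      τ (Fin.castAdd n j)) (fun τ => V (fun j => τ (Fin.castAdd n j)))]
  rw [Finset.mul_sum]
  refine Finset.sum_congr rfl (fun b _ => ?_)
  have hfib : ∑ τ : {τ : Equiv.Perm (Fin (d + n)) //
      (fun j => τ (Fin.castAdd n j)) = b}, V (fun j => (τ : Equiv.Perm (Fin (d+n))) (Fin.castAdd n j))
      = (Fintype.card {τ : Equiv.Perm (Fin (d + n)) //
          (fun j => τ (Fin.castAdd n j)) = b} : ℝ) * V b := by
    rw [Fintype.sum_congr _ _ (fun τ => by rw [τ.2]), Finset.sum_const,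
      Finset.card_univ, nsmul_eq_mul]
  rw [hfib]
  by_cases hb : Function.Injective b
  · congr 1
    obtain ⟨τ₀, hτ₀⟩ := exists_perm_extend b hb
    have hcount : ((Fintype.card {τ : Equiv.Perm (Fin (d + n)) //
        (fun j => τ (Fin.castAdd n j)) = b}) : ℝ)
        = ∑ τ : Equiv.Perm (Fin (d + n)), (if (fun j => τ (Fin.castAdd n j)) = b then (1:ℝ) else 0) := by
      rw [Finset.sum_boole, Fintype.card_subtype]
    rw [hcount]
    rw [← Equiv.sum_comp (Equiv.mulLeft τ₀)
        (fun τ : Equiv.Perm (Fin (d+n)) => if (fun j => τ (Fin.castAdd n j)) = b then (1:ℝ) else 0)]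
    have hcond : ∀ μ : Equiv.Perm (Fin (d + n)),
        ((fun j => (Equiv.mulLeft τ₀ μ) (Fin.castAdd n j)) = b)
          ↔ (∀ j : Fin d, μ (Fin.castAdd n j) = Fin.castAdd n j) := by
      intro μ
      constructor
      · intro h j
        have := congrFun h j
        simp only [Equiv.coe_mulLeft, Equiv.Perm.mul_apply] at this
        exact τ₀.injective (this.trans (hτ₀ j).symm)
      · intro h
        funext j
        simp only [Equiv.coe_mulLeft, Equiv.Perm.mul_apply, h j]
        exact hτ₀ j
    have : ∀ μ : Equiv.Perm (Fin (d + n)),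
        (if (fun j => (Equiv.mulLeft τ₀ μ) (Fin.castAdd n j)) = b then (1:ℝ) else 0)
        = (if (∀ j : Fin d, μ (Fin.castAdd n j) = Fin.castAdd n j) then (1:ℝ) else 0) := by
      intro μ; simp only [hcond μ]
    rw [Fintype.sum_congr _ _ this, sum_perm_fix_castAdd d n (fun _ => (1:ℝ))]
    simp [Finset.card_univ, Fintype.card_perm, Fintype.card_fin]
  · rw [hV b hb]
    ring

lemma sign_mul_self_real {m : ℕ} (σ : Equiv.Perm (Fin m)) :
    ((Equiv.Perm.sign σ : ℤ) : ℝ) * ((Equiv.Perm.sign σ : ℤ) : ℝ) = 1 := by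
  rw [← Int.cast_mul, ← Units.val_mul, Int.units_mul_self, Units.val_one, Int.cast_one]

lemma vanish {d : ℕ} (x : Fin d → ℝ) (p : Fin d → Polynomial ℝ) {i j : Fin d}
    (hij : i ≠ j) (hp : p i = p j) :
    ∑ α : Equiv.Perm (Fin d), ((Equiv.Perm.sign α : ℤ) : ℝ) * ∏ k, (p k).eval (x (α k)) = 0 := by
  classical
  set M : Matrix (Fin d) (Fin d) ℝ := Matrix.of fun a b => (p a).eval (x b) with hM
  have h1 : ∑ α : Equiv.Perm (Fin d), ((Equiv.Perm.sign α : ℤ) : ℝ)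
      * ∏ k, (p k).eval (x (α k)) = Mᵀ.det := by
    rw [Matrix.det_apply']
    refine Finset.sum_congr rfl (fun α _ => ?_)
    congr 1
  rw [h1, Matrix.det_transpose]
  refine Matrix.det_zero_of_row_eq hij ?_
  funext b
  simp [hM, hp]

lemma part2 (d n : ℕ) (P Q : Fin (d + n) → Polynomial ℝ) (x y : Fin d → ℝ) :
    (∑ σ : Equiv.Perm (Fin n), ∑ τ : Equiv.Perm (Fin (d + n)), ∑ ρ : Equiv.Perm (Fin (d + n)),
      ((Equiv.Perm.sign σ : ℤ) : ℝ) * ((Equiv.Perm.sign τ : ℤ) : ℝ)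
        * ((Equiv.Perm.sign ρ : ℤ) : ℝ)
        * (∏ j : Fin d, (P (τ (Fin.castAdd n j))).eval (x j))
        * (∏ j : Fin d, (Q (ρ (Fin.castAdd n j))).eval (y j))
        * (if ∀ i : Fin n, τ (Fin.natAdd d i) = ρ (Fin.natAdd d (σ i)) then (1:ℝ) else 0))
    = ((n.factorial : ℝ)) ^ 2
        * Matrix.det (Matrix.of fun i j : Fin d => Hker (d + n) P Q (x i) (y j)) := by
  classical
  have hinv_cast : ∀ (σ : Equiv.Perm (Fin n)) (j : Fin d),
      (iotaR d n σ)⁻¹ (Fin.castAdd n j) = Fin.castAdd n j := by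
    intro σ j
    apply (iotaR d n σ).injective
    simp
  have hinv_nat : ∀ (σ : Equiv.Perm (Fin n)) (i : Fin n),
      (iotaR d n σ)⁻¹ (Fin.natAdd d (σ i)) = Fin.natAdd d i := by
    intro σ i
    apply (iotaR d n σ).injective
    simp
  -- Step A+B : eliminate σ
  have stepA : (∑ σ : Equiv.Perm (Fin n), ∑ τ : Equiv.Perm (Fin (d + n)),
      ∑ ρ : Equiv.Perm (Fin (d + n)),
      ((Equiv.Perm.sign σ : ℤ) : ℝ) * ((Equiv.Perm.sign τ : ℤ) : ℝ)
        * ((Equiv.Perm.sign ρ : ℤ) : ℝ)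
        * (∏ j : Fin d, (P (τ (Fin.castAdd n j))).eval (x j))
        * (∏ j : Fin d, (Q (ρ (Fin.castAdd n j))).eval (y j))
        * (if ∀ i : Fin n, τ (Fin.natAdd d i) = ρ (Fin.natAdd d (σ i)) then (1:ℝ) else 0))
      = (n.factorial : ℝ) * ∑ τ : Equiv.Perm (Fin (d + n)), ∑ ρ : Equiv.Perm (Fin (d + n)),
      ((Equiv.Perm.sign τ : ℤ) : ℝ) * ((Equiv.Perm.sign ρ : ℤ) : ℝ)
        * (∏ j : Fin d, (P (τ (Fin.castAdd n j))).eval (x j))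
        * (∏ j : Fin d, (Q (ρ (Fin.castAdd n j))).eval (y j))
        * (if ∀ i : Fin n, τ (Fin.natAdd d i) = ρ (Fin.natAdd d i) then (1:ℝ) else 0) := by
    have hσ : ∀ σ : Equiv.Perm (Fin n), ∀ τ : Equiv.Perm (Fin (d + n)),
        (∑ ρ : Equiv.Perm (Fin (d + n)),
          ((Equiv.Perm.sign σ : ℤ) : ℝ) * ((Equiv.Perm.sign τ : ℤ) : ℝ)
          * ((Equiv.Perm.sign ρ : ℤ) : ℝ)
          * (∏ j : Fin d, (P (τ (Fin.castAdd n j))).eval (x j))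
          * (∏ j : Fin d, (Q (ρ (Fin.castAdd n j))).eval (y j))
          * (if ∀ i : Fin n, τ (Fin.natAdd d i) = ρ (Fin.natAdd d (σ i)) then (1:ℝ) else 0))
        = ∑ ρ : Equiv.Perm (Fin (d + n)),
          ((Equiv.Perm.sign τ : ℤ) : ℝ) * ((Equiv.Perm.sign ρ : ℤ) : ℝ)
          * (∏ j : Fin d, (P (τ (Fin.castAdd n j))).eval (x j))
          * (∏ j : Fin d, (Q (ρ (Fin.castAdd n j))).eval (y j))
          * (if ∀ i : Fin n, τ (Fin.natAdd d i) = ρ (Fin.natAdd d i) then (1:ℝ) else 0) := by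
      intro σ τ
      rw [← Equiv.sum_comp (Equiv.mulRight (iotaR d n σ)⁻¹)]
      refine Finset.sum_congr rfl (fun ρ _ => ?_)
      have hsgn : ((Equiv.Perm.sign (Equiv.mulRight (iotaR d n σ)⁻¹ ρ) : ℤ) : ℝ)
          = ((Equiv.Perm.sign ρ : ℤ) : ℝ) * ((Equiv.Perm.sign σ : ℤ) : ℝ) := by
        simp only [Equiv.coe_mulRight]
        rw [Equiv.Perm.sign_mul, Equiv.Perm.sign_inv, sign_iotaR]
        push_cast
        ring
      have hQ : ∀ j : Fin d, (Equiv.mulRight (iotaR d n σ)⁻¹ ρ) (Fin.castAdd n j)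
          = ρ (Fin.castAdd n j) := by
        intro j
        simp only [Equiv.coe_mulRight, Equiv.Perm.mul_apply, hinv_cast]
      have hC : (∀ i : Fin n, τ (Fin.natAdd d i)
            = (Equiv.mulRight (iotaR d n σ)⁻¹ ρ) (Fin.natAdd d (σ i)))
          ↔ (∀ i : Fin n, τ (Fin.natAdd d i) = ρ (Fin.natAdd d i)) := by
        constructor <;> intro h i <;> have h2 := h i <;>
          simpa [Equiv.coe_mulRight, Equiv.Perm.mul_apply, hinv_nat] using h2
      rw [hsgn]
      simp only [hQ]
      rw [if_congr hC rfl rfl]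
      have hss := sign_mul_self_real σ
      linear_combination (((Equiv.Perm.sign τ : ℤ) : ℝ) * ((Equiv.Perm.sign ρ : ℤ) : ℝ)
        * (∏ j : Fin d, (P (τ (Fin.castAdd n j))).eval (x j))
        * (∏ j : Fin d, (Q (ρ (Fin.castAdd n j))).eval (y j))
        * (if ∀ i : Fin n, τ (Fin.natAdd d i) = ρ (Fin.natAdd d i) then (1:ℝ) else 0)) * hss
    rw [Fintype.sum_congr _ _
      (fun σ => Finset.sum_congr rfl (fun τ _ => hσ σ τ))]
    rw [Finset.sum_const, Finset.card_univ, nsmul_eq_mul, Fintype.card_perm, Fintype.card_fin]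
  rw [stepA]
  have stepB : ∀ τ : Equiv.Perm (Fin (d + n)),
      (∑ ρ : Equiv.Perm (Fin (d + n)),
        ((Equiv.Perm.sign τ : ℤ) : ℝ) * ((Equiv.Perm.sign ρ : ℤ) : ℝ)
        * (∏ j : Fin d, (P (τ (Fin.castAdd n j))).eval (x j))
        * (∏ j : Fin d, (Q (ρ (Fin.castAdd n j))).eval (y j))
        * (if ∀ i : Fin n, τ (Fin.natAdd d i) = ρ (Fin.natAdd d i) then (1:ℝ) else 0))
      = ∑ α : Equiv.Perm (Fin d),
        ((Equiv.Perm.sign α : ℤ) : ℝ)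
        * (∏ j : Fin d, (P (τ (Fin.castAdd n j))).eval (x j))
        * (∏ j : Fin d, (Q (τ (Fin.castAdd n (α j)))).eval (y j)) := by
    intro τ
    rw [← Equiv.sum_comp (Equiv.mulLeft τ)]
    have h1 : ∀ μ : Equiv.Perm (Fin (d + n)),
        ((Equiv.Perm.sign τ : ℤ) : ℝ)
          * ((Equiv.Perm.sign ((Equiv.mulLeft τ) μ) : ℤ) : ℝ)
          * (∏ j : Fin d, (P (τ (Fin.castAdd n j))).eval (x j))
          * (∏ j : Fin d, (Q (((Equiv.mulLeft τ) μ) (Fin.castAdd n j))).eval (y j))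
          * (if ∀ i : Fin n, τ (Fin.natAdd d i) = ((Equiv.mulLeft τ) μ) (Fin.natAdd d i)
              then (1:ℝ) else 0)
        = (if ∀ i : Fin n, μ (Fin.natAdd d i) = Fin.natAdd d i then
            (((Equiv.Perm.sign τ : ℤ) : ℝ)
            * ((Equiv.Perm.sign (τ * μ) : ℤ) : ℝ)
            * (∏ j : Fin d, (P (τ (Fin.castAdd n j))).eval (x j))
            * (∏ j : Fin d, (Q ((τ * μ) (Fin.castAdd n j))).eval (y j))) else 0) := by
      intro μ
      have hc : (∀ i : Fin n, τ (Fin.natAdd d i) = ((Equiv.mulLeft τ) μ) (Fin.natAdd d i))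
          ↔ (∀ i : Fin n, μ (Fin.natAdd d i) = Fin.natAdd d i) := by
        constructor <;> intro h i <;> have h2 := h i
        · simp only [Equiv.coe_mulLeft, Equiv.Perm.mul_apply] at h2
          exact (τ.injective h2.symm)
        · simp only [Equiv.coe_mulLeft, Equiv.Perm.mul_apply, h2]
      rw [if_congr hc rfl rfl]
      simp only [Equiv.coe_mulLeft, mul_ite, mul_one, mul_zero]
    rw [Fintype.sum_congr _ _ h1, sum_perm_fix_natAdd d n
      (fun μ => (((Equiv.Perm.sign τ : ℤ) : ℝ)
            * ((Equiv.Perm.sign (τ * μ) : ℤ) : ℝ)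
            * (∏ j : Fin d, (P (τ (Fin.castAdd n j))).eval (x j))
            * (∏ j : Fin d, (Q ((τ * μ) (Fin.castAdd n j))).eval (y j))))]
    refine Finset.sum_congr rfl (fun α _ => ?_)
    have hsgn : ((Equiv.Perm.sign (τ * iotaL d n α) : ℤ) : ℝ)
        = ((Equiv.Perm.sign τ : ℤ) : ℝ) * ((Equiv.Perm.sign α : ℤ) : ℝ) := by
      rw [Equiv.Perm.sign_mul, sign_iotaL]
      push_cast
      ring
    have happ : ∀ j : Fin d, (τ * iotaL d n α) (Fin.castAdd n j) = τ (Fin.castAdd n (α j)) := by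
      intro j
      simp [Equiv.Perm.mul_apply]
    simp only [happ, hsgn]
    have hss := sign_mul_self_real τ
    linear_combination (((Equiv.Perm.sign α : ℤ) : ℝ)
      * (∏ j : Fin d, (P (τ (Fin.castAdd n j))).eval (x j))
      * (∏ j : Fin d, (Q (τ (Fin.castAdd n (α j)))).eval (y j))) * hss
  rw [Fintype.sum_congr _ _ stepB]
  have stepC : ∀ α : Equiv.Perm (Fin d),
      (∑ τ : Equiv.Perm (Fin (d + n)),
        ((Equiv.Perm.sign α : ℤ) : ℝ)
        * (∏ j : Fin d, (P (τ (Fin.castAdd n j))).eval (x j))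
        * (∏ j : Fin d, (Q (τ (Fin.castAdd n (α j)))).eval (y j)))
      = ∑ τ : Equiv.Perm (Fin (d + n)),
        ((Equiv.Perm.sign α : ℤ) : ℝ)
        * ∏ j : Fin d, ((P (τ (Fin.castAdd n j))).eval (x (α j))
            * (Q (τ (Fin.castAdd n j))).eval (y j)) := by
    intro α
    rw [← Equiv.sum_comp (Equiv.mulRight (iotaL d n α⁻¹))]
    refine Finset.sum_congr rfl (fun τ _ => ?_)
    simp only [Equiv.coe_mulRight, Equiv.Perm.mul_apply, iotaL_castAdd,
      (show ∀ (σ : Equiv.Perm (Fin d)) (j : Fin d), σ⁻¹ (σ j) = j from fun σ j => σ.symm_apply_apply j)]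
    have hP : (∏ j : Fin d, (P (τ (Fin.castAdd n (α⁻¹ j)))).eval (x j))
        = ∏ j : Fin d, (P (τ (Fin.castAdd n j))).eval (x (α j)) := by
      rw [← Equiv.prod_comp α (fun j => (P (τ (Fin.castAdd n (α⁻¹ j)))).eval (x j))]
      refine Finset.prod_congr rfl (fun k _ => ?_)
      simp only [(show ∀ (σ : Equiv.Perm (Fin d)) (j : Fin d), σ⁻¹ (σ j) = j from fun σ j => σ.symm_apply_apply j)]
    rw [hP, Finset.prod_mul_distrib, ← mul_assoc]
  have hswap : (∑ τ : Equiv.Perm (Fin (d + n)), ∑ α : Equiv.Perm (Fin d),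
        ((Equiv.Perm.sign α : ℤ) : ℝ)
        * (∏ j : Fin d, (P (τ (Fin.castAdd n j))).eval (x j))
        * (∏ j : Fin d, (Q (τ (Fin.castAdd n (α j)))).eval (y j)))
      = ∑ τ : Equiv.Perm (Fin (d + n)), ∑ α : Equiv.Perm (Fin d),
        ((Equiv.Perm.sign α : ℤ) : ℝ)
        * ∏ j : Fin d, ((P (τ (Fin.castAdd n j))).eval (x (α j))
            * (Q (τ (Fin.castAdd n j))).eval (y j)) := by
    rw [Finset.sum_comm]
    rw [Fintype.sum_congr _ _ stepC]
    rw [Finset.sum_comm]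
  rw [hswap]
  have hVvan : ∀ b : Fin d → Fin (d + n), ¬ Function.Injective b →
      (∑ α : Equiv.Perm (Fin d), ((Equiv.Perm.sign α : ℤ) : ℝ)
        * ∏ j : Fin d, ((P (b j)).eval (x (α j)) * (Q (b j)).eval (y j))) = 0 := by
    intro b hb
    obtain ⟨i, j, h1, h2⟩ := Function.not_injective_iff.mp hb
    have hsplit : ∀ α : Equiv.Perm (Fin d),
        ((Equiv.Perm.sign α : ℤ) : ℝ)
          * ∏ k : Fin d, ((P (b k)).eval (x (α k)) * (Q (b k)).eval (y k))
        = (((Equiv.Perm.sign α : ℤ) : ℝ) * ∏ k : Fin d, (P (b k)).eval (x (α k)))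
            * ∏ k : Fin d, (Q (b k)).eval (y k) := by
      intro α
      rw [Finset.prod_mul_distrib, ← mul_assoc]
    rw [Fintype.sum_congr _ _ hsplit, ← Finset.sum_mul]
    rw [vanish x (fun k => P (b k)) h2 (by show P (b i) = P (b j); rw [h1]), zero_mul]
  have key := sum_perm_comp_castAdd d n
    (fun b => ∑ α : Equiv.Perm (Fin d), ((Equiv.Perm.sign α : ℤ) : ℝ)
        * ∏ j : Fin d, ((P (b j)).eval (x (α j)) * (Q (b j)).eval (y j))) hVvan
  rw [key]
  have hdet : (∑ b : Fin d → Fin (d + n), ∑ α : Equiv.Perm (Fin d),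
        ((Equiv.Perm.sign α : ℤ) : ℝ)
        * ∏ j : Fin d, ((P (b j)).eval (x (α j)) * (Q (b j)).eval (y j)))
      = Matrix.det (Matrix.of fun i j : Fin d => Hker (d + n) P Q (x i) (y j)) := by
    rw [Matrix.det_apply', Finset.sum_comm]
    refine Finset.sum_congr rfl (fun α _ => ?_)
    rw [← Finset.mul_sum]
    congr 1
    rw [← Fintype.prod_sum (fun (j : Fin d) (a : Fin (d + n)) =>
      (P a).eval (x (α j)) * (Q a).eval (y j))]
    refine Finset.prod_congr rfl (fun j _ => ?_)
    simp [Hker]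
  rw [hdet]
  ring

noncomputable def gfun (w : ℝ → ℝ → ℝ) (q : Polynomial ℝ) (t : ℝ) : ℝ :=
  ∫ s : ℝ, q.eval s * w s t

lemma key_int (w : ℝ → ℝ → ℝ)
    (hint2 : ∀ p q : Polynomial ℝ,
      Integrable (fun s : ℝ × ℝ => p.eval s.1 * q.eval s.2 * w s.2 s.1))
    (p q : Polynomial ℝ) :
    Integrable (fun t : ℝ => p.eval t * gfun w q t) ∧
    (∫ t : ℝ, p.eval t * gfun w q t)
      = ∫ s : ℝ × ℝ, p.eval s.1 * q.eval s.2 * w s.2 s.1 := by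
  have h2 : Integrable (fun z : ℝ × ℝ => p.eval z.1 * (q.eval z.2 * w z.2 z.1))
      ((volume : Measure ℝ).prod volume) := by
    have h := hint2 p q
    rw [MeasureTheory.Measure.volume_eq_prod] at h
    simpa [mul_assoc] using h
  have heq : (fun t : ℝ => p.eval t * gfun w q t)
      = fun t : ℝ => ∫ s : ℝ, p.eval t * (q.eval s * w s t) := by
    funext t
    rw [integral_const_mul]
    rfl
  constructor
  · rw [heq]
    exact h2.integral_prod_left
  · rw [heq, MeasureTheory.integral_integral h2, ← MeasureTheory.Measure.volume_eq_prod]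
    simp only [← mul_assoc]

lemma part1 (d n : ℕ) (w : ℝ → ℝ → ℝ)
    (hint2 : ∀ p q : Polynomial ℝ,
      Integrable (fun s : ℝ × ℝ => p.eval s.1 * q.eval s.2 * w s.2 s.1))
    (hint1 : ∀ t : ℝ, ∀ p : Polynomial ℝ,
      Integrable (fun s : ℝ => p.eval s * w s t) ∧
      Integrable (fun s : ℝ => p.eval s * w t s))
    (P Q : Fin (d + n) → Polynomial ℝ)
    (horth : ∀ i j : Fin (d + n),
      (∫ s : ℝ × ℝ, (P i).eval s.1 * (Q j).eval s.2 * w s.2 s.1)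
        = if i = j then (1:ℝ) else 0)
    (x y : Fin d → ℝ) :
    (∫ u : Fin n → ℝ, ∫ v : Fin n → ℝ,
        Matrix.det (Matrix.of fun i j : Fin n => w (v i) (u j)) *
        Matrix.det (Matrix.of fun i j : Fin (d + n) => (P i).eval (Fin.append x u j)) *
        Matrix.det (Matrix.of fun i j : Fin (d + n) => (Q i).eval (Fin.append y v j)))
    = ∑ σ : Equiv.Perm (Fin n), ∑ τ : Equiv.Perm (Fin (d + n)), ∑ ρ : Equiv.Perm (Fin (d + n)),
      ((Equiv.Perm.sign σ : ℤ) : ℝ) * ((Equiv.Perm.sign τ : ℤ) : ℝ)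
        * ((Equiv.Perm.sign ρ : ℤ) : ℝ)
        * (∏ j : Fin d, (P (τ (Fin.castAdd n j))).eval (x j))
        * (∏ j : Fin d, (Q (ρ (Fin.castAdd n j))).eval (y j))
        * (if ∀ i : Fin n, τ (Fin.natAdd d i) = ρ (Fin.natAdd d (σ i)) then (1:ℝ) else 0) := by
  classical
  have inner : ∀ u : Fin n → ℝ,
      (∫ v : Fin n → ℝ,
        Matrix.det (Matrix.of fun i j : Fin n => w (v i) (u j)) *
        Matrix.det (Matrix.of fun i j : Fin (d + n) => (P i).eval (Fin.append x u j)) *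
        Matrix.det (Matrix.of fun i j : Fin (d + n) => (Q i).eval (Fin.append y v j)))
      = ∑ σ : Equiv.Perm (Fin n), ∑ τ : Equiv.Perm (Fin (d + n)), ∑ ρ : Equiv.Perm (Fin (d + n)),
        ((Equiv.Perm.sign σ : ℤ) : ℝ) * ((Equiv.Perm.sign τ : ℤ) : ℝ)
          * ((Equiv.Perm.sign ρ : ℤ) : ℝ)
          * (∏ j : Fin d, (P (τ (Fin.castAdd n j))).eval (x j))
          * (∏ j : Fin d, (Q (ρ (Fin.castAdd n j))).eval (y j))
          * ∏ i : Fin n, ((P (τ (Fin.natAdd d i))).eval (u i)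
              * gfun w (Q (ρ (Fin.natAdd d (σ i)))) (u i)) := by
    intro u
    -- expand the P determinant (a constant in `v`)
    have hdetP : Matrix.det (Matrix.of fun i j : Fin (d + n) => (P i).eval (Fin.append x u j))
        = ∑ τ : Equiv.Perm (Fin (d + n)), ((Equiv.Perm.sign τ : ℤ) : ℝ)
            * ((∏ j : Fin d, (P (τ (Fin.castAdd n j))).eval (x j))
              * ∏ i : Fin n, (P (τ (Fin.natAdd d i))).eval (u i)) := by
      rw [Matrix.det_apply']
      refine Finset.sum_congr rfl (fun τ _ => ?_)
      congr 1
      simp only [Matrix.of_apply]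
      rw [Fin.prod_univ_add (f := fun j => (P (τ j)).eval (Fin.append x u j))]
      simp
    -- step 1 : pull the constant out
    have step1 : (∫ v : Fin n → ℝ,
        Matrix.det (Matrix.of fun i j : Fin n => w (v i) (u j)) *
        Matrix.det (Matrix.of fun i j : Fin (d + n) => (P i).eval (Fin.append x u j)) *
        Matrix.det (Matrix.of fun i j : Fin (d + n) => (Q i).eval (Fin.append y v j)))
        = Matrix.det (Matrix.of fun i j : Fin (d + n) => (P i).eval (Fin.append x u j))
          * ∫ v : Fin n → ℝ,
            Matrix.det (Matrix.of fun i j : Fin n => w (v i) (u j)) *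
            Matrix.det (Matrix.of fun i j : Fin (d + n) => (Q i).eval (Fin.append y v j)) := by
      rw [← integral_const_mul]
      refine congrArg _ (funext fun v => ?_)
      ring
    rw [step1]
    -- expand the W and Q determinants pointwise in `v`
    have hWQ : (fun v : Fin n → ℝ =>
        Matrix.det (Matrix.of fun i j : Fin n => w (v i) (u j)) *
        Matrix.det (Matrix.of fun i j : Fin (d + n) => (Q i).eval (Fin.append y v j)))
        = fun v : Fin n → ℝ => ∑ σ : Equiv.Perm (Fin n), ∑ ρ : Equiv.Perm (Fin (d + n)),
            (((Equiv.Perm.sign σ : ℤ) : ℝ) * ((Equiv.Perm.sign ρ : ℤ) : ℝ)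
              * ∏ j : Fin d, (Q (ρ (Fin.castAdd n j))).eval (y j))
            * ∏ i : Fin n, ((Q (ρ (Fin.natAdd d i))).eval (v i) * w (v i) (u (σ⁻¹ i))) := by
      funext v
      rw [Matrix.det_apply', Matrix.det_apply', Finset.sum_mul_sum]
      refine Finset.sum_congr rfl (fun σ _ => Finset.sum_congr rfl (fun ρ _ => ?_))
      have hw : (∏ i : Fin n, (Matrix.of fun i j : Fin n => w (v i) (u j)) (σ i) i)
          = ∏ i : Fin n, w (v i) (u (σ⁻¹ i)) := by
        rw [← Equiv.prod_comp σ (fun i => w (v i) (u (σ⁻¹ i)))]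
        refine Finset.prod_congr rfl (fun i _ => ?_)
        simp
      have hq : (∏ j : Fin (d + n),
            (Matrix.of fun i j : Fin (d + n) => (Q i).eval (Fin.append y v j)) (ρ j) j)
          = (∏ j : Fin d, (Q (ρ (Fin.castAdd n j))).eval (y j))
            * ∏ i : Fin n, (Q (ρ (Fin.natAdd d i))).eval (v i) := by
        simp only [Matrix.of_apply]
        rw [Fin.prod_univ_add (f := fun j => (Q (ρ j)).eval (Fin.append y v j))]
        simp
      rw [hw, hq, Finset.prod_mul_distrib]
      ring
    rw [hWQ]
    -- integrate term by term
    have hterm_int : ∀ (σ : Equiv.Perm (Fin n)) (ρ : Equiv.Perm (Fin (d + n))),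
        Integrable (fun v : Fin n → ℝ =>
          (((Equiv.Perm.sign σ : ℤ) : ℝ) * ((Equiv.Perm.sign ρ : ℤ) : ℝ)
            * ∏ j : Fin d, (Q (ρ (Fin.castAdd n j))).eval (y j))
          * ∏ i : Fin n, ((Q (ρ (Fin.natAdd d i))).eval (v i) * w (v i) (u (σ⁻¹ i)))) := by
      intro σ ρ
      exact (Integrable.fintype_prod (f := fun i (s : ℝ) =>
        (Q (ρ (Fin.natAdd d i))).eval s * w s (u (σ⁻¹ i)))
        (fun i => (hint1 (u (σ⁻¹ i)) (Q (ρ (Fin.natAdd d i)))).1)).const_mul _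
    rw [integral_finset_sum _ (fun σ _ => integrable_finset_sum _ (fun ρ _ => hterm_int σ ρ))]
    have hterm_val : ∀ (σ : Equiv.Perm (Fin n)) (ρ : Equiv.Perm (Fin (d + n))),
        (∫ v : Fin n → ℝ,
          (((Equiv.Perm.sign σ : ℤ) : ℝ) * ((Equiv.Perm.sign ρ : ℤ) : ℝ)
            * ∏ j : Fin d, (Q (ρ (Fin.castAdd n j))).eval (y j))
          * ∏ i : Fin n, ((Q (ρ (Fin.natAdd d i))).eval (v i) * w (v i) (u (σ⁻¹ i))))
        = (((Equiv.Perm.sign σ : ℤ) : ℝ) * ((Equiv.Perm.sign ρ : ℤ) : ℝ)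
            * ∏ j : Fin d, (Q (ρ (Fin.castAdd n j))).eval (y j))
          * ∏ i : Fin n, gfun w (Q (ρ (Fin.natAdd d (σ i)))) (u i) := by
      intro σ ρ
      rw [integral_const_mul, MeasureTheory.integral_fintype_prod_volume_eq_prod
        (f := fun i (s : ℝ) => (Q (ρ (Fin.natAdd d i))).eval s * w s (u (σ⁻¹ i)))]
      congr 1
      rw [← Equiv.prod_comp σ (fun i => ∫ s : ℝ,
        (Q (ρ (Fin.natAdd d i))).eval s * w s (u (σ⁻¹ i)))]
      refine Finset.prod_congr rfl (fun i _ => ?_)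
      simp [gfun]
    have hsum2 : ∀ σ : Equiv.Perm (Fin n),
        (∫ v : Fin n → ℝ, ∑ ρ : Equiv.Perm (Fin (d + n)),
          (((Equiv.Perm.sign σ : ℤ) : ℝ) * ((Equiv.Perm.sign ρ : ℤ) : ℝ)
            * ∏ j : Fin d, (Q (ρ (Fin.castAdd n j))).eval (y j))
          * ∏ i : Fin n, ((Q (ρ (Fin.natAdd d i))).eval (v i) * w (v i) (u (σ⁻¹ i))))
        = ∑ ρ : Equiv.Perm (Fin (d + n)),
          (((Equiv.Perm.sign σ : ℤ) : ℝ) * ((Equiv.Perm.sign ρ : ℤ) : ℝ)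
            * ∏ j : Fin d, (Q (ρ (Fin.castAdd n j))).eval (y j))
          * ∏ i : Fin n, gfun w (Q (ρ (Fin.natAdd d (σ i)))) (u i) := by
      intro σ
      rw [integral_finset_sum _ (fun ρ _ => hterm_int σ ρ)]
      exact Finset.sum_congr rfl (fun ρ _ => hterm_val σ ρ)
    rw [Fintype.sum_congr _ _ hsum2, hdetP, Finset.sum_mul_sum, Finset.sum_comm]
    refine Finset.sum_congr rfl (fun σ _ => Finset.sum_congr rfl (fun τ _ => ?_))
    rw [Finset.mul_sum]
    refine Finset.sum_congr rfl (fun ρ _ => ?_)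
    rw [Finset.prod_mul_distrib]
    ring
  simp only [inner]
  have hFint : ∀ (σ : Equiv.Perm (Fin n)) (τ ρ : Equiv.Perm (Fin (d + n))),
      Integrable (fun u : Fin n → ℝ =>
        ((Equiv.Perm.sign σ : ℤ) : ℝ) * ((Equiv.Perm.sign τ : ℤ) : ℝ)
          * ((Equiv.Perm.sign ρ : ℤ) : ℝ)
          * (∏ j : Fin d, (P (τ (Fin.castAdd n j))).eval (x j))
          * (∏ j : Fin d, (Q (ρ (Fin.castAdd n j))).eval (y j))
          * ∏ i : Fin n, ((P (τ (Fin.natAdd d i))).eval (u i)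
              * gfun w (Q (ρ (Fin.natAdd d (σ i)))) (u i))) := by
    intro σ τ ρ
    exact (Integrable.fintype_prod (f := fun i (t : ℝ) =>
      (P (τ (Fin.natAdd d i))).eval t * gfun w (Q (ρ (Fin.natAdd d (σ i)))) t)
      (fun i => (key_int w hint2 _ _).1)).const_mul _
  rw [integral_finset_sum _ (fun σ _ => integrable_finset_sum _
    (fun τ _ => integrable_finset_sum _ (fun ρ _ => hFint σ τ ρ)))]
  refine Finset.sum_congr rfl (fun σ _ => ?_)
  rw [integral_finset_sum _ (fun τ _ => integrable_finset_sum _ (fun ρ _ => hFint σ τ ρ))]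
  refine Finset.sum_congr rfl (fun τ _ => ?_)
  rw [integral_finset_sum _ (fun ρ _ => hFint σ τ ρ)]
  refine Finset.sum_congr rfl (fun ρ _ => ?_)
  rw [integral_const_mul, MeasureTheory.integral_fintype_prod_volume_eq_prod
    (f := fun i (t : ℝ) => (P (τ (Fin.natAdd d i))).eval t
      * gfun w (Q (ρ (Fin.natAdd d (σ i)))) t)]
  have hval : ∀ i : Fin n,
      (∫ t : ℝ, (P (τ (Fin.natAdd d i))).eval t * gfun w (Q (ρ (Fin.natAdd d (σ i)))) t)
      = if τ (Fin.natAdd d i) = ρ (Fin.natAdd d (σ i)) then (1:ℝ) else 0 := by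
    intro i
    rw [(key_int w hint2 _ _).2, horth]
  rw [Finset.prod_congr rfl (fun i _ => hval i), Fintype.prod_boole]
  ring_nf

end helpers

open Equiv Finset Matrix in
/-- Integrating out eigenvalues against biorthogonal polynomials: for `0 ≤ d ≤ N`,
`∫∫ det[w(y_i,x_j)]_{i,j=d+1}^N · det[P_{i−1}(x_j)]_{i,j=1}^N · det[Q_{i−1}(y_j)]_{i,j=1}^N
  dx_{d+1}⋯dx_N dy_{d+1}⋯dy_N = ((N−d)!)² · det[H(x_i,y_j)]_{i,j=1}^d`,
where `x_{d+1},…,x_N` (resp. `y_{d+1},…,y_N`) are the integration variables `u`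
(resp. `v`), appended to the fixed variables `x₁,…,x_d` (resp. `y₁,…,y_d`). -/
theorem integrate_out_biorthogonal
    (N : ℕ) (hN : 1 ≤ N) (w : ℝ → ℝ → ℝ)
    (hwmeas : Measurable fun p : ℝ × ℝ => w p.1 p.2)
    (hint2 : ∀ p q : Polynomial ℝ,
      Integrable (fun s : ℝ × ℝ => p.eval s.1 * q.eval s.2 * w s.2 s.1))
    (hint1 : ∀ t : ℝ, ∀ p : Polynomial ℝ,
      Integrable (fun s : ℝ => p.eval s * w s t) ∧
      Integrable (fun s : ℝ => p.eval s * w t s))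
    (P Q : Fin N → Polynomial ℝ)
    (hdegP : ∀ i, (P i).degree = ((i : ℕ) : WithBot ℕ))
    (hdegQ : ∀ i, (Q i).degree = ((i : ℕ) : WithBot ℕ))
    (horth : ∀ i j : Fin N,
      (∫ s : ℝ × ℝ, (P i).eval s.1 * (Q j).eval s.2 * w s.2 s.1) =
        if i = j then (1 : ℝ) else 0)
    (d : ℕ) (hd : d ≤ N) (x y : Fin d → ℝ) :
    (∫ u : Fin (N - d) → ℝ, ∫ v : Fin (N - d) → ℝ,
        Matrix.det (Matrix.of fun i j : Fin (N - d) => w (v i) (u j)) *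
        Matrix.det (Matrix.of fun i j : Fin N =>
          (P i).eval (Fin.append x u (Fin.cast (by omega) j))) *
        Matrix.det (Matrix.of fun i j : Fin N =>
          (Q i).eval (Fin.append y v (Fin.cast (by omega) j)))) =
      ((N - d).factorial : ℝ) ^ 2 *
        Matrix.det (Matrix.of fun i j : Fin d => Hker N P Q (x i) (y j)) := by
  classical
  have hNd : N = d + (N - d) := by omega
  set e : Fin N ≃ Fin (d + (N - d)) := finCongr hNd with he
  set P' : Fin (d + (N - d)) → Polynomial ℝ := fun a => P (e.symm a) with hP'
  set Q' : Fin (d + (N - d)) → Polynomial ℝ := fun a => Q (e.symm a) with hQ'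
  have horth' : ∀ i j : Fin (d + (N - d)),
      (∫ s : ℝ × ℝ, (P' i).eval s.1 * (Q' j).eval s.2 * w s.2 s.1)
        = if i = j then (1 : ℝ) else 0 := by
    intro i j
    rw [hP', hQ', horth (e.symm i) (e.symm j)]
    simp only [EmbeddingLike.apply_eq_iff_eq]
  have h1 := part1 d (N - d) w hint2 hint1 P' Q' horth' x y
  have h2 := part2 d (N - d) P' Q' x y
  have hL : (fun u : Fin (N - d) → ℝ => ∫ v : Fin (N - d) → ℝ,
        Matrix.det (Matrix.of fun i j : Fin (N - d) => w (v i) (u j)) *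
        Matrix.det (Matrix.of fun i j : Fin N =>
          (P i).eval (Fin.append x u (Fin.cast (by omega) j))) *
        Matrix.det (Matrix.of fun i j : Fin N =>
          (Q i).eval (Fin.append y v (Fin.cast (by omega) j))))
      = fun u : Fin (N - d) → ℝ => ∫ v : Fin (N - d) → ℝ,
        Matrix.det (Matrix.of fun i j : Fin (N - d) => w (v i) (u j)) *
        Matrix.det (Matrix.of fun i j : Fin (d + (N - d)) =>
          (P' i).eval (Fin.append x u j)) *
        Matrix.det (Matrix.of fun i j : Fin (d + (N - d)) =>
          (Q' i).eval (Fin.append y v j)) := by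
    funext u
    refine congrArg _ (funext fun v => ?_)
    have hdP : Matrix.det (Matrix.of fun i j : Fin N =>
          (P i).eval (Fin.append x u (Fin.cast (by omega : N = d + (N - d)) j)))
        = Matrix.det (Matrix.of fun a b : Fin (d + (N - d)) =>
          (P' a).eval (Fin.append x u b)) := by
      rw [← Matrix.det_submatrix_equiv_self e
        (Matrix.of fun a b : Fin (d + (N - d)) => (P' a).eval (Fin.append x u b))]
      congr 1
    have hdQ : Matrix.det (Matrix.of fun i j : Fin N =>
          (Q i).eval (Fin.append y v (Fin.cast (by omega : N = d + (N - d)) j)))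
        = Matrix.det (Matrix.of fun a b : Fin (d + (N - d)) =>
          (Q' a).eval (Fin.append y v b)) := by
      rw [← Matrix.det_submatrix_equiv_self e
        (Matrix.of fun a b : Fin (d + (N - d)) => (Q' a).eval (Fin.append y v b))]
      congr 1
    rw [hdP, hdQ]
  rw [hL, h1, h2]
  congr 1
  refine congrArg _ ?_
  ext i j
  show Hker (d + (N - d)) P' Q' (x i) (y j) = Hker N P Q (x i) (y j)
  rw [Hker, Hker, hP', hQ']
  exact Equiv.sum_comp e.symm
    (fun a => (P a).eval (x i) * (Q a).eval (y j))
end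

section
/- Let z, z′ ∈ ℂ with z ≠ 0 and z′ ∉ ℤ, and set t = zz′. Define G(τ₁,τ₂) = φ_{z′}(τ₁) · φ_{−z′}(τ₂) · (1/z) · ( (1+τ₂)^z (1+τ₁)^{−z} − 1 ) / (τ₂ − τ₁) for τ₁, τ₂ > 0 with τ₁ ≠ τ₂. Then at every such point (τ₁,τ₂) the partial derivatives of G exist and ∂G/∂τ₁ + ∂G/∂τ₂ = (1/t) · φ_{z′−1}(τ₁) φ_{−z′−1}(τ₂) − (1/t) · φ_{z′−1}(τ₁) φ_{−z′−1}(τ₂) (1+τ₁)^{−z} (1+τ₂)^{z} − φ_{z′}(τ₁) φ_{−z′}(τ₂) (1+τ₁)^{−z−1} (1+τ₂)^{z−1}. -/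
/-- For a positive real `r` and complex `a`, the power `r^a = exp(a · log r)`,
with the real logarithm. -/
noncomputable def cpowR (r : ℝ) (a : ℂ) : ℂ := Complex.exp (a * (Real.log r : ℂ))

/-- `φ_a(τ) = τ^a / Γ(a+1)` for `τ > 0`. -/
noncomputable def phiFun (a : ℂ) (τ : ℝ) : ℂ := cpowR τ a / Complex.Gamma (a + 1)

/-- `G(τ₁,τ₂) = φ_{z′}(τ₁) φ_{−z′}(τ₂) (1/z) ((1+τ₂)^z (1+τ₁)^{−z} − 1)/(τ₂ − τ₁)`. -/
noncomputable def G (z z' : ℂ) (τ₁ τ₂ : ℝ) : ℂ :=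
  phiFun z' τ₁ * phiFun (-z') τ₂ * (1 / z) *
    ((cpowR (1 + τ₂) z * cpowR (1 + τ₁) (-z) - 1) / ((τ₂ : ℂ) - (τ₁ : ℂ)))

lemma cpowR_sub_one {r : ℝ} (hr : 0 < r) (a : ℂ) : cpowR r (a - 1) = cpowR r a / r := by
  unfold cpowR
  rw [sub_one_mul, Complex.exp_sub]
  congr 1
  rw [← Complex.ofReal_exp, Real.exp_log hr]

lemma hasDerivAt_cpowR (a : ℂ) {τ : ℝ} (hτ : 0 < τ) :
    HasDerivAt (fun t : ℝ => cpowR t a) (a * cpowR τ a / τ) τ := by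
  have hl : HasDerivAt (fun t : ℝ => ((Real.log t : ℝ) : ℂ)) ((τ⁻¹ : ℝ) : ℂ) τ :=
    (Real.hasDerivAt_log hτ.ne').ofReal_comp
  have h := (hl.const_mul a).cexp
  refine h.congr_deriv ?_
  unfold cpowR
  push_cast
  ring

lemma hasDerivAt_cpowR_shift (b : ℂ) {τ : ℝ} (hτ : 0 < 1 + τ) :
    HasDerivAt (fun t : ℝ => cpowR (1 + t) b) (b * cpowR (1 + τ) b / ((1 + τ : ℝ) : ℂ)) τ := by
  have h := hasDerivAt_cpowR b hτ
  have hg : HasDerivAt (fun t : ℝ => 1 + t) 1 τ := (hasDerivAt_id τ).const_add 1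
  have := h.scomp τ hg
  refine this.congr_deriv ?_
  simp

lemma hasDerivAt_phiFun (a : ℂ) {τ : ℝ} (hτ : 0 < τ) :
    HasDerivAt (fun t : ℝ => phiFun a t) (a * phiFun a τ / τ) τ := by
  have h := (hasDerivAt_cpowR a hτ).div_const (Complex.Gamma (a + 1))
  refine h.congr_deriv ?_
  unfold phiFun
  ring

lemma phiFun_sub_one (a : ℂ) (ha : a ≠ 0) (hΓ : Complex.Gamma a ≠ 0) {τ : ℝ} (hτ : 0 < τ) :
    phiFun (a - 1) τ = a * phiFun a τ / τ := by
  unfold phiFun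
  rw [cpowR_sub_one hτ, sub_add_cancel, Complex.Gamma_add_one a ha]
  have hτ' : (τ : ℂ) ≠ 0 := by exact_mod_cast hτ.ne'
  field_simp

set_option maxHeartbeats 1000000 in
lemma key_algebra (z z' a b p q s t : ℂ) (hz : z ≠ 0) (hz' : z' ≠ 0)
    (hs : s ≠ 0) (ht : t ≠ 0) (hu : 1 + s ≠ 0) (hv : 1 + t ≠ 0) (hst : t - s ≠ 0) :
    (z' * a / s * b * (1/z) * ((q*p - 1)/(t - s)) +
      a * b * (1/z) * ((q * (-z * p / (1+s)) * (t - s) - (q*p - 1) * (-1)) / (t - s)^2)) +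
    (a * (-z' * b / t) * (1/z) * ((q*p - 1)/(t - s)) +
      a * b * (1/z) * ((z * q / (1+t) * p * (t - s) - (q*p-1) * 1) / (t - s)^2)) =
    1/(z*z') * ((z' * a / s) * ((-z') * b / t)) -
    1/(z*z') * ((z' * a / s) * ((-z') * b / t) * p * q) -
    a * b * (p / (1+s)) * (q / (1+t)) := by
  have k1 : s * z * (t - s) * (z * ((1 + s) * (t - s) ^ 2)) ≠ 0 :=
    mul_ne_zero (mul_ne_zero (mul_ne_zero hs hz) hst)
      (mul_ne_zero hz (mul_ne_zero hu (pow_ne_zero 2 hst)))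
  have k2 : t * z * (t - s) * (z * ((1 + t) * (t - s) ^ 2)) ≠ 0 :=
    mul_ne_zero (mul_ne_zero (mul_ne_zero ht hz) hst)
      (mul_ne_zero hz (mul_ne_zero hv (pow_ne_zero 2 hst)))
  have k3 : z * z' * (s * t) * (z * z' * (s * t)) * ((1 + s) * (1 + t)) ≠ 0 :=
    mul_ne_zero (mul_ne_zero (mul_ne_zero (mul_ne_zero hz hz') (mul_ne_zero hs ht))
      (mul_ne_zero (mul_ne_zero hz hz') (mul_ne_zero hs ht))) (mul_ne_zero hu hv)
  field_simp
  ring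

set_option maxHeartbeats 1000000 in
/-- At every point `(τ₁,τ₂)` with `τ₁, τ₂ > 0`, `τ₁ ≠ τ₂`, the partial derivatives of
`G` exist and
`∂G/∂τ₁ + ∂G/∂τ₂ = (1/t) φ_{z′−1}(τ₁) φ_{−z′−1}(τ₂)
  − (1/t) φ_{z′−1}(τ₁) φ_{−z′−1}(τ₂) (1+τ₁)^{−z} (1+τ₂)^{z}
  − φ_{z′}(τ₁) φ_{−z′}(τ₂) (1+τ₁)^{−z−1} (1+τ₂)^{z−1}`, where `t = zz′`. -/
theorem partial_derivatives_of_G (z z' : ℂ) (hz : z ≠ 0) (hz' : ∀ m : ℤ, z' ≠ (m : ℂ))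
    (τ₁ τ₂ : ℝ) (h1 : 0 < τ₁) (h2 : 0 < τ₂) (hne : τ₁ ≠ τ₂) :
    ∃ d₁ d₂ : ℂ,
      HasDerivAt (fun t : ℝ => G z z' t τ₂) d₁ τ₁ ∧
      HasDerivAt (fun t : ℝ => G z z' τ₁ t) d₂ τ₂ ∧
      d₁ + d₂ =
        (1 / (z * z')) * (phiFun (z' - 1) τ₁ * phiFun (-z' - 1) τ₂) -
        (1 / (z * z')) * (phiFun (z' - 1) τ₁ * phiFun (-z' - 1) τ₂ *
          cpowR (1 + τ₁) (-z) * cpowR (1 + τ₂) z) -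
        phiFun z' τ₁ * phiFun (-z') τ₂ *
          cpowR (1 + τ₁) (-z - 1) * cpowR (1 + τ₂) (z - 1) := by
  have hτ1 : (0:ℝ) < 1 + τ₁ := by linarith
  have hτ2 : (0:ℝ) < 1 + τ₂ := by linarith
  have hz'0 : z' ≠ 0 := by simpa using hz' 0
  have hΓ1 : Complex.Gamma z' ≠ 0 :=
    Complex.Gamma_ne_zero (fun m => by simpa using hz' (-m))
  have hΓ2 : Complex.Gamma (-z') ≠ 0 := by
    refine Complex.Gamma_ne_zero (fun m => ?_)
    intro h
    exact hz' m (by rw [← neg_neg z', h]; push_cast; ring)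
  have hD : ((τ₂ : ℂ) - (τ₁ : ℂ)) ≠ 0 := by
    rw [sub_ne_zero]
    exact_mod_cast fun h => hne (by exact_mod_cast h.symm)
  -- derivative in the first variable
  have hN1 : HasDerivAt (fun t : ℝ => cpowR (1 + τ₂) z * cpowR (1 + t) (-z) - 1)
      (cpowR (1 + τ₂) z * (-z * cpowR (1 + τ₁) (-z) / ((1 + τ₁ : ℝ) : ℂ))) τ₁ :=
    ((hasDerivAt_cpowR_shift (-z) hτ1).const_mul _).sub_const 1
  have hD1 : HasDerivAt (fun t : ℝ => (τ₂ : ℂ) - (t : ℂ)) (-1) τ₁ := by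
    simpa using ((hasDerivAt_id τ₁).ofReal_comp).const_sub ((τ₂ : ℂ))
  have hQ1 := hN1.div hD1 hD
  have hF1 := (((hasDerivAt_phiFun z' h1).mul_const (phiFun (-z') τ₂)).mul_const (1/z)).mul hQ1
  -- derivative in the second variable
  have hN2 : HasDerivAt (fun t : ℝ => cpowR (1 + t) z * cpowR (1 + τ₁) (-z) - 1)
      ((z * cpowR (1 + τ₂) z / ((1 + τ₂ : ℝ) : ℂ)) * cpowR (1 + τ₁) (-z)) τ₂ :=
    ((hasDerivAt_cpowR_shift z hτ2).mul_const _).sub_const 1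
  have hD2 : HasDerivAt (fun t : ℝ => (t : ℂ) - (τ₁ : ℂ)) 1 τ₂ := by
    simpa using ((hasDerivAt_id τ₂).ofReal_comp).sub_const ((τ₁ : ℂ))
  have hQ2 := hN2.div hD2 hD
  have hF2 := (((hasDerivAt_phiFun (-z') h2).const_mul (phiFun z' τ₁)).mul_const (1/z)).mul hQ2
  refine ⟨_, _, hF1, hF2, ?_⟩
  rw [phiFun_sub_one z' hz'0 hΓ1 h1, phiFun_sub_one (-z') (neg_ne_zero.mpr hz'0) hΓ2 h2,
    cpowR_sub_one hτ1 (-z), cpowR_sub_one hτ2 z]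
  have e1 : ((τ₁ : ℂ)) ≠ 0 := by exact_mod_cast h1.ne'
  have e2 : ((τ₂ : ℂ)) ≠ 0 := by exact_mod_cast h2.ne'
  have e3 : (1 + (τ₁ : ℂ)) ≠ 0 := by
    have : ((1 + τ₁ : ℝ) : ℂ) ≠ 0 := by exact_mod_cast hτ1.ne'
    push_cast at this; exact this
  have e4 : (1 + (τ₂ : ℂ)) ≠ 0 := by
    have : ((1 + τ₂ : ℝ) : ℂ) ≠ 0 := by exact_mod_cast hτ2.ne'
    push_cast at this; exact this
  push_cast
  exact key_algebra z z' (phiFun z' τ₁) (phiFun (-z') τ₂) (cpowR (1 + τ₁) (-z))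
    (cpowR (1 + τ₂) z) (τ₁ : ℂ) (τ₂ : ℂ) hz hz'0 e1 e2 e3 e4 hD
end
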